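/- arXiv:1404.0455 — 10 statements merged into one kernel-verified Lean document; each statement's English description precedes it below -/
import Mathlib

section
/- Let ξ be irrational and let I ⊂ ℝ/ℤ be an interval whose length is congruent to kξ mod ℤ for some integer k. Then for every x ∈ ℝ/ℤ the local discrepancy D(N) = #{0 ≤ n ≤ N : x + nξ mod ℤ ∈ I} − N·length(I) is bounded uniformly in N. -/
open scoped Classical

/-- The local discrepancy of the orbit `x, x+ξ, ..., x+Nξ` (mod ℤ) with respect to
the interval `[a,b) ⊆ [0,1)` (viewed as an interval in ℝ/ℤ). -/
noncomputable def localDisc (ξ x a b : ℝ) (N : ℕ) : ℝ :=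
  (((Finset.range (N + 1)).filter
      (fun n => Int.fract (x + n * ξ) ∈ Set.Ico a b)).card : ℝ) - N * (b - a)


lemma floor_sub_aux (a t : ℝ) (ha : 0 ≤ a) (ha1 : a ≤ 1) :
    ⌊t - a⌋ = if a ≤ Int.fract t then ⌊t⌋ else ⌊t⌋ - 1 := by
  have hf : Int.fract t = t - ⌊t⌋ := rfl
  have hf0 := Int.fract_nonneg t
  have hf1 := Int.fract_lt_one t
  split_ifs with h
  · rw [Int.floor_eq_iff]
    constructor <;> push_cast <;> linarith
  · rw [Int.floor_eq_iff]
    constructor <;> push_cast <;> linarith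

lemma indicator_eq (a b t : ℝ) (ha : 0 ≤ a) (hab : a ≤ b) (hb : b ≤ 1) :
    (if Int.fract t ∈ Set.Ico a b then (1:ℝ) else 0)
      = (b - a) + Int.fract (t - b) - Int.fract (t - a) := by
  have h1 := floor_sub_aux a t ha (hab.trans hb)
  have h2 := floor_sub_aux b t (ha.trans hab) hb
  have e1 : Int.fract (t - a) = t - a - ⌊t - a⌋ := rfl
  have e2 : Int.fract (t - b) = t - b - ⌊t - b⌋ := rfl
  rw [e1, e2, h1, h2]
  by_cases hA : a ≤ Int.fract t
  · by_cases hB : b ≤ Int.fract t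
    · rw [if_neg (fun h => absurd (Set.mem_Ico.1 h).2 (not_lt.2 hB)), if_pos hA, if_pos hB]
      push_cast; ring
    · rw [if_pos (Set.mem_Ico.2 ⟨hA, lt_of_not_ge hB⟩), if_pos hA, if_neg hB]
      push_cast; ring
  · have hB : ¬ b ≤ Int.fract t := fun h => hA (hab.trans h)
    rw [if_neg (fun h => hA (Set.mem_Ico.1 h).1), if_neg hA, if_neg hB]
    push_cast; ring

lemma shift1 (h : ℤ → ℝ) (hb : ∀ j, 0 ≤ h j ∧ h j < 1) (M : ℕ) :
    |(∑ n ∈ Finset.range M, h ((n : ℤ) - 1)) - ∑ n ∈ Finset.range M, h (n : ℤ)| ≤ 1 := by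
  cases M with
  | zero => simp
  | succ m =>
    rw [Finset.sum_range_succ' (fun n => h ((n : ℤ) - 1)) m, Finset.sum_range_succ]
    have e : (∑ i ∈ Finset.range m, h (((i+1 : ℕ) : ℤ) - 1))
        = ∑ i ∈ Finset.range m, h (i : ℤ) := by
      refine Finset.sum_congr rfl fun i _ => ?_
      congr 1; push_cast; ring
    rw [e]
    have h1 := hb ((0:ℕ) - 1)
    have h2 := hb (m : ℤ)
    rw [abs_le]
    constructor <;> [skip; skip] <;> push_cast at h1 ⊢ <;> linarith [h1.1, h1.2, h2.1, h2.2]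

lemma keyNat (h : ℤ → ℝ) (hb : ∀ j, 0 ≤ h j ∧ h j < 1) (k M : ℕ) :
    |(∑ n ∈ Finset.range M, h ((n : ℤ) - k)) - ∑ n ∈ Finset.range M, h (n : ℤ)| ≤ k := by
  induction k with
  | zero => simp
  | succ k ih =>
    have h1 := shift1 (fun j => h (j - k)) (fun j => hb _) M
    have e : (∑ n ∈ Finset.range M, h ((n : ℤ) - 1 - k))
        = ∑ n ∈ Finset.range M, h ((n : ℤ) - (k+1 : ℕ)) := by
      refine Finset.sum_congr rfl fun i _ => ?_
      congr 1; push_cast; ring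
    rw [e] at h1
    calc |(∑ n ∈ Finset.range M, h ((n : ℤ) - (k+1 : ℕ))) - ∑ n ∈ Finset.range M, h (n : ℤ)|
        ≤ |(∑ n ∈ Finset.range M, h ((n : ℤ) - (k+1 : ℕ))) - ∑ n ∈ Finset.range M, h ((n : ℤ) - k)|
          + |(∑ n ∈ Finset.range M, h ((n : ℤ) - k)) - ∑ n ∈ Finset.range M, h (n : ℤ)| :=
          abs_sub_le _ _ _
      _ ≤ 1 + k := by exact add_le_add h1 ih
      _ = ((k+1 : ℕ) : ℝ) := by push_cast; ring

lemma keyInt (h : ℤ → ℝ) (hb : ∀ j, 0 ≤ h j ∧ h j < 1) (k : ℤ) (M : ℕ) :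
    |(∑ n ∈ Finset.range M, h ((n : ℤ) - k)) - ∑ n ∈ Finset.range M, h (n : ℤ)| ≤ |k| := by
  obtain ⟨k', (rfl | rfl)⟩ := Int.eq_nat_or_neg k
  · simpa using keyNat h hb k' M
  · have := keyNat (fun j => h (j + k')) (fun j => hb _) k' M
    have e1 : (∑ n ∈ Finset.range M, h ((n : ℤ) - k' + k'))
        = ∑ n ∈ Finset.range M, h (n : ℤ) := by
      refine Finset.sum_congr rfl fun i _ => ?_; congr 1; ring
    have e2 : (∑ n ∈ Finset.range M, h ((n : ℤ) + k'))
        = ∑ n ∈ Finset.range M, h ((n : ℤ) - (-(k' : ℤ))) := by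
      refine Finset.sum_congr rfl fun i _ => ?_; congr 1; ring
    rw [e1, e2] at this
    rw [abs_sub_comm] at this
    simpa using this

/-- Hecke–Ostrowski: if the length of the interval is congruent to `kξ` mod ℤ,
then the local discrepancy is bounded, for every starting point `x`. -/
theorem hecke_ostrowski (ξ a b : ℝ) (hξ : Irrational ξ)
    (ha : 0 ≤ a) (hab : a ≤ b) (hb : b ≤ 1)
    (hlen : ∃ k m : ℤ, b - a = k * ξ + m) :
    ∀ x : ℝ, ∃ C : ℝ, 0 < C ∧ ∀ N : ℕ, |localDisc ξ x a b N| < C := by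
  intro x
  obtain ⟨k, m, hkm⟩ := hlen
  refine ⟨|(k:ℝ)| + 2, by positivity, fun N => ?_⟩
  set g : ℤ → ℝ := fun j => Int.fract (x + j * ξ - a) with hg
  have hgb : ∀ j, 0 ≤ g j ∧ g j < 1 := fun j => ⟨Int.fract_nonneg _, Int.fract_lt_one _⟩
  -- rewrite localDisc
  have hcard : (((Finset.range (N + 1)).filter
      (fun n => Int.fract (x + n * ξ) ∈ Set.Ico a b)).card : ℝ)
      = ∑ n ∈ Finset.range (N + 1),
          ((b - a) + Int.fract (x + n * ξ - b) - Int.fract (x + n * ξ - a)) := by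
    have step : (((Finset.range (N + 1)).filter
        (fun n => Int.fract (x + n * ξ) ∈ Set.Ico a b)).card : ℝ)
        = ∑ n ∈ Finset.range (N + 1),
            (if Int.fract (x + n * ξ) ∈ Set.Ico a b then (1:ℝ) else 0) := by
      rw [Finset.sum_boole]
      congr 1
      have hinj : Function.Injective (fun p : ℕ => (p:ℝ)) := fun p q h => Nat.cast_inj.1 h
      have himg : (do let p ← Finset.range (N+1); pure ((p:ℝ)))
          = Finset.image (fun p : ℕ => (p:ℝ)) (Finset.range (N+1)) := by
        simp [Finset.image]
      rw [himg, Finset.filter_image, Finset.card_image_of_injective _ hinj]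
    rw [step]
    exact Finset.sum_congr rfl fun n _ => indicator_eq a b (x + n * ξ) ha hab hb
  have hSb : (∑ n ∈ Finset.range (N + 1), Int.fract (x + n * ξ - b))
      = ∑ n ∈ Finset.range (N + 1), g ((n : ℤ) - k) := by
    refine Finset.sum_congr rfl fun n _ => ?_
    have : x + n * ξ - b = (x + ((n : ℤ) - k) * ξ - a) - m := by
      push_cast; linarith [hkm]
    rw [this, hg]
    show Int.fract ((x + ((n : ℝ) - (k : ℝ)) * ξ - a) - (m : ℝ)) = Int.fract (x + (((n : ℤ) - k : ℤ) : ℝ) * ξ - a)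
    rw [Int.fract_sub_intCast]
    congr 2
    push_cast
    ring
  have hSa : (∑ n ∈ Finset.range (N + 1), Int.fract (x + n * ξ - a))
      = ∑ n ∈ Finset.range (N + 1), g (n : ℤ) := by
    refine Finset.sum_congr rfl fun n _ => ?_
    simp [hg]
  have hdisc : localDisc ξ x a b N = (b - a) +
      ((∑ n ∈ Finset.range (N + 1), g ((n : ℤ) - k))
        - ∑ n ∈ Finset.range (N + 1), g (n : ℤ)) := by
    unfold localDisc
    rw [hcard]
    rw [Finset.sum_sub_distrib, Finset.sum_add_distrib, Finset.sum_const, hSb, hSa]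
    simp only [Finset.card_range, nsmul_eq_mul]
    push_cast; ring
  have hkey := keyInt g hgb k (N + 1)
  have habs : |b - a| ≤ 1 := by rw [abs_of_nonneg (by linarith)]; linarith
  rw [hdisc]
  calc |(b - a) + _| ≤ |b - a| + |_| := abs_add_le _ _
    _ ≤ 1 + |(k:ℝ)| := by
        refine add_le_add habs ?_
        have : |((k:ℤ):ℝ)| = ((|k| : ℤ) : ℝ) := by push_cast; ring
        calc _ ≤ ((|k| : ℤ) : ℝ) := hkey
          _ = |(k:ℝ)| := by push_cast; ring
    _ < |(k:ℝ)| + 2 := by linarith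
end

section
/- Let ξ be irrational and I ⊂ ℝ/ℤ an interval. If there exists a constant C > 0 and a point x ∈ ℝ/ℤ such that |#{0 ≤ n ≤ N : x + nξ mod ℤ ∈ I} − N·length(I)| < C for all N, then length(I) ≡ kξ mod ℤ for some integer k. -/
open scoped Classical

namespace KestenAux

open Set MeasureTheory Complex intervalIntegral AddCircle Real


open Set

noncomputable def kI (a b y : ℝ) : ℝ := if Int.fract y ∈ Set.Ico a b then 1 else 0

noncomputable def kS (ξ a b : ℝ) (N : ℕ) (y : ℝ) : ℝ :=
  ∑ n ∈ Finset.range N, (kI a b (y + n * ξ) - (b - a))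

variable {ξ a b : ℝ}

lemma kS_add (j N : ℕ) (y : ℝ) :
    kS ξ a b (j + N) y = kS ξ a b j y + kS ξ a b N (y + j * ξ) := by
  unfold kS
  rw [Finset.sum_range_add]
  congr 1
  refine Finset.sum_congr rfl fun n _ => ?_
  have : y + (↑(j + n) : ℝ) * ξ = y + ↑j * ξ + ↑n * ξ := by push_cast; ring
  rw [this]

lemma kI_int (m : ℤ) (t : ℝ) : kI a b (t + m) = kI a b t := by
  unfold kI; rw [Int.fract_add_intCast]

lemma kS_int (N : ℕ) (m : ℤ) (y : ℝ) : kS ξ a b N (y + m) = kS ξ a b N y := by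
  unfold kS
  refine Finset.sum_congr rfl fun n _ => ?_
  have : y + ↑m + ↑n * ξ = (y + ↑n * ξ) + ↑m := by ring
  rw [this, kI_int]

lemma kS_meas (N : ℕ) : Measurable (kS ξ a b N) := by
  apply Finset.measurable_sum
  intro n _
  apply Measurable.sub _ measurable_const
  apply Measurable.ite _ measurable_const measurable_const
  exact (measurable_fract.comp (measurable_add_const _)) measurableSet_Ico

lemma kI_right_stable (ha : 0 ≤ a) (hab : a ≤ b) (hb : b ≤ 1) (t : ℝ) :
    ∃ δ > 0, ∀ h : ℝ, 0 < h → h < δ → kI a b (t + h) = kI a b t := by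
  set u := Int.fract t with hu
  have hu0 : 0 ≤ u := Int.fract_nonneg t
  have hu1 : u < 1 := Int.fract_lt_one t
  have key : ∀ h : ℝ, 0 ≤ h → u + h < 1 → Int.fract (t + h) = u + h := by
    intro h h0 h1
    have ht : t + h = (u + h) + (⌊t⌋ : ℤ) := by
      have : u = t - ⌊t⌋ := rfl
      rw [this]; ring
    rw [ht, Int.fract_add_intCast, Int.fract_eq_self.2 ⟨by linarith, h1⟩]
  by_cases hc1 : u ∈ Set.Ico a b
  · refine ⟨min (b - u) (1 - u), by simp [hc1.2, hu1, sub_pos], fun h h0 hδ => ?_⟩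
    obtain ⟨hδ1, hδ2⟩ := lt_min_iff.mp hδ
    unfold kI
    rw [key h h0.le (by linarith)]
    rw [if_pos hc1, if_pos ⟨le_trans hc1.1 (by linarith), by linarith⟩]
  · by_cases hc2 : u < a
    · refine ⟨a - u, by linarith, fun h h0 hδ => ?_⟩
      unfold kI
      rw [key h h0.le (by linarith)]
      rw [if_neg hc1, if_neg (by rintro ⟨h1, -⟩; linarith)]
    · have hub : b ≤ u := by
        rcases lt_or_ge u b with h | h
        · exact absurd ⟨not_lt.1 hc2, h⟩ hc1
        · exact h
      refine ⟨1 - u, by linarith, fun h h0 hδ => ?_⟩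
      unfold kI
      rw [key h h0.le (by linarith)]
      rw [if_neg hc1, if_neg (by rintro ⟨-, h2⟩; linarith)]

lemma kS_right_stable (ha : 0 ≤ a) (hab : a ≤ b) (hb : b ≤ 1) (N : ℕ) (y : ℝ) :
    ∃ δ > 0, ∀ h : ℝ, 0 < h → h < δ → kS ξ a b N (y + h) = kS ξ a b N y := by
  induction N with
  | zero => exact ⟨1, one_pos, fun h _ _ => by simp [kS]⟩
  | succ N ih =>
    obtain ⟨δ₁, hδ₁, H₁⟩ := ih
    obtain ⟨δ₂, hδ₂, H₂⟩ := kI_right_stable (a := a) (b := b) ha hab hb (y + N * ξ)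
    refine ⟨min δ₁ δ₂, lt_min hδ₁ hδ₂, fun h h0 hδ => ?_⟩
    obtain ⟨hm1, hm2⟩ := lt_min_iff.mp hδ
    unfold kS
    rw [Finset.sum_range_succ, Finset.sum_range_succ]
    have e1 : (∑ n ∈ Finset.range N, (kI a b (y + h + ↑n * ξ) - (b - a)))
        = ∑ n ∈ Finset.range N, (kI a b (y + ↑n * ξ) - (b - a)) := H₁ h h0 hm1
    have e2 : kI a b (y + h + ↑N * ξ) = kI a b (y + ↑N * ξ) := by
      have : y + h + ↑N * ξ = (y + ↑N * ξ) + h := by ring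
      rw [this, H₂ h h0 hm2]
    rw [e1, e2]




lemma prog (θ δ x y : ℝ) (h0 : 0 < θ) (hδ : θ < δ) :
    ∃ (k : ℕ) (m : ℤ), y < x + k * θ + m ∧ x + k * θ + m < y + δ := by
  set M : ℤ := ⌈x - y⌉ with hM
  have hMx : x - y ≤ M := Int.le_ceil _
  set r : ℝ := (y + M - x) / θ with hr
  have hr0 : 0 ≤ r := div_nonneg (by linarith) h0.le
  set k : ℕ := (⌊r⌋ + 1).toNat with hk
  have h1' : (0:ℤ) ≤ ⌊r⌋ + 1 := by
    have := Int.floor_nonneg.2 hr0; omega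
  have hkr : (k : ℝ) = (⌊r⌋ : ℝ) + 1 := by
    exact_mod_cast congrArg (fun z : ℤ => (z : ℝ)) (Int.toNat_of_nonneg h1')
  have h1 : r < (k : ℝ) := by rw [hkr]; exact Int.lt_floor_add_one r
  have h2 : (k : ℝ) ≤ r + 1 := by rw [hkr]; linarith [Int.floor_le r]
  have hrθ : r * θ = y + M - x := by rw [hr, div_mul_cancel₀ _ h0.ne']
  refine ⟨k, -M, ?_, ?_⟩
  · push_cast
    have := mul_lt_mul_of_pos_right h1 h0
    linarith [this]
  · push_cast
    have := mul_le_mul_of_nonneg_right h2 h0.le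
    nlinarith

lemma hit {ξ : ℝ} (hξ : Irrational ξ) (x y δ : ℝ) (hδ : 0 < δ) :
    ∃ (j : ℕ) (m : ℤ), y < x + j * ξ + m ∧ x + j * ξ + m < y + δ := by
  obtain ⟨n, hn⟩ := exists_nat_one_div_lt hδ
  obtain ⟨p, q, hq0, hqn, hle⟩ := Real.exists_int_int_abs_mul_sub_le ξ (n := n + 1) (Nat.succ_pos n)
  set θ : ℝ := q * ξ - p with hθ
  have hθ0 : θ ≠ 0 := by
    intro h
    have : (q : ℝ) * ξ = p := by linarith [h]
    exact (hξ.intCast_mul (by exact_mod_cast hq0.ne')).ne_int p this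
  have hθδ : |θ| < δ := by
    calc |θ| ≤ 1 / (↑(n + 1) + 1) := hle
    _ ≤ 1 / (n + 1 : ℝ) := by
        apply div_le_div_of_nonneg_left one_pos.le (by positivity)
        push_cast; linarith
    _ < δ := hn
  have hq'' : ((q.toNat : ℕ) : ℝ) = (q : ℝ) := by
    exact_mod_cast congrArg (fun z : ℤ => (z : ℝ)) (Int.toNat_of_nonneg hq0.le)
  have hco : ∀ k : ℕ, ((k * q.toNat : ℕ) : ℝ) * ξ = (k : ℝ) * θ + (k : ℝ) * p := by
    intro k
    push_cast [hq'']
    rw [hθ]; ring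
  rcases hθ0.lt_or_gt with hneg | hpos
  · have habs : -θ < δ := by rw [abs_of_neg hneg] at hθδ; exact hθδ
    obtain ⟨k, m, hm1, hm2⟩ := prog (-θ) δ (-x) (-(y + δ)) (by linarith) habs
    refine ⟨k * q.toNat, -m - k * p, ?_, ?_⟩ <;>
      · rw [hco k]; push_cast; linarith
  · have habs : θ < δ := by rwa [abs_of_pos hpos] at hθδ
    obtain ⟨k, m, hm1, hm2⟩ := prog θ δ x y hpos habs
    refine ⟨k * q.toNat, m - k * p, ?_, ?_⟩ <;>
      · rw [hco k]; push_cast; linarith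


lemma global_bound (hξ : Irrational ξ) (ha : 0 ≤ a) (hab : a ≤ b) (hb : b ≤ 1)
    {x C : ℝ} (hSx : ∀ N : ℕ, |kS ξ a b N x| ≤ C) :
    ∀ (y : ℝ) (N : ℕ), |kS ξ a b N y| ≤ 2 * C := by
  intro y N
  obtain ⟨δ, hδ0, hst⟩ := kS_right_stable (ξ := ξ) ha hab hb N y
  obtain ⟨j, m, h1, h2⟩ := hit hξ x y δ hδ0
  set h : ℝ := (x + j * ξ + m) - y with hh
  have h0 : 0 < h := by rw [hh]; linarith
  have hlt : h < δ := by rw [hh]; linarith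
  have e1 : kS ξ a b N y = kS ξ a b N (x + j * ξ + m) := by
    rw [← hst h h0 hlt]
    congr 1
    rw [hh]; ring
  have e2 : kS ξ a b N (x + j * ξ + m) = kS ξ a b N (x + j * ξ) := kS_int N m _
  have e3 : kS ξ a b N (x + j * ξ) = kS ξ a b (j + N) x - kS ξ a b j x := by
    rw [kS_add j N x]; ring
  rw [e1, e2, e3]
  calc |kS ξ a b (j + N) x - kS ξ a b j x| ≤ |kS ξ a b (j + N) x| + |kS ξ a b j x| :=
        abs_sub _ _
  _ ≤ 2 * C := by linarith [hSx (j + N), hSx j]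

lemma psi_exists {B : ℝ} (hall : ∀ (y : ℝ) (N : ℕ), |kS ξ a b N y| ≤ B) :
    ∃ ψ : ℝ → ℝ, Measurable ψ ∧ (∀ y, ψ (y + 1) = ψ y) ∧
      ∀ y, ψ y = (kI a b y - (b - a)) + ψ (y + ξ) := by
  set A : ℕ → ℝ → ℝ := fun n y => ⨆ k : ℕ, kS ξ a b (n + k) y with hA
  have hbdd : ∀ (n : ℕ) (y : ℝ), BddAbove (Set.range fun k => kS ξ a b (n + k) y) := by
    intro n y
    exact ⟨B, by rintro - ⟨k, rfl⟩; exact (abs_le.1 (hall y (n + k))).2⟩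
  have hAle : ∀ n y, A n y ≤ B := fun n y =>
    ciSup_le fun k => (abs_le.1 (hall y (n + k))).2
  have hleA : ∀ n y, -B ≤ A n y := fun n y =>
    le_trans (abs_le.1 (hall y (n + 0))).1 (le_ciSup (hbdd n y) 0)
  have hbddB : ∀ y, BddBelow (Set.range fun n => A n y) := fun y =>
    ⟨-B, by rintro - ⟨n, rfl⟩; exact hleA n y⟩
  set ψ : ℝ → ℝ := fun y => ⨅ n, A n y with hψ
  have hψmeas : Measurable ψ := by
    apply Measurable.iInf
    intro n
    exact Measurable.iSup fun k => kS_meas _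
  have hstep : ∀ (n : ℕ) (y : ℝ), A (n + 1) y = (kI a b y - (b - a)) + A n (y + ξ) := by
    intro n y
    have h1 : ∀ k : ℕ, kS ξ a b (n + 1 + k) y
        = (kI a b y - (b - a)) + kS ξ a b (n + k) (y + ξ) := by
      intro k
      have e : n + 1 + k = 1 + (n + k) := by ring
      rw [e, kS_add 1 (n + k) y]
      have e2 : kS ξ a b 1 y = kI a b y - (b - a) := by
        simp [kS, Finset.sum_range_one]
      have e3 : y + (1 : ℕ) * ξ = y + ξ := by push_cast; ring
      rw [e2, e3]
    calc A (n + 1) y = ⨆ k, ((kI a b y - (b - a)) + kS ξ a b (n + k) (y + ξ)) := by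
          rw [hA]; exact iSup_congr h1
      _ = (kI a b y - (b - a)) + A n (y + ξ) := by
          rw [hA]
          exact (Monotone.map_ciSup_of_continuousAt
            (f := fun z : ℝ => (kI a b y - (b - a)) + z)
            (by fun_prop)
            (fun _ _ huv => by dsimp only; linarith)
            (hbdd n (y + ξ))).symm
  have hanti : ∀ n y, A (n + 1) y ≤ A n y := by
    intro n y
    refine ciSup_le fun k => ?_
    have e : n + 1 + k = n + (k + 1) := by ring
    rw [e]
    exact le_ciSup (hbdd n y) (k + 1)
  have hshift : ∀ y, ψ y = ⨅ n, A (n + 1) y := by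
    intro y
    have hbB' : BddBelow (Set.range fun n => A (n + 1) y) :=
      ⟨-B, by rintro - ⟨n, rfl⟩; exact hleA _ y⟩
    exact le_antisymm (le_ciInf fun n => ciInf_le (hbddB y) (n + 1))
      (le_ciInf fun n => le_trans (ciInf_le hbB' n) (hanti n y))
  have hco : ∀ y, ψ y = (kI a b y - (b - a)) + ψ (y + ξ) := by
    intro y
    rw [hshift y]
    calc ⨅ n, A (n + 1) y = ⨅ n, ((kI a b y - (b - a)) + A n (y + ξ)) :=
          iInf_congr fun n => hstep n y
      _ = (kI a b y - (b - a)) + ⨅ n, A n (y + ξ) :=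
          (Monotone.map_ciInf_of_continuousAt
            (f := fun z : ℝ => (kI a b y - (b - a)) + z)
            (by fun_prop)
            (fun _ _ huv => by dsimp only; linarith)
            (hbddB (y + ξ))).symm
  have hper : ∀ y, ψ (y + 1) = ψ y := by
    intro y
    have hAper : ∀ n, A n (y + 1) = A n y := by
      intro n
      rw [hA]
      refine iSup_congr fun k => ?_
      have := kS_int (ξ := ξ) (a := a) (b := b) (n + k) 1 y
      simpa using this
    simp only [hψ]
    exact iInf_congr hAper
  exact ⟨ψ, hψmeas, hper, hco⟩




lemma eigen_conclusion (ξ β : ℝ) (ψ : ℝ → ℝ) (hm : Measurable ψ)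
    (hper : ∀ y, ψ (y + 1) = ψ y)
    (hco : ∀ y : ℝ, ∃ K : ℤ, ψ y = ψ (y + ξ) + K - β) :
    ∃ k m : ℤ, β = k * ξ + m := by
  classical
  set h : ℝ → ℂ := fun y => Complex.exp ((2 * Real.pi * ψ y : ℝ) * Complex.I) with hh
  have hnorm : ∀ y, ‖h y‖ = 1 := fun y => Complex.norm_exp_ofReal_mul_I _
  set lam : ℂ := Complex.exp ((2 * Real.pi * β : ℝ) * Complex.I) with hlam
  have heigen : ∀ y, h (y + ξ) = lam * h y := by
    intro y
    obtain ⟨K, hK⟩ := hco y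
    have hψξ : ψ (y + ξ) = ψ y - K + β := by linarith
    simp only [hh]
    rw [hψξ]
    have e : ((2 * Real.pi * (ψ y - ↑K + β) : ℝ) : ℂ) * Complex.I
        = (((2 * Real.pi * β : ℝ) : ℂ) * Complex.I + ((2 * Real.pi * ψ y : ℝ) : ℂ) * Complex.I)
          - (K : ℂ) * (2 * (Real.pi : ℂ) * Complex.I) := by
      push_cast; ring
    rw [e, Complex.exp_sub, Complex.exp_add, Complex.exp_int_mul_two_pi_mul_I]
    rw [hlam]; field_simp
  have hmeas_h : Measurable h := by
    apply Complex.continuous_exp.measurable.comp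
    exact (Complex.measurable_ofReal.comp (measurable_const.mul hm)).mul measurable_const
  have hper_h : ∀ y, h (y + 1) = h y := by
    intro y; simp only [hh, hper]
  haveI : Fact ((0 : ℝ) < 1) := ⟨zero_lt_one⟩
  set Bf : AddCircle (1 : ℝ) → ℂ := AddCircle.liftIoc 1 0 h with hBf
  have hBapp : ∀ z, Bf z = h ((AddCircle.equivIoc 1 0 z : ℝ)) := fun z => rfl
  have hBmeas : Measurable Bf := by
    have : Measurable fun z : AddCircle (1 : ℝ) => h ((AddCircle.equivIoc 1 0 z : ℝ)) :=
      hmeas_h.comp (measurable_subtype_coe.comp (AddCircle.measurableEquivIoc 1 0).measurable)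
    exact this
  have hBnorm : ∀ z, ‖Bf z‖ = 1 := fun z => by rw [hBapp]; exact hnorm _
  have hB2 : MemLp Bf 2 haarAddCircle := by
    refine (memLp_top_of_bound hBmeas.aestronglyMeasurable 1
      (Filter.Eventually.of_forall fun z => ?_)).mono_exponent le_top
    rw [hBnorm z]
  set c : ℤ → ℂ := fun n => fourierCoeff Bf n with hc
  set En : ℤ → ℝ → ℂ := fun n x => Complex.exp (2 * Real.pi * Complex.I * n * x) with hEn
  have hcint : ∀ n : ℤ, c n = ∫ x in (0:ℝ)..1, En (-n) x * h x := by
    intro n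
    simp only [hc, hBf]
    rw [fourierCoeff_liftIoc_eq, fourierCoeffOn_eq_integral]
    norm_num [fourier_coe_apply, hEn]
    refine intervalIntegral.integral_congr fun x _ => ?_
    congr 1
    rw [← Complex.exp_conj]
    congr 1
    simp only [map_mul, Complex.conj_I, Complex.conj_ofReal, map_intCast, map_ofNat]
    ring
  have key : ∀ n : ℤ, lam * c n = Complex.exp (2 * Real.pi * Complex.I * n * ξ) * c n := by
    intro n
    have hEadd : ∀ u v : ℝ, En (-n) (u + v) = En (-n) u * En (-n) v := by
      intro u v
      simp only [hEn, ← Complex.exp_add]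
      congr 1
      push_cast
      ring
    have hE1 : En (-n) 1 = 1 := by
      simp only [hEn]
      rw [show (2 * (Real.pi:ℂ) * Complex.I * ((-n : ℤ):ℂ) * ((1:ℝ):ℂ))
          = ((-n : ℤ) : ℂ) * (2 * (Real.pi:ℂ) * Complex.I) by push_cast; ring]
      exact Complex.exp_int_mul_two_pi_mul_I (-n)
    have s1 : lam * c n = ∫ x in (0:ℝ)..1, En (-n) x * (lam * h x) := by
      rw [hcint n, ← intervalIntegral.integral_const_mul lam (fun x => En (-n) x * h x)]
      exact intervalIntegral.integral_congr fun x _ => by ring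
    have s3 : lam * c n = ∫ u in (0:ℝ)+ξ..1+ξ, En (-n) (u - ξ) * h u := by
      rw [s1,
        intervalIntegral.integral_congr (g := fun x => (fun u => En (-n) (u - ξ) * h u) (x + ξ))
          (fun x _ => by simp only [add_sub_cancel_right]; rw [← heigen x])]
      exact intervalIntegral.integral_comp_add_right (fun u => En (-n) (u - ξ) * h u) ξ
    have s4 : lam * c n = En (-n) (-ξ) * ∫ u in ξ..ξ+1, En (-n) u * h u := by
      rw [s3, show (0:ℝ)+ξ = ξ by ring, show (1:ℝ)+ξ = ξ+1 by ring,
        ← intervalIntegral.integral_const_mul (En (-n) (-ξ)) (fun u => En (-n) u * h u)]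
      refine intervalIntegral.integral_congr fun u _ => ?_
      rw [show u - ξ = u + (-ξ) by ring, hEadd u (-ξ)]
      ring
    have hperE : Function.Periodic (fun u => En (-n) u * h u) 1 := by
      intro u
      simp only
      rw [hEadd u 1, hE1, hper_h u]
      ring
    have s5 : ∫ u in ξ..ξ+1, En (-n) u * h u = ∫ u in (0:ℝ)..1, En (-n) u * h u := by
      have := hperE.intervalIntegral_add_eq ξ 0
      simpa using this
    rw [s4, s5, ← hcint n]
    congr 1
    simp only [hEn, ← Complex.exp_add]
    congr 1
    push_cast
    ring
  have hnz : ∃ n, c n ≠ 0 := by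
    by_contra hzero
    push_neg at hzero
    set F := hB2.toLp Bf with hF
    have hrepr : ∀ i, fourierBasis.repr F i = 0 := by
      intro i
      rw [fourierBasis_repr]
      have : fourierCoeff (⇑F) i = c i := by
        apply MeasureTheory.integral_congr_ae
        filter_upwards [hB2.coeFn_toLp] with z hz
        rw [hz]
      rw [this]
      exact hzero i
    have hF0 : F = 0 := by
      have h0 : fourierBasis.repr F = 0 := by
        ext i
        simpa using hrepr i
      calc F = fourierBasis.repr.symm (fourierBasis.repr F) :=
            (fourierBasis.repr.symm_apply_apply F).symm
        _ = fourierBasis.repr.symm 0 := by rw [h0]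
        _ = 0 := map_zero _
    have hae : ∀ᵐ z ∂(haarAddCircle : Measure (AddCircle (1:ℝ))), Bf z = 0 := by
      have h2 : (⇑F : AddCircle (1:ℝ) → ℂ) =ᵐ[(haarAddCircle : Measure (AddCircle (1:ℝ)))] 0 := by
        rw [hF0]
        exact Lp.coeFn_zero _ _ _
      filter_upwards [hB2.coeFn_toLp, h2] with z e1 e2
      exact (e1.symm.trans e2).trans rfl
    obtain ⟨z, hz⟩ := hae.exists
    have := hBnorm z
    rw [hz] at this
    simp at this
  obtain ⟨n, hn⟩ := hnz
  have hlameq : lam = Complex.exp (2 * Real.pi * Complex.I * n * ξ) :=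
    mul_right_cancel₀ hn (key n)
  rw [hlam] at hlameq
  obtain ⟨m, hmeq⟩ := Complex.exp_eq_exp_iff_exists_int.mp hlameq
  refine ⟨n, m, ?_⟩
  have hne : (2 * (Real.pi : ℂ) * Complex.I) ≠ 0 := by
    simp [Real.pi_ne_zero, Complex.I_ne_zero]
  have hC : (β : ℂ) = n * ξ + m := by
    apply mul_left_cancel₀ hne
    push_cast at hmeq ⊢
    linear_combination hmeq
  exact_mod_cast hC


end KestenAux

/-- Kesten's theorem (converse direction, Erdős–Szüsz conjecture): if for some
starting point `x` the local discrepancy is uniformly bounded, then the length of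
the interval is congruent to `kξ` mod ℤ for some integer `k`. -/
theorem kesten (ξ a b : ℝ) (hξ : Irrational ξ)
    (ha : 0 ≤ a) (hab : a ≤ b) (hb : b ≤ 1)
    (hbd : ∃ C : ℝ, 0 < C ∧ ∃ x : ℝ, ∀ N : ℕ, |localDisc ξ x a b N| < C) :
    ∃ k m : ℤ, b - a = k * ξ + m := by
  obtain ⟨C, hC, x, hx⟩ := hbd
  have hβ1 : b - a ≤ 1 := by linarith
  have hcard : ∀ N : ℕ, KestenAux.kS ξ a b (N + 1) x = localDisc ξ x a b N - (b - a) := by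
    intro N
    have hLD : localDisc ξ x a b N
        = ∑ n ∈ Finset.range (N + 1), KestenAux.kI a b (x + n * ξ)
          - (N + 1) * (b - a) + (b - a) := by
      unfold localDisc
      have h1 : (do let n ← Finset.range (N+1); pure ((n:ℕ):ℝ) : Finset ℝ)
          = (Finset.range (N+1)).image (fun n : ℕ => (n:ℝ)) := by
        show (Finset.range (N+1) >>= fun n => pure ((n:ℕ):ℝ)) = _
        rw [show (Finset.range (N+1) >>= fun n => pure ((n:ℕ):ℝ))
            = (Finset.range (N+1)).sup (fun n => {((n:ℕ):ℝ)}) from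
            congrFun (congrFun Finset.bind_def _) _]
        exact Finset.sup_singleton_apply _ _
      rw [h1, Finset.filter_image,
        Finset.card_image_of_injective _ (fun u v huv => by exact_mod_cast huv),
        Finset.card_filter]
      push_cast
      have h2 : ∀ n ∈ Finset.range (N+1),
          (if Int.fract (x + (n:ℝ) * ξ) ∈ Set.Ico a b then (1:ℝ) else 0)
            = KestenAux.kI a b (x + n * ξ) := by
        intro n _
        by_cases hP : Int.fract (x + (n:ℝ) * ξ) ∈ Set.Ico a b <;> simp [KestenAux.kI, hP]
      rw [Finset.sum_congr rfl h2]
      ring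
    unfold KestenAux.kS
    rw [Finset.sum_sub_distrib, Finset.sum_const, Finset.card_range, nsmul_eq_mul, hLD,
      Nat.cast_add, Nat.cast_one]
    ring
  have hSx : ∀ N : ℕ, |KestenAux.kS ξ a b N x| ≤ C + 1 := by
    intro N
    cases N with
    | zero => simp [KestenAux.kS]; linarith
    | succ N =>
      rw [hcard N]
      have h2 : |localDisc ξ x a b N - (b - a)| ≤ |localDisc ξ x a b N| + |b - a| :=
        abs_sub _ _
      have h3 : |b - a| ≤ 1 := abs_le.2 ⟨by linarith, hβ1⟩
      linarith [hx N]
  have hall := KestenAux.global_bound hξ ha hab hb hSx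
  obtain ⟨ψ, hm, hper, hco⟩ := KestenAux.psi_exists hall
  apply KestenAux.eigen_conclusion ξ (b - a) ψ hm hper
  intro y
  refine ⟨if Int.fract y ∈ Set.Ico a b then (1 : ℤ) else 0, ?_⟩
  have hK : ((if Int.fract y ∈ Set.Ico a b then (1 : ℤ) else 0 : ℤ) : ℝ)
      = KestenAux.kI a b y := by
    by_cases hP : Int.fract y ∈ Set.Ico a b <;> simp [KestenAux.kI, hP]
  rw [hK]
  linarith [hco y]
end

section
/- Let ξ be irrational, and let I₁,…,I_L ⊂ ℝ/ℤ be disjoint intervals with I_ℓ = [a_ℓ, b_ℓ]. If there exists a permutation σ of {1,…,L} and integers k_ℓ such that b_{σ(ℓ)} − a_ℓ ≡ k_ℓ ξ mod ℤ for all ℓ, then the sum D(N; I₁) + ⋯ + D(N; I_L) of local discrepancies is bounded uniformly in N. -/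
open scoped Classical

lemma fract_sub_eq (y c : ℝ) (hc0 : 0 ≤ c) (hc1 : c ≤ 1) :
    Int.fract (y - c) = Int.fract y - c + (if Int.fract y < c then 1 else 0) := by
  have h1 : y - c = (⌊y⌋ : ℝ) + (Int.fract y - c) := by rw [Int.fract]; ring
  have h0 := Int.fract_nonneg y
  have hlt := Int.fract_lt_one y
  rw [h1, Int.fract_intCast_add]
  split_ifs with h
  · rw [show Int.fract y - c = (Int.fract y - c + 1) - ((1 : ℤ) : ℝ) by push_cast; ring,
      Int.fract_sub_intCast, Int.fract_eq_self.mpr ⟨by linarith, by linarith⟩]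
    push_cast
    ring
  · push_neg at h
    rw [Int.fract_eq_self.mpr ⟨by linarith, by linarith⟩]
    ring

lemma indicator_fract (y a b : ℝ) (ha : 0 ≤ a) (hab : a ≤ b) (hb : b ≤ 1) :
    (if Int.fract y ∈ Set.Ico a b then (1 : ℝ) else 0)
      = Int.fract (y - b) - Int.fract (y - a) + (b - a) := by
  rw [fract_sub_eq y a ha (hab.trans hb), fract_sub_eq y b (ha.trans hab) hb]
  by_cases h1 : Int.fract y < a
  · have hm : Int.fract y ∉ Set.Ico a b := fun hc => absurd hc.1 (not_le.mpr h1)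
    have h2 : Int.fract y < b := lt_of_lt_of_le h1 hab
    rw [if_neg hm, if_pos h1, if_pos h2]; ring
  by_cases h2 : Int.fract y < b
  · have hm : Int.fract y ∈ Set.Ico a b := ⟨not_lt.mp h1, h2⟩
    rw [if_pos hm, if_neg h1, if_pos h2]; ring
  · have hm : Int.fract y ∉ Set.Ico a b := fun hc => absurd hc.2 h2
    rw [if_neg hm, if_neg h1, if_neg h2]; ring

lemma localDisc_eq (ξ x a b : ℝ) (ha : 0 ≤ a) (hab : a ≤ b) (hb : b ≤ 1) (N : ℕ) :
    localDisc ξ x a b N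
      = ((∑ n ∈ Finset.range (N + 1), Int.fract (x + n * ξ - b))
          - ∑ n ∈ Finset.range (N + 1), Int.fract (x + n * ξ - a)) + (b - a) := by
  unfold localDisc
  have hcard : (((Finset.range (N + 1)).filter
        (fun n => Int.fract (x + n * ξ) ∈ Set.Ico a b)).card : ℝ)
      = ∑ n ∈ Finset.range (N + 1),
          (Int.fract (x + (n : ℝ) * ξ - b) - Int.fract (x + (n : ℝ) * ξ - a) + (b - a)) := by
    have h1 : (((Finset.range (N + 1)).filter
          (fun n => Int.fract (x + n * ξ) ∈ Set.Ico a b)).card : ℝ)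
        = ∑ n ∈ Finset.range (N + 1),
            (if Int.fract (x + (n : ℝ) * ξ) ∈ Set.Ico a b then (1 : ℝ) else 0) := by
      simp only [Finset.bind_def, Finset.pure_def, Finset.biUnion_singleton,
        Finset.sup_singleton_apply]
      rw [← Finset.sum_boole]
      rw [Finset.sum_image (by intros a _ b _ h; exact_mod_cast h)]
    rw [h1]
    exact Finset.sum_congr rfl fun n _ =>
      indicator_fract (x + (n : ℝ) * ξ) a b ha hab hb
  rw [hcard,
    Finset.sum_add_distrib, Finset.sum_sub_distrib, Finset.sum_const, Finset.card_range]
  push_cast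
  ring

lemma shift_eq (F : ℤ → ℝ) (N : ℕ) (k : ℤ) :
    ∑ n ∈ Finset.range (N + 1), F (n - (k + 1))
      = (∑ n ∈ Finset.range (N + 1), F (n - k)) + F (-1 - k) - F (N - k) := by
  rw [Finset.sum_range_succ' (fun n => F ((n : ℤ) - (k + 1))) N,
      Finset.sum_range_succ (fun n => F ((n : ℤ) - k)) N]
  have h1 : ∀ i : ℕ, F ((↑(i + 1) : ℤ) - (k + 1)) = F ((i : ℤ) - k) := by
    intro i; congr 1; push_cast; ring
  rw [Finset.sum_congr rfl fun i _ => h1 i]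
  have h2 : ((0 : ℕ) : ℤ) - (k + 1) = -1 - k := by push_cast; ring
  rw [h2]
  ring

lemma shift_bound (F : ℤ → ℝ) (hF0 : ∀ j, 0 ≤ F j) (hF1 : ∀ j, F j < 1) (N : ℕ) (k : ℤ) :
    |(∑ n ∈ Finset.range (N + 1), F (n - k)) - ∑ n ∈ Finset.range (N + 1), F (n : ℤ)|
      ≤ |(k : ℝ)| := by
  induction k using Int.induction_on with
  | zero => simp
  | succ i ih =>
      have he := shift_eq F N i
      have heq : (∑ n ∈ Finset.range (N + 1), F (n - ((i : ℤ) + 1)))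
            - ∑ n ∈ Finset.range (N + 1), F (n : ℤ)
          = (F (-1 - i) - F (N - i))
            + ((∑ n ∈ Finset.range (N + 1), F (n - (i : ℤ)))
              - ∑ n ∈ Finset.range (N + 1), F (n : ℤ)) := by
        rw [he]; ring
      rw [heq]
      refine le_trans (abs_add_le _ _) ?_
      have h1 : |F (-1 - i) - F (N - i)| ≤ 1 := by
        rw [abs_le]
        constructor <;>
          [linarith [hF0 (-1 - (i : ℤ)), hF1 ((N : ℤ) - i)];
           linarith [hF1 (-1 - (i : ℤ)), hF0 ((N : ℤ) - i)]]
      have h2 : |((i : ℤ) : ℝ)| = (i : ℝ) := by simp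
      have h3 : |(((i : ℤ) + 1 : ℤ) : ℝ)| = (i : ℝ) + 1 := by
        push_cast; rw [abs_of_nonneg (by positivity)]
      rw [h2] at ih
      push_cast
      push_cast at h3 ih ⊢
      rw [show |((i : ℝ) + 1)| = (i : ℝ) + 1 from abs_of_nonneg (by positivity)]
      linarith
  | pred i ih =>
      have he := shift_eq F N (-(i : ℤ) - 1)
      have hsimp : (-(i : ℤ) - 1) + 1 = -(i : ℤ) := by ring
      rw [hsimp] at he
      have heq : (∑ n ∈ Finset.range (N + 1), F (n - (-(i : ℤ) - 1)))
            - ∑ n ∈ Finset.range (N + 1), F (n : ℤ)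
          = ((∑ n ∈ Finset.range (N + 1), F (n - (-(i : ℤ))))
              - ∑ n ∈ Finset.range (N + 1), F (n : ℤ))
            - (F (-1 - (-(i : ℤ) - 1)) - F (N - (-(i : ℤ) - 1))) := by
        rw [he]; ring
      rw [heq]
      refine le_trans (abs_sub _ _) ?_
      have h1 : |F (-1 - (-(i : ℤ) - 1)) - F (N - (-(i : ℤ) - 1))| ≤ 1 := by
        rw [abs_le]
        constructor <;>
          [linarith [hF0 (-1 - (-(i : ℤ) - 1)), hF1 ((N : ℤ) - (-(i : ℤ) - 1))];
           linarith [hF1 (-1 - (-(i : ℤ) - 1)), hF0 ((N : ℤ) - (-(i : ℤ) - 1))]]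
      have h2 : |((-(i : ℤ) : ℤ) : ℝ)| = (i : ℝ) := by push_cast; simp
      have h3 : |((-(i : ℤ) - 1 : ℤ) : ℝ)| = (i : ℝ) + 1 := by
        push_cast
        rw [show (-(i : ℝ) - 1) = -((i : ℝ) + 1) by ring, abs_neg,
          abs_of_nonneg (by positivity)]
      rw [h2] at ih
      rw [h3]
      linarith

/-- Oren's theorem, sufficiency direction: if there is a permutation `σ` and
integers `k ℓ` with `b (σ ℓ) - a ℓ ≡ (k ℓ) ξ (mod ℤ)` for all `ℓ`, then the sum
of the local discrepancies of the disjoint intervals `[a ℓ, b ℓ)` is bounded. -/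
theorem oren_sufficiency (ξ x : ℝ) (hξ : Irrational ξ) (L : ℕ) (a b : Fin L → ℝ)
    (ha : ∀ ℓ, 0 ≤ a ℓ) (hab : ∀ ℓ, a ℓ ≤ b ℓ) (hb : ∀ ℓ, b ℓ ≤ 1)
    (hdisj : Pairwise (fun ℓ ℓ' => Disjoint (Set.Ico (a ℓ) (b ℓ)) (Set.Ico (a ℓ') (b ℓ'))))
    (hσ : ∃ σ : Equiv.Perm (Fin L), ∀ ℓ, ∃ k m : ℤ, b (σ ℓ) - a ℓ = k * ξ + m) :
    ∃ C : ℝ, 0 < C ∧ ∀ N : ℕ, |∑ ℓ, localDisc ξ x (a ℓ) (b ℓ) N| < C := by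
  obtain ⟨σ, hσ⟩ := hσ
  choose k m hk using hσ
  set F : Fin L → ℤ → ℝ := fun ℓ j => Int.fract (x + (j : ℝ) * ξ - a ℓ) with hF
  have hD : 0 ≤ ∑ ℓ, (b ℓ - a ℓ) := Finset.sum_nonneg fun ℓ _ => by linarith [hab ℓ]
  have hK : 0 ≤ ∑ ℓ, |((k ℓ : ℤ) : ℝ)| := Finset.sum_nonneg fun ℓ _ => abs_nonneg _
  refine ⟨(∑ ℓ, |((k ℓ : ℤ) : ℝ)|) + (∑ ℓ, (b ℓ - a ℓ)) + 1, by linarith, fun N => ?_⟩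
  have hbσ : ∀ (ℓ : Fin L) (n : ℕ),
      Int.fract (x + n * ξ - b (σ ℓ)) = F ℓ ((n : ℤ) - k ℓ) := by
    intro ℓ n
    have h := hk ℓ
    have harg : x + n * ξ - b (σ ℓ)
        = (x + ((((n : ℤ) - k ℓ) : ℤ) : ℝ) * ξ - a ℓ) - ((m ℓ : ℤ) : ℝ) := by
      push_cast
      linear_combination -h
    rw [harg, hF]
    simp only
    rw [Int.fract_sub_intCast]
  have hFa : ∀ (ℓ : Fin L) (n : ℕ),
      Int.fract (x + n * ξ - a ℓ) = F ℓ (n : ℤ) := by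
    intro ℓ n; rw [hF]; push_cast; ring_nf
  have hmain : ∑ ℓ, localDisc ξ x (a ℓ) (b ℓ) N
      = (∑ ℓ, ((∑ n ∈ Finset.range (N + 1), F ℓ ((n : ℤ) - k ℓ))
          - ∑ n ∈ Finset.range (N + 1), F ℓ (n : ℤ)))
        + ∑ ℓ, (b ℓ - a ℓ) := by
    rw [Finset.sum_congr rfl
      (fun ℓ _ => localDisc_eq ξ x (a ℓ) (b ℓ) (ha ℓ) (hab ℓ) (hb ℓ) N)]
    rw [Finset.sum_add_distrib]
    congr 1
    calc ∑ ℓ, ((∑ n ∈ Finset.range (N + 1), Int.fract (x + n * ξ - b ℓ))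
            - ∑ n ∈ Finset.range (N + 1), Int.fract (x + n * ξ - a ℓ))
        = (∑ ℓ, ∑ n ∈ Finset.range (N + 1), Int.fract (x + n * ξ - b ℓ))
            - ∑ ℓ, ∑ n ∈ Finset.range (N + 1), Int.fract (x + n * ξ - a ℓ) :=
          Finset.sum_sub_distrib _ _
      _ = (∑ ℓ, ∑ n ∈ Finset.range (N + 1), Int.fract (x + n * ξ - b (σ ℓ)))
            - ∑ ℓ, ∑ n ∈ Finset.range (N + 1), Int.fract (x + n * ξ - a ℓ) := by
          rw [Equiv.sum_comp σ (fun ℓ => ∑ n ∈ Finset.range (N + 1),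
            Int.fract (x + n * ξ - b ℓ))]
      _ = (∑ ℓ, ∑ n ∈ Finset.range (N + 1), F ℓ ((n : ℤ) - k ℓ))
            - ∑ ℓ, ∑ n ∈ Finset.range (N + 1), F ℓ (n : ℤ) := by
          rw [Finset.sum_congr rfl fun ℓ _ =>
              Finset.sum_congr rfl fun n _ => hbσ ℓ n,
            Finset.sum_congr rfl (fun ℓ _ =>
              Finset.sum_congr rfl fun n _ => hFa ℓ n)]
      _ = ∑ ℓ, ((∑ n ∈ Finset.range (N + 1), F ℓ ((n : ℤ) - k ℓ))
            - ∑ n ∈ Finset.range (N + 1), F ℓ (n : ℤ)) :=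
          (Finset.sum_sub_distrib _ _).symm
  rw [hmain]
  have hbnd : |∑ ℓ, ((∑ n ∈ Finset.range (N + 1), F ℓ ((n : ℤ) - k ℓ))
      - ∑ n ∈ Finset.range (N + 1), F ℓ (n : ℤ))| ≤ ∑ ℓ, |((k ℓ : ℤ) : ℝ)| := by
    refine le_trans (Finset.abs_sum_le_sum_abs _ _) ?_
    refine Finset.sum_le_sum fun ℓ _ => ?_
    exact shift_bound (F ℓ) (fun j => Int.fract_nonneg _) (fun j => Int.fract_lt_one _) N (k ℓ)
  calc |(∑ ℓ, ((∑ n ∈ Finset.range (N + 1), F ℓ ((n : ℤ) - k ℓ))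
          - ∑ n ∈ Finset.range (N + 1), F ℓ (n : ℤ))) + ∑ ℓ, (b ℓ - a ℓ)|
      ≤ |∑ ℓ, ((∑ n ∈ Finset.range (N + 1), F ℓ ((n : ℤ) - k ℓ))
          - ∑ n ∈ Finset.range (N + 1), F ℓ (n : ℤ))| + |∑ ℓ, (b ℓ - a ℓ)| := abs_add_le _ _
    _ ≤ (∑ ℓ, |((k ℓ : ℤ) : ℝ)|) + ∑ ℓ, (b ℓ - a ℓ) := by
        rw [abs_of_nonneg hD]; linarith
    _ < (∑ ℓ, |((k ℓ : ℤ) : ℝ)|) + (∑ ℓ, (b ℓ - a ℓ)) + 1 := by linarith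
end

section
/- Let ξ be irrational, and let I₁,…,I_L ⊂ ℝ/ℤ be disjoint intervals with I_ℓ = [a_ℓ, b_ℓ]. If there is a constant C > 0 with |D(N; I₁) + ⋯ + D(N; I_L)| < C for all N, then there exists a permutation σ of {1,…,L} and integers k_ℓ such that b_{σ(ℓ)} − a_ℓ ≡ k_ℓ ξ mod ℤ for all ℓ. -/
open scoped Classical
open Filter Topology

namespace OrenAux

/-- an irrational number times a nonzero integer is not an integer -/
theorem irr_int_mul_ne_int {ξ : ℝ} (hξ : Irrational ξ) {k : ℤ} (hk : k ≠ 0) (m : ℤ) :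
    (k : ℝ) * ξ ≠ (m : ℝ) := (hξ.intCast_mul hk).ne_int m

theorem fract_ne_zero_of_irr {ξ : ℝ} (hξ : Irrational ξ) {k : ℤ} (hk : k ≠ 0) (c : ℝ)
    (hc : Int.fract c = 0) : Int.fract (c + k * ξ) ≠ 0 := by
  intro h
  rw [Int.fract_eq_iff] at h hc
  obtain ⟨-, -, m, hm⟩ := h
  obtain ⟨-, -, m', hm'⟩ := hc
  simp only [sub_zero] at hm hm'
  have : (k : ℝ) * ξ = ((m - m' : ℤ) : ℝ) := by push_cast; linarith
  exact irr_int_mul_ne_int hξ hk _ this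

/-- key uniqueness: at most one integer `k` with `e + k ξ - c ∈ ℤ`. -/
theorem unique_hit {ξ : ℝ} (hξ : Irrational ξ) (e c : ℝ) {k k' : ℤ}
    (h : Int.fract (e + k * ξ - c) = 0) (h' : Int.fract (e + k' * ξ - c) = 0) : k = k' := by
  by_contra hne
  have hkk : (k - k' : ℤ) ≠ 0 := sub_ne_zero.2 hne
  apply fract_ne_zero_of_irr hξ hkk (e + k' * ξ - c) h'
  have : e + k' * ξ - c + (k - k' : ℤ) * ξ = e + k * ξ - c := by push_cast; ring
  rw [this, h]

/-- pigeonhole: arbitrarily small positive steps (mod 1) in one of the two directions -/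
theorem exists_small_step {ξ : ℝ} (hξ : Irrational ξ) {δ : ℝ} (hδ : 0 < δ) :
    ∃ p : ℕ, 1 ≤ p ∧ (Int.fract (p * ξ) ∈ Set.Ioo 0 δ ∨ Int.fract (p * ξ) ∈ Set.Ioo (1 - δ) 1) := by
  obtain ⟨K, hK⟩ := exists_nat_gt (1 / δ)
  have hK0 : 0 < (K : ℝ) := lt_trans (by positivity) hK
  have hK1 : (1 : ℝ) ≤ (K : ℝ) := by exact_mod_cast Nat.one_le_iff_ne_zero.2 (by
    intro h; rw [h] at hK0; simp at hK0)
  have hKδ : 1 / (K : ℝ) < δ := by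
    rw [div_lt_iff₀ hK0]
    rw [div_lt_iff₀ hδ] at hK
    linarith
  have maps : ∀ n ∈ Finset.range (K + 1), ⌊Int.fract (n * ξ) * K⌋ ∈ Finset.Ico (0 : ℤ) K := by
    intro n _
    rw [Finset.mem_Ico]
    refine ⟨Int.floor_nonneg.2 (mul_nonneg (Int.fract_nonneg _) hK0.le), ?_⟩
    have : Int.fract (n * ξ) * K < K := by
      nlinarith [Int.fract_lt_one ((n : ℝ) * ξ), Int.fract_nonneg ((n : ℝ) * ξ)]
    exact Int.floor_lt.2 (by exact_mod_cast this)
  have hcard : (Finset.Ico (0 : ℤ) K).card < (Finset.range (K + 1)).card := by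
    simp [Int.card_Ico]
  obtain ⟨i, hi, j, hj, hij, heq⟩ :=
    Finset.exists_ne_map_eq_of_card_lt_of_maps_to hcard maps
  wlog hlt : i < j generalizing i j
  · exact this j hj i hi hij.symm heq.symm (by omega)
  refine ⟨j - i, by omega, ?_⟩
  have h1 : (⌊Int.fract (i * ξ) * K⌋ : ℝ) ≤ Int.fract (i * ξ) * K := Int.floor_le _
  have h2 : Int.fract (i * ξ) * K < ⌊Int.fract (i * ξ) * K⌋ + 1 := Int.lt_floor_add_one _
  have h3 : (⌊Int.fract (i * ξ) * K⌋ : ℝ) ≤ Int.fract (j * ξ) * K := by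
    rw [heq]; exact Int.floor_le _
  have h4 : Int.fract (j * ξ) * K < ⌊Int.fract (i * ξ) * K⌋ + 1 := by
    rw [heq]; exact Int.lt_floor_add_one _
  set d := Int.fract (j * ξ) - Int.fract (i * ξ) with hdd
  have habs : |d| < 1 / K := by
    rw [abs_lt]
    constructor
    · rw [neg_lt, hdd, neg_sub, lt_div_iff₀ hK0]
      nlinarith
    · rw [hdd, lt_div_iff₀ hK0]
      nlinarith
  have hcast : ((j - i : ℕ) : ℝ) * ξ = (j : ℝ) * ξ - (i : ℝ) * ξ := by
    push_cast [Nat.cast_sub hlt.le]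
    ring
  have hfr : Int.fract ((j - i : ℕ) * ξ) = Int.fract d := by
    rw [hcast]
    have : (j : ℝ) * ξ - (i : ℝ) * ξ = d + ((⌊(j : ℝ) * ξ⌋ - ⌊(i : ℝ) * ξ⌋ : ℤ) : ℝ) := by
      push_cast
      simp only [hdd, Int.fract]
      ring
    rw [this, Int.fract_add_intCast]
  have hdne : d ≠ 0 := by
    intro h0
    have hz : Int.fract ((j - i : ℕ) * ξ) = 0 := by rw [hfr, h0, Int.fract_zero]
    rw [Int.fract_eq_iff] at hz
    obtain ⟨-, -, m, hm⟩ := hz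
    simp only [sub_zero] at hm
    have hji : ((j - i : ℕ) : ℤ) ≠ 0 := by omega
    have : ((j - i : ℕ) : ℝ) = (((j - i : ℕ) : ℤ) : ℝ) := by push_cast; ring
    exact irr_int_mul_ne_int hξ hji m (by rw [← this]; exact_mod_cast hm)
  have hd1K : (1 : ℝ) / K ≤ 1 := by rw [div_le_one hK0]; exact hK1
  rcases lt_or_gt_of_ne hdne with hneg | hpos
  · right
    have habs' := abs_lt.1 habs
    have hd1 : -1 < d := by linarith
    have : Int.fract d = d + 1 := by
      rw [Int.fract_eq_iff]
      exact ⟨by linarith, by linarith, ⟨-1, by push_cast; ring⟩⟩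
    rw [hfr, this]
    exact ⟨by linarith, by linarith⟩
  · left
    have habs' := abs_lt.1 habs
    have : Int.fract d = d := Int.fract_eq_self.2 ⟨hpos.le, by linarith⟩
    rw [hfr, this]
    exact ⟨hpos, by linarith⟩


/-- Density of the forward orbit: it enters every arc `(w, w+δ)` at arbitrarily late times. -/
theorem dense_forward {ξ : ℝ} (hξ : Irrational ξ) (z w : ℝ) {δ : ℝ} (hδ : 0 < δ) (N₀ : ℕ) :
    ∃ n : ℕ, N₀ ≤ n ∧ Int.fract (z + n * ξ - w) ∈ Set.Ioo (0:ℝ) δ := by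
  set δ' := min δ (1/2) with hδ'def
  have hδ'0 : 0 < δ' := lt_min hδ (by norm_num)
  have hδ'δ : δ' ≤ δ := min_le_left _ _
  have hδ'h : δ' ≤ 1/2 := min_le_right _ _
  obtain ⟨p, hp1, hcase⟩ := exists_small_step hξ hδ'0
  set A := z + N₀ * ξ - w with hA
  set β := Int.fract A with hβdef
  have hβ0 : 0 ≤ β := Int.fract_nonneg A
  have hβ1 : β < 1 := Int.fract_lt_one A
  have key : ∀ k : ℕ, Int.fract (z + ((N₀ + k * p : ℕ) : ℝ) * ξ - w)
      = Int.fract (β + k * Int.fract (p * ξ)) := by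
    intro k
    have harith : z + ((N₀ + k * p : ℕ) : ℝ) * ξ - w = A + ((k * p : ℕ) : ℝ) * ξ := by
      rw [hA]; push_cast; ring
    rw [harith]
    have h1 : A + ((k * p : ℕ) : ℝ) * ξ =
        (β + k * Int.fract (p * ξ)) + ((⌊A⌋ + k * ⌊(p : ℝ) * ξ⌋ : ℤ) : ℝ) := by
      have e1 : A = (⌊A⌋ : ℝ) + β := by rw [hβdef]; linarith [Int.floor_add_fract A]
      have e2 : (p : ℝ) * ξ = (⌊(p:ℝ) * ξ⌋ : ℝ) + Int.fract ((p:ℝ) * ξ) := by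
        linarith [Int.floor_add_fract ((p:ℝ) * ξ)]
      push_cast
      nlinarith [e1, e2]
    rw [h1, Int.fract_add_intCast]
  rcases hcase with hup | hdown
  · -- upward steps
    set s := Int.fract (p * ξ) with hsdef
    obtain ⟨hs0, hsδ⟩ := hup
    have hquot : (0:ℝ) ≤ (1 - β)/s := div_nonneg (by linarith) hs0.le
    set k : ℤ := ⌊(1 - β)/s⌋ + 1 with hkdef
    have hk1 : 1 ≤ k := by
      have : 0 ≤ ⌊(1 - β)/s⌋ := Int.floor_nonneg.2 hquot
      omega
    have hklo : 1 - β < (k : ℝ) * s := by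
      have := Int.lt_floor_add_one ((1 - β)/s)
      rw [div_lt_iff₀ hs0] at this
      calc 1 - β < ((⌊(1 - β)/s⌋ : ℝ) + 1) * s := this
        _ = (k : ℝ) * s := by rw [hkdef]; push_cast; ring
    have hkhi : (k : ℝ) * s ≤ 1 - β + s := by
      have := Int.floor_le ((1 - β)/s)
      rw [le_div_iff₀ hs0] at this
      have : (k : ℝ) * s = (⌊(1 - β)/s⌋ : ℝ) * s + s := by rw [hkdef]; push_cast; ring
      nlinarith [Int.floor_le ((1 - β)/s), (le_div_iff₀ hs0).1 (le_refl ((1-β)/s))]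
    refine ⟨N₀ + k.toNat * p, le_add_right (le_refl N₀), ?_⟩
    have hcast : ((k.toNat : ℕ) : ℝ) = (k : ℝ) := by
      exact_mod_cast Int.toNat_of_nonneg (by omega)
    rw [key k.toNat, hcast]
    have hv0 : 0 < β + (k:ℝ) * s - 1 := by linarith
    have hv1 : β + (k:ℝ) * s - 1 ≤ s := by linarith
    have hfr : Int.fract (β + (k:ℝ) * s) = β + (k:ℝ) * s - 1 := by
      rw [Int.fract_eq_iff]
      refine ⟨hv0.le, by linarith, ⟨1, by push_cast; ring⟩⟩
    rw [hfr]
    exact ⟨hv0, by linarith⟩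
  · -- downward steps
    set s := Int.fract (p * ξ) with hsdef
    obtain ⟨hs0, hs1⟩ := hdown
    set ε := 1 - s with hεdef
    have hε0 : 0 < ε := by simp only [hεdef]; linarith
    have hεδ : ε < δ' := by simp only [hεdef]; linarith
    have hquot : (0:ℝ) ≤ (β + 1 - δ')/ε := div_nonneg (by linarith) hε0.le
    set k : ℤ := ⌊(β + 1 - δ')/ε⌋ + 1 with hkdef
    have hk1 : 1 ≤ k := by
      have : 0 ≤ ⌊(β + 1 - δ')/ε⌋ := Int.floor_nonneg.2 hquot
      omega
    have hklo : β + 1 - δ' < (k : ℝ) * ε := by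
      have := Int.lt_floor_add_one ((β + 1 - δ')/ε)
      rw [div_lt_iff₀ hε0] at this
      calc β + 1 - δ' < ((⌊(β + 1 - δ')/ε⌋ : ℝ) + 1) * ε := this
        _ = (k : ℝ) * ε := by rw [hkdef]; push_cast; ring
    have hkhi : (k : ℝ) * ε ≤ β + 1 - δ' + ε := by
      have h2 : (⌊(β + 1 - δ')/ε⌋ : ℝ) * ε ≤ β + 1 - δ' := by
        rw [← le_div_iff₀ hε0]; exact Int.floor_le _
      have he : (k : ℝ) = (⌊(β + 1 - δ')/ε⌋ : ℝ) + 1 := by rw [hkdef]; push_cast; ring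
      rw [he]; nlinarith
    refine ⟨N₀ + k.toNat * p, le_add_right (le_refl N₀), ?_⟩
    have hcast : ((k.toNat : ℕ) : ℝ) = (k : ℝ) := by
      exact_mod_cast Int.toNat_of_nonneg (by omega)
    rw [key k.toNat, hcast]
    set v := β - (k:ℝ) * ε + 1 with hvdef
    have hv0 : 0 < v := by simp only [hvdef]; linarith
    have hvδ : v < δ' := by simp only [hvdef]; linarith
    have hfr : Int.fract (β + (k:ℝ) * s) = v := by
      rw [Int.fract_eq_iff]
      refine ⟨hv0.le, by linarith, ⟨k - 1, ?_⟩⟩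
      simp only [hvdef, hεdef]
      push_cast
      ring
    rw [hfr]
    exact ⟨hv0, by linarith⟩

/-- Density of the backward orbit. -/
theorem dense_backward {ξ : ℝ} (hξ : Irrational ξ) (z w : ℝ) {δ : ℝ} (hδ : 0 < δ) (N₀ : ℕ) :
    ∃ n : ℕ, N₀ ≤ n ∧ Int.fract (z - n * ξ - w) ∈ Set.Ioo (0:ℝ) δ := by
  obtain ⟨n, hn, hmem⟩ := dense_forward hξ.neg z w hδ N₀
  refine ⟨n, hn, ?_⟩
  have : z + (n : ℝ) * (-ξ) - w = z - n * ξ - w := by ring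
  rwa [this] at hmem


/-! ### Symbolic coding -/

/-- one-sided shift -/
def shiftSeq (y : ℕ → ℝ) : ℕ → ℝ := fun n => y (n + 1)

/-- skew product over the shift with the 0-th coordinate as cocycle -/
def skew (q : (ℕ → ℝ) × ℝ) : (ℕ → ℝ) × ℝ := (shiftSeq q.1, q.2 + q.1 0)

/-- coding of a point of the circle through a (one-sidedly regular) observable -/
def code (G : ℝ → ℝ) (ξ u : ℝ) : ℕ → ℝ := fun n => G (u + n * ξ)

theorem continuous_shiftSeq : Continuous shiftSeq :=
  continuous_pi fun n => continuous_apply (n + 1)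

theorem continuous_skew : Continuous skew :=
  Continuous.prodMk (continuous_shiftSeq.comp continuous_fst)
    (continuous_snd.add ((continuous_apply 0).comp continuous_fst))

theorem shiftSeq_code (G : ℝ → ℝ) (ξ u : ℝ) :
    shiftSeq (code G ξ u) = code G ξ (u + ξ) := by
  funext n
  simp only [shiftSeq, code]
  congr 1
  push_cast
  ring

theorem shiftSeq_iter_code (G : ℝ → ℝ) (ξ u : ℝ) (n : ℕ) :
    shiftSeq^[n] (code G ξ u) = code G ξ (u + n * ξ) := by
  induction n with
  | zero => simp [code]
  | succ m ih =>
    rw [Function.iterate_succ_apply', ih, shiftSeq_code]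
    have : u + (m:ℝ) * ξ + ξ = u + ((m+1 : ℕ) : ℝ) * ξ := by push_cast; ring
    rw [this]

theorem code_per {G : ℝ → ℝ} (hper : ∀ (t : ℝ) (k : ℤ), G (t + k) = G t) (ξ u : ℝ) :
    code G ξ u = code G ξ (Int.fract u) := by
  funext n
  simp only [code]
  have : u + n * ξ = (Int.fract u + n * ξ) + (⌊u⌋ : ℤ) := by
    rw [Int.fract]; push_cast; ring
  rw [this, hper]

/-- the coding orbit closure -/
def Yset (F : ℝ → ℝ) (ξ x : ℝ) : Set (ℕ → ℝ) :=
  closure (Set.range fun m : ℕ => code F ξ (x + m * ξ))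

section GHsec

variable {ξ x : ℝ} {F FL : ℝ → ℝ}

theorem code_tendsto_right
    (hright : ∀ w : ℝ, ∃ δ > 0, ∀ t, Int.fract (t - w) ∈ Set.Ioo 0 δ → F t = F w ∧ FL t = F w)
    (w : ℝ) (v δv : ℕ → ℝ)
    (hv : ∀ i, Int.fract (v i - w) ∈ Set.Ioo 0 (δv i)) (hδ : Filter.Tendsto δv Filter.atTop (nhds 0)) :
    Filter.Tendsto (fun i => code F ξ (v i)) Filter.atTop (nhds (code F ξ w)) ∧
    Filter.Tendsto (fun i => code FL ξ (v i)) Filter.atTop (nhds (code F ξ w)) := by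
  have main : ∀ n : ℕ, ∀ᶠ i in Filter.atTop,
      F (v i + n * ξ) = F (w + n * ξ) ∧ FL (v i + n * ξ) = F (w + n * ξ) := by
    intro n
    obtain ⟨δn, hδn, hw⟩ := hright (w + n * ξ)
    have hev : ∀ᶠ i in Filter.atTop, δv i < δn := hδ.eventually_lt_const hδn
    filter_upwards [hev] with i hi
    have harg : v i + n * ξ - (w + n * ξ) = v i - w := by ring
    apply hw
    rw [harg]
    obtain ⟨h1, h2⟩ := hv i
    exact ⟨h1, lt_trans h2 hi⟩
  constructor
  · rw [tendsto_pi_nhds]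
    intro n
    apply Filter.Tendsto.congr' (f₁ := fun _ => F (w + n * ξ))
    · filter_upwards [main n] with i hi
      simpa only [code] using hi.1.symm
    · exact tendsto_const_nhds
  · rw [tendsto_pi_nhds]
    intro n
    apply Filter.Tendsto.congr' (f₁ := fun _ => F (w + n * ξ))
    · filter_upwards [main n] with i hi
      simpa only [code] using hi.2.symm
    · exact tendsto_const_nhds

theorem code_tendsto_left
    (hleft : ∀ w : ℝ, ∃ δ > 0, ∀ t, Int.fract (t - w) ∈ Set.Ioo (1 - δ) 1 → F t = FL w ∧ FL t = FL w)
    (w : ℝ) (v δv : ℕ → ℝ)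
    (hv : ∀ i, Int.fract (v i - w) ∈ Set.Ioo (1 - δv i) 1) (hδ : Filter.Tendsto δv Filter.atTop (nhds 0)) :
    Filter.Tendsto (fun i => code F ξ (v i)) Filter.atTop (nhds (code FL ξ w)) ∧
    Filter.Tendsto (fun i => code FL ξ (v i)) Filter.atTop (nhds (code FL ξ w)) := by
  have main : ∀ n : ℕ, ∀ᶠ i in Filter.atTop,
      F (v i + n * ξ) = FL (w + n * ξ) ∧ FL (v i + n * ξ) = FL (w + n * ξ) := by
    intro n
    obtain ⟨δn, hδn, hw⟩ := hleft (w + n * ξ)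
    have hev : ∀ᶠ i in Filter.atTop, δv i < δn := hδ.eventually_lt_const hδn
    filter_upwards [hev] with i hi
    have harg : v i + n * ξ - (w + n * ξ) = v i - w := by ring
    apply hw
    rw [harg]
    obtain ⟨h1, h2⟩ := hv i
    exact ⟨by linarith, h2⟩
  constructor
  · rw [tendsto_pi_nhds]
    intro n
    apply Filter.Tendsto.congr' (f₁ := fun _ => FL (w + n * ξ))
    · filter_upwards [main n] with i hi
      simpa only [code] using hi.1.symm
    · exact tendsto_const_nhds
  · rw [tendsto_pi_nhds]
    intro n
    apply Filter.Tendsto.congr' (f₁ := fun _ => FL (w + n * ξ))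
    · filter_upwards [main n] with i hi
      simpa only [code] using hi.2.symm
    · exact tendsto_const_nhds

/-- every right-coding belongs to the orbit closure -/
theorem codeF_mem_Y (hξ : Irrational ξ)
    (hright : ∀ w : ℝ, ∃ δ > 0, ∀ t, Int.fract (t - w) ∈ Set.Ioo 0 δ → F t = F w ∧ FL t = F w)
    (u : ℝ) : code F ξ u ∈ Yset F ξ x := by
  have h : ∀ i : ℕ, ∃ n : ℕ, Int.fract (x + n * ξ - u) ∈ Set.Ioo (0:ℝ) (1/(i+1)) := by
    intro i
    obtain ⟨n, -, hn⟩ := dense_forward hξ x u (by positivity : (0:ℝ) < 1/(i+1)) 0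
    exact ⟨n, hn⟩
  choose nn hnn using h
  have hδ : Filter.Tendsto (fun i : ℕ => (1:ℝ)/(i+1)) Filter.atTop (nhds 0) :=
    tendsto_one_div_add_atTop_nhds_zero_nat
  have hconv := (code_tendsto_right (ξ := ξ) hright u (fun i => x + nn i * ξ) _ hnn hδ).1
  exact mem_closure_of_tendsto hconv (Filter.Eventually.of_forall fun i => Set.mem_range_self (nn i))

/-- every left-coding belongs to the orbit closure -/
theorem codeL_mem_Y (hξ : Irrational ξ)
    (hleft : ∀ w : ℝ, ∃ δ > 0, ∀ t, Int.fract (t - w) ∈ Set.Ioo (1 - δ) 1 → F t = FL w ∧ FL t = FL w)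
    (u : ℝ) : code FL ξ u ∈ Yset F ξ x := by
  have h : ∀ i : ℕ, ∃ n : ℕ, Int.fract (x + n * ξ - u) ∈ Set.Ioo (1 - 1/(i+1) : ℝ) 1 := by
    intro i
    obtain ⟨n, -, hn⟩ := dense_backward hξ (u - x) 0 (by positivity : (0:ℝ) < 1/(i+1)) 0
    refine ⟨n, ?_⟩
    have harg : u - x - n * ξ - 0 = -(x + n * ξ - u) := by ring
    rw [harg] at hn
    obtain ⟨h1, h2⟩ := hn
    have hne : Int.fract (x + n * ξ - u) ≠ 0 := by
      intro h0
      rw [show -(x + n * ξ - u) = -(x + n * ξ - u) from rfl] at h1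
      have : Int.fract (-(x + n * ξ - u)) = 0 := by
        rw [Int.fract_neg_eq_zero]
        exact h0
      exact absurd this (ne_of_gt h1)
    have hfr : Int.fract (-(x + n * ξ - u)) = 1 - Int.fract (x + n * ξ - u) :=
      Int.fract_neg hne
    rw [hfr] at h1 h2
    constructor <;> [linarith; linarith]
  choose nn hnn using h
  have hδ : Filter.Tendsto (fun i : ℕ => (1:ℝ)/(i+1)) Filter.atTop (nhds 0) :=
    tendsto_one_div_add_atTop_nhds_zero_nat
  have hconv := (code_tendsto_left (ξ := ξ) hleft u (fun i => x + nn i * ξ) _ hnn hδ).1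
  exact mem_closure_of_tendsto hconv (Filter.Eventually.of_forall fun i => Set.mem_range_self (nn i))


/-- every point of the orbit closure is a one-sided coding -/
theorem char_Y (hξ : Irrational ξ)
    (hper : ∀ (t : ℝ) (k : ℤ), F (t + k) = F t)
    (hright : ∀ w : ℝ, ∃ δ > 0, ∀ t, Int.fract (t - w) ∈ Set.Ioo 0 δ → F t = F w ∧ FL t = F w)
    (hleft : ∀ w : ℝ, ∃ δ > 0, ∀ t, Int.fract (t - w) ∈ Set.Ioo (1 - δ) 1 → F t = FL w ∧ FL t = FL w) :
    ∀ y ∈ Yset F ξ x, (∃ u, y = code F ξ u) ∨ (∃ u, y = code FL ξ u) := by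
  intro y hy
  rw [Yset, mem_closure_iff_seq_limit] at hy
  obtain ⟨ys, hysmem, hystend⟩ := hy
  choose mm hmm using hysmem
  set β : ℕ → ℝ := fun i => Int.fract (x + mm i * ξ) with hβ
  have hys_code : ∀ i, ys i = code F ξ (β i) := by
    intro i
    rw [← hmm i, hβ]
    exact code_per hper ξ (x + mm i * ξ)
  have hβmem : ∀ i, β i ∈ Set.Icc (0:ℝ) 1 := fun i => ⟨Int.fract_nonneg _, (Int.fract_lt_one _).le⟩
  obtain ⟨u₀, hu₀mem, φ, hφmono, hφtend⟩ :=
    tendsto_subseq_of_bounded (Metric.isBounded_Icc (0:ℝ) 1) hβmem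
  have hu₀ : u₀ ∈ Set.Icc (0:ℝ) 1 := by rwa [closure_Icc] at hu₀mem
  have hsub_tend : ∀ ψ : ℕ → ℕ, StrictMono ψ →
      Filter.Tendsto (fun i => ys (φ (ψ i))) Filter.atTop (nhds y) := by
    intro ψ hψ
    exact hystend.comp ((hφmono.comp hψ).tendsto_atTop)
  have hβφ : Filter.Tendsto (fun i => β (φ i)) Filter.atTop (nhds u₀) := hφtend
  have hsmall : ∀ᶠ i in Filter.atTop, |β (φ i) - u₀| < 1/2 := by
    have : Filter.Tendsto (fun i => |β (φ i) - u₀|) Filter.atTop (nhds 0) := by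
      have h1 : Filter.Tendsto (fun i => β (φ i) - u₀) Filter.atTop (nhds 0) := by
        simpa using hβφ.sub_const u₀
      simpa using h1.abs
    exact this.eventually_lt_const (by norm_num)
  have htri : (∃ᶠ i in Filter.atTop, β (φ i) = u₀) ∨
      (∃ᶠ i in Filter.atTop, u₀ < β (φ i)) ∨ (∃ᶠ i in Filter.atTop, β (φ i) < u₀) := by
    by_contra hcon
    push_neg at hcon
    obtain ⟨h1, h2, h3⟩ := hcon
    simp only [← not_lt] at h2 h3
    obtain ⟨i, hi1, hi2, hi3⟩ := (h1.and (h2.and h3)).exists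
    rcases lt_trichotomy (β (φ i)) u₀ with h | h | h
    · exact hi3 h
    · exact hi1 h
    · exact hi2 h
  rcases htri with heq | hgt | hlt
  · -- constant subsequence
    obtain ⟨ψ, hψmono, hψ⟩ := Filter.extraction_of_frequently_atTop heq
    left
    refine ⟨u₀, tendsto_nhds_unique (hsub_tend ψ hψmono) ?_⟩
    have : ∀ i, ys (φ (ψ i)) = code F ξ u₀ := by
      intro i
      rw [hys_code, hψ i]
    exact Filter.Tendsto.congr (fun i => (this i).symm) tendsto_const_nhds
  · -- approach from the right
    obtain ⟨ψ, hψmono, hψ⟩ := Filter.extraction_of_frequently_atTop hgt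
    left
    set v : ℕ → ℝ := fun i => β (φ (ψ i)) with hv
    have hvtend : Filter.Tendsto v Filter.atTop (nhds u₀) := hβφ.comp hψmono.tendsto_atTop
    have hstend : Filter.Tendsto (fun i => 2 * (v i - u₀)) Filter.atTop (nhds 0) := by
      have := (hvtend.sub_const u₀).const_mul 2
      simpa using this
    have hmem : ∀ i, Int.fract (v i - u₀) ∈ Set.Ioo 0 (2 * (v i - u₀)) := by
      intro i
      have hs0 : 0 < v i - u₀ := sub_pos.2 (hψ i)
      have hs1 : v i - u₀ < 1 := by
        have h1 : v i < 1 := Int.fract_lt_one _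
        have h2 : 0 ≤ u₀ := hu₀.1
        linarith
      rw [Int.fract_eq_self.2 ⟨hs0.le, hs1⟩]
      exact ⟨hs0, by linarith⟩
    have hconv := (code_tendsto_right (ξ := ξ) hright u₀ v _ hmem hstend).1
    refine ⟨u₀, tendsto_nhds_unique (hsub_tend ψ hψmono) ?_⟩
    exact Filter.Tendsto.congr (fun i => (hys_code (φ (ψ i))).symm) hconv
  · -- approach from the left
    obtain ⟨ψ, hψmono, hψ⟩ := Filter.extraction_of_frequently_atTop (hlt.and_eventually hsmall)
    right
    set v : ℕ → ℝ := fun i => β (φ (ψ i)) with hv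
    have hvtend : Filter.Tendsto v Filter.atTop (nhds u₀) := hβφ.comp hψmono.tendsto_atTop
    have hstend : Filter.Tendsto (fun i => 2 * (u₀ - v i)) Filter.atTop (nhds 0) := by
      have := ((hvtend.const_sub u₀)).const_mul 2
      simpa using this
    have hmem : ∀ i, Int.fract (v i - u₀) ∈ Set.Ioo (1 - 2 * (u₀ - v i)) 1 := by
      intro i
      obtain ⟨hilt, hismall⟩ := hψ i
      have hs0 : v i - u₀ < 0 := sub_neg.2 hilt
      have hs1 : -(1/2) < v i - u₀ := by
        rw [abs_lt] at hismall
        linarith [hismall.1]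
      have hfr : Int.fract (v i - u₀) = v i - u₀ + 1 := by
        rw [Int.fract_eq_iff]
        exact ⟨by linarith, by linarith, ⟨-1, by push_cast; ring⟩⟩
      rw [hfr]
      constructor <;> [linarith; linarith]
    have hconv := (code_tendsto_left (ξ := ξ) hleft u₀ v _ hmem hstend).1
    refine ⟨u₀, tendsto_nhds_unique (hsub_tend ψ hψmono) ?_⟩
    exact Filter.Tendsto.congr (fun i => (hys_code (φ (ψ i))).symm) hconv

/-- minimality of the coding orbit closure -/
theorem Y_minimal (hξ : Irrational ξ)
    (hper : ∀ (t : ℝ) (k : ℤ), F (t + k) = F t)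
    (hright : ∀ w : ℝ, ∃ δ > 0, ∀ t, Int.fract (t - w) ∈ Set.Ioo 0 δ → F t = F w ∧ FL t = F w)
    (hleft : ∀ w : ℝ, ∃ δ > 0, ∀ t, Int.fract (t - w) ∈ Set.Ioo (1 - δ) 1 → F t = FL w ∧ FL t = FL w) :
    ∀ K : Set (ℕ → ℝ), K.Nonempty → IsClosed K → Set.MapsTo shiftSeq K K →
      K ⊆ Yset F ξ x → Yset F ξ x ⊆ K := by
  intro K hKne hKcl hKinv hKY
  obtain ⟨y, hyK⟩ := hKne
  have hδ : Filter.Tendsto (fun i : ℕ => (1:ℝ)/(i+1)) Filter.atTop (nhds 0) :=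
    tendsto_one_div_add_atTop_nhds_zero_nat
  have hcodeFx : code F ξ x ∈ K := by
    rcases char_Y (x := x) hξ hper hright hleft y (hKY hyK) with ⟨u, rfl⟩ | ⟨u, rfl⟩
    · have hit : ∀ n : ℕ, code F ξ (u + n * ξ) ∈ K := by
        intro n
        rw [← shiftSeq_iter_code]
        exact (hKinv.iterate n) hyK
      have h : ∀ i : ℕ, ∃ n : ℕ, Int.fract (u + n * ξ - x) ∈ Set.Ioo (0:ℝ) (1/(i+1)) := by
        intro i
        obtain ⟨n, -, hn⟩ := dense_forward hξ u x (by positivity : (0:ℝ) < 1/(i+1)) 0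
        exact ⟨n, hn⟩
      choose nn hnn using h
      have hconv := (code_tendsto_right (ξ := ξ) hright x (fun i => u + nn i * ξ) _ hnn hδ).1
      exact hKcl.mem_of_tendsto hconv (Filter.Eventually.of_forall fun i => hit (nn i))
    · have hit : ∀ n : ℕ, code FL ξ (u + n * ξ) ∈ K := by
        intro n
        rw [← shiftSeq_iter_code]
        exact (hKinv.iterate n) hyK
      have h : ∀ i : ℕ, ∃ n : ℕ, Int.fract (u + n * ξ - x) ∈ Set.Ioo (0:ℝ) (1/(i+1)) := by
        intro i
        obtain ⟨n, -, hn⟩ := dense_forward hξ u x (by positivity : (0:ℝ) < 1/(i+1)) 0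
        exact ⟨n, hn⟩
      choose nn hnn using h
      have hconv := (code_tendsto_right (ξ := ξ) hright x (fun i => u + nn i * ξ) _ hnn hδ).2
      exact hKcl.mem_of_tendsto hconv (Filter.Eventually.of_forall fun i => hit (nn i))
  have hrange : ∀ m : ℕ, code F ξ (x + m * ξ) ∈ K := by
    intro m
    rw [← shiftSeq_iter_code]
    exact (hKinv.iterate m) hcodeFx
  exact closure_minimal (Set.range_subset_iff.2 hrange) hKcl


/-- Gottschalk–Hedlund style construction: a transfer function for the jump cocycle. -/
theorem gh_main (hξ : Irrational ξ)
    (hper : ∀ (t : ℝ) (k : ℤ), F (t + k) = F t)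
    {R B : ℝ}
    (hbF : ∀ t, |F t| ≤ R)
    (hright : ∀ w : ℝ, ∃ δ > 0, ∀ t, Int.fract (t - w) ∈ Set.Ioo 0 δ → F t = F w ∧ FL t = F w)
    (hleft : ∀ w : ℝ, ∃ δ > 0, ∀ t, Int.fract (t - w) ∈ Set.Ioo (1 - δ) 1 → F t = FL w ∧ FL t = FL w)
    (hsum : ∀ M : ℕ, |∑ n ∈ Finset.range M, F (x + n * ξ)| ≤ B) :
    ∃ J : ℝ → ℝ, (∀ u, J (u + ξ) = J u + (FL u - F u)) ∧
      (∀ (w : ℝ) (v δv : ℕ → ℝ), (∀ i, Int.fract (v i - w) ∈ Set.Ioo 0 (δv i)) →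
        Filter.Tendsto δv Filter.atTop (nhds 0) →
        Filter.Tendsto (fun i => J (v i)) Filter.atTop (nhds 0)) := by
  set g : ℕ → (ℕ → ℝ) := fun m => code F ξ (x + m * ξ) with hg
  set orb : ℕ → (ℕ → ℝ) × ℝ := fun M => (g M, ∑ n ∈ Finset.range M, F (x + n * ξ)) with horb
  set Z := closure (Set.range orb) with hZ
  set K0 := (Set.univ.pi fun _ : ℕ => Set.Icc (-R) R) ×ˢ Set.Icc (-B) B with hK0
  have hK0cl : IsClosed K0 :=
    (isClosed_set_pi fun _ _ => isClosed_Icc).prod isClosed_Icc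
  have hK0cp : IsCompact K0 := (isCompact_univ_pi fun _ => isCompact_Icc).prod isCompact_Icc
  have horbK : Set.range orb ⊆ K0 := by
    rintro _ ⟨M, rfl⟩
    constructor
    · intro n _
      exact Set.mem_Icc.2 (abs_le.1 (hbF _))
    · exact Set.mem_Icc.2 (abs_le.1 (hsum M))
  have hZK : Z ⊆ K0 := closure_minimal horbK hK0cl
  have hZcp : IsCompact Z := hK0cp.of_isClosed_subset isClosed_closure hZK
  have hskeworb : ∀ M, skew (orb M) = orb (M + 1) := by
    intro M
    apply Prod.ext
    · show shiftSeq (g M) = g (M + 1)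
      rw [hg]
      simp only
      rw [shiftSeq_code]
      have : x + (M : ℝ) * ξ + ξ = x + ((M + 1 : ℕ) : ℝ) * ξ := by push_cast; ring
      rw [this]
    · show (∑ n ∈ Finset.range M, F (x + n * ξ)) + (g M) 0 = ∑ n ∈ Finset.range (M + 1), F (x + n * ξ)
      rw [Finset.sum_range_succ]
      congr 1
      simp [hg, code]
  have himgsub : skew '' Set.range orb ⊆ Set.range orb := by
    rintro _ ⟨_, ⟨M, rfl⟩, rfl⟩
    exact ⟨M + 1, (hskeworb M).symm⟩
  have hZinv : Set.MapsTo skew Z Z := by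
    intro q hq
    have h1 : skew '' Z ⊆ Z := by
      calc skew '' closure (Set.range orb) ⊆ closure (skew '' Set.range orb) :=
            image_closure_subset_closure_image continuous_skew
        _ ⊆ closure (Set.range orb) := closure_mono himgsub
    exact h1 ⟨q, hq, rfl⟩
  set S := {K : Set ((ℕ → ℝ) × ℝ) | K ⊆ Z ∧ K.Nonempty ∧ IsClosed K ∧ Set.MapsTo skew K K}
    with hS
  have hZS : Z ∈ S := ⟨subset_rfl, ⟨orb 0, subset_closure ⟨0, rfl⟩⟩, isClosed_closure, hZinv⟩
  have hchain : ∀ c ⊆ S, IsChain (· ⊆ ·) c → c.Nonempty → ∃ lb ∈ S, ∀ s ∈ c, lb ⊆ s := by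
    intro c hcS hcchain hcne
    obtain ⟨K₁, hK₁⟩ := hcne
    have hcne' : Nonempty c := ⟨⟨K₁, hK₁⟩⟩
    refine ⟨⋂₀ c, ⟨?_, ?_, ?_, ?_⟩, fun s hs => Set.sInter_subset_of_mem hs⟩
    · exact (Set.sInter_subset_of_mem hK₁).trans (hcS hK₁).1
    · rw [Set.sInter_eq_iInter]
      apply IsCompact.nonempty_iInter_of_directed_nonempty_isCompact_isClosed
      · rintro ⟨K, hK⟩ ⟨K', hK'⟩
        rcases hcchain.total hK hK' with h | h
        · exact ⟨⟨K, hK⟩, subset_rfl, h⟩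
        · exact ⟨⟨K', hK'⟩, h, subset_rfl⟩
      · exact fun K => (hcS K.2).2.1
      · exact fun K => hK0cp.of_isClosed_subset (hcS K.2).2.2.1 ((hcS K.2).1.trans hZK)
      · exact fun K => (hcS K.2).2.2.1
    · exact isClosed_sInter fun K hK => (hcS hK).2.2.1
    · intro q hq
      rw [Set.mem_sInter] at hq ⊢
      exact fun K hK => (hcS hK).2.2.2 (hq K hK)
  obtain ⟨Mst, -, hMstmin⟩ := zorn_superset_nonempty S hchain Z hZS
  obtain ⟨hMZ, hMne, hMcl, hMinv⟩ := hMstmin.prop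
  have hMK0 : Mst ⊆ K0 := hMZ.trans hZK
  have hMcp : IsCompact Mst := hK0cp.of_isClosed_subset hMcl hMK0
  -- graph property
  have hgraph : ∀ y r r', (y, r) ∈ Mst → (y, r') ∈ Mst → r = r' := by
    intro y r r' hr hr'
    by_contra hne
    set v := r' - r with hv
    have hvne : v ≠ 0 := sub_ne_zero.2 (Ne.symm hne)
    set Tv : (ℕ → ℝ) × ℝ → (ℕ → ℝ) × ℝ := fun q => (q.1, q.2 + v) with hTv
    have hTvcont : Continuous Tv := continuous_fst.prodMk (continuous_snd.add continuous_const)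
    have hcomm : ∀ q, skew (Tv q) = Tv (skew q) := by
      intro q
      simp only [skew, hTv]
      apply Prod.ext
      · rfl
      · show q.2 + v + q.1 0 = q.2 + q.1 0 + v
        ring
    set N := Tv '' Mst with hN
    have hNcl : IsClosed N := (hMcp.image hTvcont).isClosed
    have hWmem : Mst ∩ N ∈ S := by
      refine ⟨Set.inter_subset_left.trans hMZ, ⟨(y, r'), hr', ⟨(y, r), hr, ?_⟩⟩, hMcl.inter hNcl, ?_⟩
      · show (y, r + v) = (y, r')
        rw [hv]
        congr 1
        ring
      · intro q hq
        refine ⟨hMinv hq.1, ?_⟩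
        obtain ⟨p, hp, hpq⟩ := hq.2
        exact ⟨skew p, hMinv hp, by rw [← hcomm, hpq]⟩
    have hMsub : Mst ⊆ N := (hMstmin.2 hWmem Set.inter_subset_left).trans Set.inter_subset_right
    have hiter : ∀ n : ℕ, (y, r - n * v) ∈ Mst := by
      intro n
      induction n with
      | zero => simpa using hr
      | succ m ih =>
        obtain ⟨p, hp, heq⟩ := hMsub ih
        have hp1 : p.1 = y := congrArg Prod.fst heq
        have hp2 : p.2 + v = r - m * v := congrArg Prod.snd heq
        have hpe : p = (y, r - ((m + 1 : ℕ) : ℝ) * v) := by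
          apply Prod.ext hp1
          show p.2 = r - ((m + 1 : ℕ) : ℝ) * v
          push_cast
          push_cast at hp2
          linarith
        rw [← hpe]
        exact hp
    obtain ⟨n, hn⟩ := exists_nat_gt ((|r| + |B| + 1) / |v|)
    have hvpos : 0 < |v| := abs_pos.2 hvne
    have hnv : |r| + |B| + 1 < n * |v| := by
      rw [div_lt_iff₀ hvpos] at hn
      linarith
    have hbd : |r - n * v| ≤ B := by
      have := (hMK0 (hiter n)).2
      rw [Set.mem_Icc] at this
      exact abs_le.2 this
    have h1 : |(n : ℝ) * v| - |r| ≤ |r - n * v| := by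
      have := abs_sub_abs_le_abs_sub ((n : ℝ) * v) r
      have habs : |(n : ℝ) * v - r| = |r - n * v| := abs_sub_comm _ _
      linarith
    have h2 : |(n : ℝ) * v| = n * |v| := by
      rw [abs_mul, Nat.abs_cast]
    have hBB : B ≤ |B| := le_abs_self B
    linarith
  -- projection covers Y
  have hπ : Yset F ξ x ⊆ Prod.fst '' Mst := by
    apply Y_minimal (x := x) hξ hper hright hleft
    · exact hMne.image _
    · exact (hMcp.image continuous_fst).isClosed
    · rintro _ ⟨q, hq, rfl⟩
      exact ⟨skew q, hMinv hq, rfl⟩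
    · have h1 : Prod.fst '' Z ⊆ Yset F ξ x := by
        rw [Yset]
        refine (image_closure_subset_closure_image continuous_fst).trans (closure_mono ?_)
        rintro _ ⟨_, ⟨M, rfl⟩, rfl⟩
        exact ⟨M, rfl⟩
      exact (Set.image_mono hMZ).trans h1
  set γ : (ℕ → ℝ) → ℝ := fun y => if h : ∃ r, (y, r) ∈ Mst then h.choose else 0 with hγ
  have hγmem : ∀ y, (∃ r, (y, r) ∈ Mst) → (y, γ y) ∈ Mst := by
    intro y h
    rw [hγ]
    simp only [dif_pos h]
    exact h.choose_spec
  have hγY : ∀ y ∈ Yset F ξ x, (y, γ y) ∈ Mst := by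
    intro y hy
    obtain ⟨q, hq, hq1⟩ := hπ hy
    refine hγmem y ⟨q.2, ?_⟩
    rwa [show (y, q.2) = q from Prod.ext hq1.symm rfl]
  have hγeq : ∀ y r, (y, r) ∈ Mst → γ y = r := fun y r h => hgraph y _ _ (hγmem y ⟨r, h⟩) h
  have hγbdd : ∀ y ∈ Yset F ξ x, |γ y| ≤ B := by
    intro y hy
    have := (hMK0 (hγY y hy)).2
    rw [Set.mem_Icc] at this
    exact abs_le.2 this
  have hcoc : ∀ y ∈ Yset F ξ x, γ (shiftSeq y) = γ y + y 0 := by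
    intro y hy
    exact hγeq _ _ (hMinv (hγY y hy))
  have hγcont : ∀ (ys : ℕ → ℕ → ℝ) (y : ℕ → ℝ), (∀ i, ys i ∈ Yset F ξ x) → y ∈ Yset F ξ x →
      Filter.Tendsto ys Filter.atTop (nhds y) →
      Filter.Tendsto (fun i => γ (ys i)) Filter.atTop (nhds (γ y)) := by
    intro ys y hysY hyY htend
    apply tendsto_of_subseq_tendsto
    intro ns hns
    have hbb : ∀ j, γ (ys (ns j)) ∈ Set.Icc (-B) B := fun j =>
      Set.mem_Icc.2 (abs_le.1 (hγbdd _ (hysY _)))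
    obtain ⟨ρ, -, ms, hmsmono, hmstend⟩ :=
      tendsto_subseq_of_bounded (Metric.isBounded_Icc (-B) B) hbb
    refine ⟨ms, ?_⟩
    have hpair : Filter.Tendsto (fun j => (ys (ns (ms j)), γ (ys (ns (ms j)))))
        Filter.atTop (nhds (y, ρ)) :=
      ((htend.comp hns).comp hmsmono.tendsto_atTop).prodMk_nhds hmstend
    have hmemM : (y, ρ) ∈ Mst :=
      hMcl.mem_of_tendsto hpair (Filter.Eventually.of_forall fun j => hγY _ (hysY _))
    have hρ : γ y = ρ := hγeq y ρ hmemM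
    rw [← hρ] at hmstend
    exact hmstend
  refine ⟨fun u => γ (code FL ξ u) - γ (code F ξ u), ?_, ?_⟩
  · intro u
    have hF : code F ξ u ∈ Yset F ξ x := codeF_mem_Y hξ hright u
    have hL : code FL ξ u ∈ Yset F ξ x := codeL_mem_Y hξ hleft u
    have e1 : γ (code F ξ (u + ξ)) = γ (code F ξ u) + F u := by
      rw [← shiftSeq_code, hcoc _ hF]
      congr 1
      simp [code]
    have e2 : γ (code FL ξ (u + ξ)) = γ (code FL ξ u) + FL u := by
      rw [← shiftSeq_code, hcoc _ hL]
      congr 1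
      simp [code]
    show γ (code FL ξ (u + ξ)) - γ (code F ξ (u + ξ)) =
      γ (code FL ξ u) - γ (code F ξ u) + (FL u - F u)
    rw [e1, e2]
    ring
  · intro w v δv hmem hδtend
    have h1 := code_tendsto_right (ξ := ξ) hright w v δv hmem hδtend
    have hFt := hγcont _ _ (fun i => codeF_mem_Y hξ hright (v i)) (codeF_mem_Y hξ hright w) h1.1
    have hLt := hγcont _ _ (fun i => codeL_mem_Y hξ hleft (v i)) (codeF_mem_Y hξ hright w) h1.2
    have := hLt.sub hFt
    simpa using this

end GHsec




/-! ### The concrete step function -/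

section Psi

variable {L : ℕ}

/-- the centred sum of indicators of the intervals -/
noncomputable def psi (a b : Fin L → ℝ) (t : ℝ) : ℝ :=
  ∑ ℓ : Fin L, ((⌊t - a ℓ⌋ : ℝ) - (⌊t - b ℓ⌋ : ℝ) - (b ℓ - a ℓ))

/-- its left-continuous version -/
noncomputable def psiL (a b : Fin L → ℝ) (t : ℝ) : ℝ :=
  ∑ ℓ : Fin L, ((⌈t - a ℓ⌉ : ℝ) - (⌈t - b ℓ⌉ : ℝ) - (b ℓ - a ℓ))

theorem psi_per (a b : Fin L → ℝ) (t : ℝ) (k : ℤ) : psi a b (t + k) = psi a b t := by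
  unfold psi
  apply Finset.sum_congr rfl
  intro ℓ _
  have e1 : t + (k : ℝ) - a ℓ = (t - a ℓ) + k := by ring
  have e2 : t + (k : ℝ) - b ℓ = (t - b ℓ) + k := by ring
  rw [e1, e2, Int.floor_add_intCast, Int.floor_add_intCast]
  push_cast
  ring

theorem psiL_per (a b : Fin L → ℝ) (t : ℝ) (k : ℤ) : psiL a b (t + k) = psiL a b t := by
  unfold psiL
  apply Finset.sum_congr rfl
  intro ℓ _
  have e1 : t + (k : ℝ) - a ℓ = (t - a ℓ) + k := by ring
  have e2 : t + (k : ℝ) - b ℓ = (t - b ℓ) + k := by ring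
  rw [e1, e2, Int.ceil_add_intCast, Int.ceil_add_intCast]
  push_cast
  ring

theorem psi_bound (a b : Fin L → ℝ) (hab : ∀ ℓ, a ℓ ≤ b ℓ) (hb1 : ∀ ℓ, b ℓ ≤ a ℓ + 1) (t : ℝ) :
    |psi a b t| ≤ 2 * L := by
  unfold psi
  calc |∑ ℓ : Fin L, ((⌊t - a ℓ⌋ : ℝ) - (⌊t - b ℓ⌋ : ℝ) - (b ℓ - a ℓ))|
      ≤ ∑ ℓ : Fin L, |(⌊t - a ℓ⌋ : ℝ) - (⌊t - b ℓ⌋ : ℝ) - (b ℓ - a ℓ)| :=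
        Finset.abs_sum_le_sum_abs _ _
    _ ≤ ∑ _ℓ : Fin L, (2 : ℝ) := by
        apply Finset.sum_le_sum
        intro ℓ _
        have h1 : (⌊t - b ℓ⌋ : ℝ) ≤ (⌊t - a ℓ⌋ : ℝ) := by
          exact_mod_cast Int.floor_le_floor (by linarith [hab ℓ] : t - b ℓ ≤ t - a ℓ)
        have h2 : (⌊t - a ℓ⌋ : ℝ) ≤ (⌊t - b ℓ⌋ : ℝ) + 1 := by
          have : ⌊t - a ℓ⌋ ≤ ⌊t - b ℓ + 1⌋ :=
            Int.floor_le_floor (by linarith [hb1 ℓ] : t - a ℓ ≤ t - b ℓ + 1)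
          rw [show t - b ℓ + 1 = (t - b ℓ) + (1 : ℤ) by push_cast; ring, Int.floor_add_intCast] at this
          exact_mod_cast this
        have h3 : 0 ≤ b ℓ - a ℓ := by linarith [hab ℓ]
        have h4 : b ℓ - a ℓ ≤ 1 := by linarith [hb1 ℓ]
        rw [abs_le]
        constructor <;> linarith
    _ = 2 * L := by simp [mul_comm]

theorem floor_ceil_right (c w ε : ℝ) (hε0 : 0 < ε)
    (hεc : ε < (⌊w - c⌋ : ℝ) + 1 - (w - c)) :
    ⌊w + ε - c⌋ = ⌊w - c⌋ ∧ ⌈w + ε - c⌉ = ⌊w - c⌋ + 1 := by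
  have hfl := Int.floor_le (w - c)
  constructor
  · rw [Int.floor_eq_iff]
    constructor
    · linarith
    · push_cast; linarith
  · rw [Int.ceil_eq_iff]
    constructor
    · push_cast; linarith
    · push_cast; linarith

theorem floor_ceil_left (c w ε : ℝ) (hε0 : 0 < ε)
    (hεc : ε < (w - c) - ((⌈w - c⌉ : ℝ) - 1)) :
    ⌊w - ε - c⌋ = ⌈w - c⌉ - 1 ∧ ⌈w - ε - c⌉ = ⌈w - c⌉ := by
  have hcl := Int.le_ceil (w - c)
  constructor
  · rw [Int.floor_eq_iff]
    constructor
    · push_cast; linarith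
    · push_cast; linarith
  · rw [Int.ceil_eq_iff]
    constructor
    · push_cast; linarith
    · push_cast; linarith

theorem psi_right (a b : Fin L → ℝ) (w : ℝ) :
    ∃ δ > 0, ∀ t, Int.fract (t - w) ∈ Set.Ioo 0 δ →
      psi a b t = psi a b w ∧ psiL a b t = psi a b w := by
  have hex : ∃ δ > 0, δ ≤ 1 ∧ ∀ ℓ : Fin L,
      δ ≤ (⌊w - a ℓ⌋ : ℝ) + 1 - (w - a ℓ) ∧ δ ≤ (⌊w - b ℓ⌋ : ℝ) + 1 - (w - b ℓ) := by
    set T : Finset ℝ := ((Finset.univ.image fun ℓ : Fin L => (⌊w - a ℓ⌋ : ℝ) + 1 - (w - a ℓ)) ∪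
      (Finset.univ.image fun ℓ : Fin L => (⌊w - b ℓ⌋ : ℝ) + 1 - (w - b ℓ))) ∪ {1} with hT
    have h1T : (1 : ℝ) ∈ T := by simp [hT]
    have hTne : T.Nonempty := ⟨1, h1T⟩
    refine ⟨T.min' hTne, ?_, T.min'_le _ h1T, fun ℓ => ⟨?_, ?_⟩⟩
    · have hall : ∀ z ∈ T, 0 < z := by
        intro z hz
        rw [hT] at hz
        simp only [Finset.mem_union, Finset.mem_image, Finset.mem_singleton,
          Finset.mem_univ, true_and] at hz
        rcases hz with (⟨ℓ, rfl⟩ | ⟨ℓ, rfl⟩) | rfl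
        · linarith [Int.lt_floor_add_one (w - a ℓ)]
        · linarith [Int.lt_floor_add_one (w - b ℓ)]
        · norm_num
      exact hall _ (T.min'_mem hTne)
    · apply T.min'_le
      rw [hT]
      simp only [Finset.mem_union, Finset.mem_image, Finset.mem_singleton,
        Finset.mem_univ, true_and]
      exact Or.inl (Or.inl ⟨ℓ, rfl⟩)
    · apply T.min'_le
      rw [hT]
      simp only [Finset.mem_union, Finset.mem_image, Finset.mem_singleton,
        Finset.mem_univ, true_and]
      exact Or.inl (Or.inr ⟨ℓ, rfl⟩)
  obtain ⟨δ, hδ0, hδ1, hδall⟩ := hex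
  refine ⟨δ, hδ0, ?_⟩
  intro t ht
  obtain ⟨hε0, hεδ⟩ := ht
  set ε := Int.fract (t - w) with hε
  have hk : t = (w + ε) + ((⌊t - w⌋ : ℤ) : ℝ) := by
    rw [hε, Int.fract]
    ring
  have h1 : psi a b t = psi a b (w + ε) := by rw [hk, psi_per]
  have h2 : psiL a b t = psiL a b (w + ε) := by rw [hk, psiL_per]
  rw [h1, h2]
  constructor
  · unfold psi
    apply Finset.sum_congr rfl
    intro ℓ _
    have ea := (floor_ceil_right (a ℓ) w ε hε0 (lt_of_lt_of_le hεδ (hδall ℓ).1)).1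
    have eb := (floor_ceil_right (b ℓ) w ε hε0 (lt_of_lt_of_le hεδ (hδall ℓ).2)).1
    rw [show w + ε - a ℓ = w + ε - a ℓ from rfl] at ea
    rw [ea, eb]
  · unfold psiL psi
    apply Finset.sum_congr rfl
    intro ℓ _
    have ea := (floor_ceil_right (a ℓ) w ε hε0 (lt_of_lt_of_le hεδ (hδall ℓ).1)).2
    have eb := (floor_ceil_right (b ℓ) w ε hε0 (lt_of_lt_of_le hεδ (hδall ℓ).2)).2
    rw [ea, eb]
    push_cast
    ring

theorem psi_left (a b : Fin L → ℝ) (w : ℝ) :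
    ∃ δ > 0, ∀ t, Int.fract (t - w) ∈ Set.Ioo (1 - δ) 1 →
      psi a b t = psiL a b w ∧ psiL a b t = psiL a b w := by
  have hex : ∃ δ > 0, δ ≤ 1 ∧ ∀ ℓ : Fin L,
      δ ≤ (w - a ℓ) - ((⌈w - a ℓ⌉ : ℝ) - 1) ∧ δ ≤ (w - b ℓ) - ((⌈w - b ℓ⌉ : ℝ) - 1) := by
    set T : Finset ℝ := ((Finset.univ.image fun ℓ : Fin L => (w - a ℓ) - ((⌈w - a ℓ⌉ : ℝ) - 1)) ∪
      (Finset.univ.image fun ℓ : Fin L => (w - b ℓ) - ((⌈w - b ℓ⌉ : ℝ) - 1))) ∪ {1} with hT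
    have h1T : (1 : ℝ) ∈ T := by simp [hT]
    have hTne : T.Nonempty := ⟨1, h1T⟩
    refine ⟨T.min' hTne, ?_, T.min'_le _ h1T, fun ℓ => ⟨?_, ?_⟩⟩
    · have hall : ∀ z ∈ T, 0 < z := by
        intro z hz
        rw [hT] at hz
        simp only [Finset.mem_union, Finset.mem_image, Finset.mem_singleton,
          Finset.mem_univ, true_and] at hz
        rcases hz with (⟨ℓ, rfl⟩ | ⟨ℓ, rfl⟩) | rfl
        · linarith [Int.ceil_lt_add_one (w - a ℓ)]
        · linarith [Int.ceil_lt_add_one (w - b ℓ)]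
        · norm_num
      exact hall _ (T.min'_mem hTne)
    · apply T.min'_le
      rw [hT]
      simp only [Finset.mem_union, Finset.mem_image, Finset.mem_singleton,
        Finset.mem_univ, true_and]
      exact Or.inl (Or.inl ⟨ℓ, rfl⟩)
    · apply T.min'_le
      rw [hT]
      simp only [Finset.mem_union, Finset.mem_image, Finset.mem_singleton,
        Finset.mem_univ, true_and]
      exact Or.inl (Or.inr ⟨ℓ, rfl⟩)
  obtain ⟨δ, hδ0, hδ1, hδall⟩ := hex
  refine ⟨δ, hδ0, ?_⟩
  intro t ht
  obtain ⟨hεlo, hεhi⟩ := ht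
  set ε := 1 - Int.fract (t - w) with hε
  have hε0 : 0 < ε := by rw [hε]; linarith
  have hεδ : ε < δ := by rw [hε]; linarith
  have hk : t = (w - ε) + ((⌊t - w⌋ + 1 : ℤ) : ℝ) := by
    rw [hε, Int.fract]
    push_cast
    ring
  have h1 : psi a b t = psi a b (w - ε) := by rw [hk, psi_per]
  have h2 : psiL a b t = psiL a b (w - ε) := by rw [hk, psiL_per]
  rw [h1, h2]
  constructor
  · unfold psi psiL
    apply Finset.sum_congr rfl
    intro ℓ _
    have ea := (floor_ceil_left (a ℓ) w ε hε0 (lt_of_lt_of_le hεδ (hδall ℓ).1)).1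
    have eb := (floor_ceil_left (b ℓ) w ε hε0 (lt_of_lt_of_le hεδ (hδall ℓ).2)).1
    rw [ea, eb]
    push_cast
    ring
  · unfold psiL
    apply Finset.sum_congr rfl
    intro ℓ _
    have ea := (floor_ceil_left (a ℓ) w ε hε0 (lt_of_lt_of_le hεδ (hδall ℓ).1)).2
    have eb := (floor_ceil_left (b ℓ) w ε hε0 (lt_of_lt_of_le hεδ (hδall ℓ).2)).2
    rw [ea, eb]

/-- indicator formula -/
theorem floor_sub_indicator (t c d : ℝ) (hc : 0 ≤ c) (hcd : c ≤ d) (hd : d ≤ 1) :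
    ((⌊t - c⌋ : ℝ) - (⌊t - d⌋ : ℝ)) = if Int.fract t ∈ Set.Ico c d then 1 else 0 := by
  set r := Int.fract t with hr
  have hr0 : 0 ≤ r := Int.fract_nonneg t
  have hr1 : r < 1 := Int.fract_lt_one t
  have hsplit : ∀ e : ℝ, 0 ≤ e → e ≤ 1 → ⌊t - e⌋ = ⌊t⌋ + (if e ≤ r then 0 else -1) := by
    intro e he0 he1
    have ht : t - e = (r - e) + ((⌊t⌋ : ℤ) : ℝ) := by rw [hr, Int.fract]; ring
    have hfe : ⌊r - e⌋ = if e ≤ r then (0 : ℤ) else -1 := by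
      by_cases h : e ≤ r
      · rw [if_pos h, Int.floor_eq_iff]
        constructor
        · push_cast; linarith
        · push_cast; linarith
      · push_neg at h
        rw [if_neg (not_le.2 h), Int.floor_eq_iff]
        constructor
        · push_cast; linarith
        · push_cast; linarith
    rw [ht, Int.floor_add_intCast, hfe]
    exact add_comm _ _
  rw [hsplit c hc (le_trans hcd hd), hsplit d (le_trans hc hcd) hd]
  by_cases h1 : c ≤ r
  · by_cases h2 : d ≤ r
    · rw [if_pos h1, if_pos h2, if_neg]
      · push_cast; ring
      · rw [Set.mem_Ico]; push_neg; intro; linarith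
    · rw [if_pos h1, if_neg h2, if_pos]
      · push_cast; ring
      · exact Set.mem_Ico.2 ⟨h1, not_le.1 h2⟩
  · rw [if_neg h1, if_neg, if_neg]
    · push_cast; ring
    · rw [Set.mem_Ico]; push_neg; intro h; exact absurd h (by exact fun hh => h1 hh)
    · push_neg at h1; intro h; linarith

end Psi


/-! ### Endgame: the window sum of jumps vanishes -/

theorem window_sum_zero {ξ : ℝ} (hξ : Irrational ξ) {F FL : ℝ → ℝ} (J : ℝ → ℝ)
    (hJcoc : ∀ u, J (u + ξ) = J u + (FL u - F u))
    (hJlim : ∀ (w : ℝ) (v δv : ℕ → ℝ), (∀ i, Int.fract (v i - w) ∈ Set.Ioo 0 (δv i)) →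
        Filter.Tendsto δv Filter.atTop (nhds 0) →
        Filter.Tendsto (fun i => J (v i)) Filter.atTop (nhds 0))
    (e : ℝ) (N : ℕ)
    (hN : ∀ k : ℤ, (N : ℤ) ≤ |k| → FL (e + (k : ℝ) * ξ) = F (e + (k : ℝ) * ξ)) :
    ∑ j ∈ Finset.range (2 * N),
      (FL (e + (((j : ℤ) - (N : ℤ) : ℤ) : ℝ) * ξ) - F (e + (((j : ℤ) - (N : ℤ) : ℤ) : ℝ) * ξ)) = 0 := by
  have hδ : Filter.Tendsto (fun i : ℕ => (1:ℝ)/(i+1)) Filter.atTop (nhds 0) :=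
    tendsto_one_div_add_atTop_nhds_zero_nat
  set jmpI : ℤ → ℝ := fun k => FL (e + (k : ℝ) * ξ) - F (e + (k : ℝ) * ξ) with hjmpI
  set JI : ℤ → ℝ := fun k => J (e + (k : ℝ) * ξ) with hJI
  have hstep : ∀ k : ℤ, JI (k + 1) = JI k + jmpI k := by
    intro k
    have harg : e + (k : ℝ) * ξ + ξ = e + ((k + 1 : ℤ) : ℝ) * ξ := by push_cast; ring
    have hc := hJcoc (e + (k : ℝ) * ξ)
    rw [harg] at hc
    exact hc
  have htel : ∀ (m : ℤ) (c : ℕ), JI (m + c) = JI m + ∑ j ∈ Finset.range c, jmpI (m + j) := by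
    intro m c
    induction c with
    | zero => simp
    | succ d ih =>
      have h1 : (m + ((d + 1 : ℕ) : ℤ)) = (m + (d : ℕ)) + 1 := by push_cast; ring
      rw [h1, hstep, ih, Finset.sum_range_succ]
      ring
  have hjz : ∀ k : ℤ, (N : ℤ) ≤ |k| → jmpI k = 0 := by
    intro k hk
    rw [hjmpI]
    simp only
    rw [hN k hk]
    ring
  have hplus : ∀ n : ℕ, JI ((N : ℤ) + n) = JI (N : ℤ) := by
    intro n
    rw [htel (N : ℤ) n]
    have hz : ∀ j ∈ Finset.range n, jmpI ((N : ℤ) + j) = 0 := by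
      intro j _
      apply hjz
      rw [abs_of_nonneg (by positivity)]
      omega
    rw [Finset.sum_congr rfl hz]
    simp
  have hminus : ∀ n : ℕ, JI (-(N : ℤ) - n) = JI (-(N : ℤ)) := by
    intro n
    have h1 := htel (-(N : ℤ) - n) n
    have h2 : (-(N : ℤ) - n + n) = -(N : ℤ) := by ring
    rw [h2] at h1
    have hz : ∀ j ∈ Finset.range n, jmpI (-(N : ℤ) - n + j) = 0 := by
      intro j hj
      rw [Finset.mem_range] at hj
      apply hjz
      have : -(N : ℤ) - n + j ≤ -(N : ℤ) := by omega
      rw [abs_of_nonpos (by omega)]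
      omega
    rw [Finset.sum_congr rfl hz] at h1
    simp at h1
    linarith [h1]
  -- both tail values vanish
  have hcplus : JI (N : ℤ) = 0 := by
    have hch : ∀ i : ℕ, ∃ n : ℕ, N ≤ n ∧ Int.fract (e + n * ξ - 0) ∈ Set.Ioo (0:ℝ) (1/(i+1)) := by
      intro i
      exact dense_forward hξ e 0 (by positivity : (0:ℝ) < 1/(i+1)) N
    choose nn hnn1 hnn2 using hch
    have hconst : ∀ i, J (e + nn i * ξ) = JI (N : ℤ) := by
      intro i
      have := hplus (nn i - N)
      have harg : ((N : ℤ) + ((nn i - N : ℕ) : ℤ)) = ((nn i : ℕ) : ℤ) := by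
        have := hnn1 i
        omega
      rw [harg] at this
      rw [← this, hJI]
      simp only
      norm_num
    have htendJ := hJlim 0 (fun i => e + nn i * ξ) (fun i => 1/(i+1)) hnn2 hδ
    have htendC : Filter.Tendsto (fun i => J (e + nn i * ξ)) Filter.atTop (nhds (JI (N:ℤ))) := by
      exact Filter.Tendsto.congr (fun i => (hconst i).symm) tendsto_const_nhds
    exact tendsto_nhds_unique htendC htendJ
  have hcminus : JI (-(N : ℤ)) = 0 := by
    have hch : ∀ i : ℕ, ∃ n : ℕ, N ≤ n ∧ Int.fract (e - n * ξ - 0) ∈ Set.Ioo (0:ℝ) (1/(i+1)) := by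
      intro i
      exact dense_backward hξ e 0 (by positivity : (0:ℝ) < 1/(i+1)) N
    choose nn hnn1 hnn2 using hch
    have hconst : ∀ i, J (e - nn i * ξ) = JI (-(N : ℤ)) := by
      intro i
      have := hminus (nn i - N)
      have harg : (-(N : ℤ) - ((nn i - N : ℕ) : ℤ)) = -((nn i : ℕ) : ℤ) := by
        have := hnn1 i
        omega
      rw [harg] at this
      rw [← this, hJI]
      simp only
      congr 1
      push_cast
      ring
    have htendJ := hJlim 0 (fun i => e - nn i * ξ) (fun i => 1/(i+1)) hnn2 hδ
    have htendC : Filter.Tendsto (fun i => J (e - nn i * ξ)) Filter.atTop (nhds (JI (-(N:ℤ)))) :=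
      Filter.Tendsto.congr (fun i => (hconst i).symm) tendsto_const_nhds
    exact tendsto_nhds_unique htendC htendJ
  have hfin := htel (-(N : ℤ)) (2 * N)
  have h2N : (-(N : ℤ) + ((2 * N : ℕ) : ℤ)) = (N : ℤ) := by push_cast; ring
  rw [h2N, hcplus, hcminus] at hfin
  have hsum : ∑ j ∈ Finset.range (2 * N), jmpI (-(N : ℤ) + j) = 0 := by linarith
  rw [← hsum]
  apply Finset.sum_congr rfl
  intro j _
  rw [hjmpI]
  simp only
  have : ((j : ℤ) - (N : ℤ)) = (-(N : ℤ) + j) := by ring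
  rw [this]


theorem ceil_sub_floor_eq (z : ℝ) :
    (⌈z⌉ : ℝ) - (⌊z⌋ : ℝ) = if Int.fract z = 0 then 0 else 1 := by
  have hfr : Int.fract z = z - (⌊z⌋ : ℝ) := rfl
  by_cases h : Int.fract z = 0
  · rw [if_pos h]
    have hz : z = (⌊z⌋ : ℝ) := by rw [hfr] at h; linarith
    have hceil : ⌈z⌉ = ⌊z⌋ :=
      le_antisymm (Int.ceil_le.2 (le_of_eq hz)) (Int.floor_le_ceil z)
    rw [hceil]
    ring
  · rw [if_neg h]
    have h1 : 0 < Int.fract z := lt_of_le_of_ne (Int.fract_nonneg z) (Ne.symm h)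
    have h2 : (⌊z⌋ : ℝ) < z := by rw [hfr] at h1; linarith
    have hc : ⌈z⌉ = ⌊z⌋ + 1 := by
      rw [Int.ceil_eq_iff]
      constructor
      · push_cast; linarith
      · push_cast; linarith [Int.lt_floor_add_one z]
    rw [hc]
    push_cast
    ring

theorem jmp_eq {L : ℕ} (a b : Fin L → ℝ) (t : ℝ) :
    psiL a b t - psi a b t =
      ∑ ℓ : Fin L, ((if Int.fract (t - b ℓ) = 0 then (1:ℝ) else 0) -
        (if Int.fract (t - a ℓ) = 0 then (1:ℝ) else 0)) := by
  unfold psi psiL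
  rw [← Finset.sum_sub_distrib]
  apply Finset.sum_congr rfl
  intro ℓ _
  have ha := ceil_sub_floor_eq (t - a ℓ)
  have hb := ceil_sub_floor_eq (t - b ℓ)
  by_cases h1 : Int.fract (t - a ℓ) = 0 <;> by_cases h2 : Int.fract (t - b ℓ) = 0 <;>
      simp only [h1, h2, if_pos, if_neg, if_true, if_false, not_false_iff] at ha hb ⊢ <;>
    linarith

theorem localDisc_count (ξ x aa bb : ℝ) (N : ℕ) :
    localDisc ξ x aa bb N =
      (((Finset.range (N+1)).filter
        (fun n : ℕ => Int.fract (x + n * ξ) ∈ Set.Ico aa bb)).card : ℝ) - N * (bb - aa) := by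
  unfold localDisc
  congr 2
  have h1 : (do let a ← Finset.range (N+1); pure ((a : ℕ) : ℝ)) =
      (Finset.range (N+1)).image (fun n : ℕ => (n : ℝ)) := by
    show (Finset.range (N+1)).sup (fun a : ℕ => ({((a : ℕ) : ℝ)} : Finset ℝ)) =
      (Finset.range (N+1)).image (fun n : ℕ => (n : ℝ))
    exact Finset.sup_singleton_apply _ _
  rw [h1, Finset.filter_image,
    Finset.card_image_of_injective _ (fun m n h => Nat.cast_injective h)]

theorem psi_sum {L : ℕ} (a b : Fin L → ℝ) (ha : ∀ ℓ, 0 ≤ a ℓ) (hab : ∀ ℓ, a ℓ ≤ b ℓ)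
    (hb : ∀ ℓ, b ℓ ≤ 1) (ξ x : ℝ) (M : ℕ) :
    ∑ n ∈ Finset.range (M + 1), psi a b (x + n * ξ) =
      (∑ ℓ, localDisc ξ x (a ℓ) (b ℓ) M) - ∑ ℓ, (b ℓ - a ℓ) := by
  have hld := Finset.sum_congr rfl (fun (ℓ : Fin L) (_ : ℓ ∈ Finset.univ) =>
    localDisc_count ξ x (a ℓ) (b ℓ) M)
  rw [hld]
  unfold psi
  rw [Finset.sum_comm, ← Finset.sum_sub_distrib]
  apply Finset.sum_congr rfl
  intro ℓ _
  have hind : ∀ n ∈ Finset.range (M+1),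
      ((⌊x + n*ξ - a ℓ⌋ : ℝ) - (⌊x + n*ξ - b ℓ⌋ : ℝ) - (b ℓ - a ℓ)) =
      (if Int.fract (x + n*ξ) ∈ Set.Ico (a ℓ) (b ℓ) then (1:ℝ) else 0) - (b ℓ - a ℓ) := by
    intro n _
    rw [floor_sub_indicator (x + n*ξ) (a ℓ) (b ℓ) (ha ℓ) (hab ℓ) (hb ℓ)]
  have hcount : ∑ n ∈ Finset.range (M+1),
      (if Int.fract (x + n*ξ) ∈ Set.Ico (a ℓ) (b ℓ) then (1:ℝ) else 0) =
      (((Finset.range (M+1)).filter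
        (fun n : ℕ => Int.fract (x + n * ξ) ∈ Set.Ico (a ℓ) (b ℓ))).card : ℝ) := by
    rw [Finset.sum_boole]
  rw [Finset.sum_congr rfl hind, Finset.sum_sub_distrib, hcount,
    Finset.sum_const, Finset.card_range, nsmul_eq_mul]
  push_cast
  ring

theorem psi_sum_bound {L : ℕ} (a b : Fin L → ℝ) (ha : ∀ ℓ, 0 ≤ a ℓ) (hab : ∀ ℓ, a ℓ ≤ b ℓ)
    (hb : ∀ ℓ, b ℓ ≤ 1) (ξ x : ℝ) (C : ℝ) (hC : 0 < C)
    (hbd : ∀ N : ℕ, |∑ ℓ, localDisc ξ x (a ℓ) (b ℓ) N| < C) :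
    ∀ M : ℕ, |∑ n ∈ Finset.range M, psi a b (x + n * ξ)| ≤ C + |∑ ℓ, (b ℓ - a ℓ)| := by
  intro M
  cases M with
  | zero =>
    simp only [Finset.range_zero, Finset.sum_empty, abs_zero]
    positivity
  | succ M' =>
    rw [psi_sum a b ha hab hb ξ x M']
    have h1 := hbd M'
    have h2 := abs_sub (∑ ℓ, localDisc ξ x (a ℓ) (b ℓ) M') (∑ ℓ, (b ℓ - a ℓ))
    linarith


/-- a window of length `2N` catches the unique orbit hit, if any -/
theorem single_count {ξ : ℝ} (hξ : Irrational ξ) (e c : ℝ) (N : ℕ)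
    (hwit : ∀ k : ℤ, Int.fract (e + k * ξ - c) = 0 → k.natAbs < N) :
    ∑ j ∈ Finset.range (2 * N),
        (if Int.fract (e + (((j : ℤ) - (N : ℤ) : ℤ) : ℝ) * ξ - c) = 0 then (1:ℝ) else 0)
      = if (∃ k : ℤ, Int.fract (e + (k : ℝ) * ξ - c) = 0) then 1 else 0 := by
  by_cases h : ∃ k : ℤ, Int.fract (e + (k : ℝ) * ξ - c) = 0
  · rw [if_pos h]
    obtain ⟨k₀, hk₀⟩ := h
    have hlt := hwit k₀ hk₀
    set j₀ : ℕ := (k₀ + N).toNat with hj₀def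
    have hj₀ : ((j₀ : ℤ) - (N : ℤ)) = k₀ := by
      rw [hj₀def]
      omega
    have hj₀r : j₀ ∈ Finset.range (2 * N) := by
      rw [Finset.mem_range]
      omega
    rw [Finset.sum_eq_single j₀]
    · rw [hj₀, if_pos hk₀]
    · intro j _ hjne
      rw [if_neg]
      intro hc
      have : ((j : ℤ) - (N : ℤ)) = k₀ := unique_hit hξ e c hc hk₀
      apply hjne
      omega
    · intro habs
      exact absurd hj₀r habs
  · rw [if_neg h]
    apply Finset.sum_eq_zero
    intro j _
    rw [if_neg]
    intro hc
    exact h ⟨(j : ℤ) - (N : ℤ), hc⟩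


/-- the main counting identity: each coset of `ℤξ+ℤ` carries as many left endpoints
as right endpoints -/
theorem count_balance {ξ x : ℝ} (hξ : Irrational ξ) {L : ℕ} (a b : Fin L → ℝ)
    (ha : ∀ ℓ, 0 ≤ a ℓ) (hab : ∀ ℓ, a ℓ ≤ b ℓ) (hb : ∀ ℓ, b ℓ ≤ 1)
    (C : ℝ) (hC : 0 < C) (hbd : ∀ N : ℕ, |∑ ℓ, localDisc ξ x (a ℓ) (b ℓ) N| < C) (e : ℝ) :
    (Finset.univ.filter (fun ℓ : Fin L => ∃ k : ℤ, Int.fract (e + (k:ℝ) * ξ - a ℓ) = 0)).card =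
    (Finset.univ.filter (fun ℓ : Fin L => ∃ k : ℤ, Int.fract (e + (k:ℝ) * ξ - b ℓ) = 0)).card := by
  obtain ⟨J, hJcoc, hJlim⟩ := gh_main (x := x) hξ (psi_per a b)
    (psi_bound a b hab (fun ℓ => by linarith [hb ℓ, ha ℓ]))
    (psi_right a b) (psi_left a b)
    (psi_sum_bound a b ha hab hb ξ x C hC hbd)
  set W : Finset ℕ := (Finset.univ : Finset (Fin L)).biUnion (fun ℓ =>
      (if h : ∃ k : ℤ, Int.fract (e + (k:ℝ) * ξ - a ℓ) = 0 then {h.choose.natAbs} else ∅) ∪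
      (if h : ∃ k : ℤ, Int.fract (e + (k:ℝ) * ξ - b ℓ) = 0 then {h.choose.natAbs} else ∅))
    with hW
  set N : ℕ := (W.sup id) + 1 with hNdef
  have hwa : ∀ (ℓ : Fin L) (k : ℤ), Int.fract (e + (k:ℝ) * ξ - a ℓ) = 0 → k.natAbs < N := by
    intro ℓ k hk
    have hex : ∃ k : ℤ, Int.fract (e + (k:ℝ) * ξ - a ℓ) = 0 := ⟨k, hk⟩
    have hkc : k = hex.choose := unique_hit hξ e (a ℓ) hk hex.choose_spec
    have hmem : hex.choose.natAbs ∈ W := by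
      rw [hW]
      refine Finset.mem_biUnion.2 ⟨ℓ, Finset.mem_univ ℓ, Finset.mem_union_left _ ?_⟩
      rw [dif_pos hex]
      exact Finset.mem_singleton_self _
    have hle : id hex.choose.natAbs ≤ W.sup id := Finset.le_sup hmem
    simp only [id] at hle
    omega
  have hwb : ∀ (ℓ : Fin L) (k : ℤ), Int.fract (e + (k:ℝ) * ξ - b ℓ) = 0 → k.natAbs < N := by
    intro ℓ k hk
    have hex : ∃ k : ℤ, Int.fract (e + (k:ℝ) * ξ - b ℓ) = 0 := ⟨k, hk⟩
    have hkc : k = hex.choose := unique_hit hξ e (b ℓ) hk hex.choose_spec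
    have hmem : hex.choose.natAbs ∈ W := by
      rw [hW]
      refine Finset.mem_biUnion.2 ⟨ℓ, Finset.mem_univ ℓ, Finset.mem_union_right _ ?_⟩
      rw [dif_pos hex]
      exact Finset.mem_singleton_self _
    have hle : id hex.choose.natAbs ≤ W.sup id := Finset.le_sup hmem
    simp only [id] at hle
    omega
  have hjmp : ∀ k : ℤ, (N : ℤ) ≤ |k| →
      psiL a b (e + (k:ℝ) * ξ) = psi a b (e + (k:ℝ) * ξ) := by
    intro k hk
    rw [Int.abs_eq_natAbs] at hk
    have h0 : psiL a b (e + (k:ℝ) * ξ) - psi a b (e + (k:ℝ) * ξ) = 0 := by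
      rw [jmp_eq]
      apply Finset.sum_eq_zero
      intro ℓ _
      rw [if_neg, if_neg]
      · ring
      · intro hc
        have := hwa ℓ k hc
        omega
      · intro hc
        have := hwb ℓ k hc
        omega
    linarith
  have hwin := window_sum_zero hξ J hJcoc hJlim e N hjmp
  have hwin2 : ∑ j ∈ Finset.range (2 * N), ∑ ℓ : Fin L,
      ((if Int.fract (e + (((j:ℤ) - (N:ℤ) : ℤ) : ℝ) * ξ - b ℓ) = 0 then (1:ℝ) else 0) -
       (if Int.fract (e + (((j:ℤ) - (N:ℤ) : ℤ) : ℝ) * ξ - a ℓ) = 0 then (1:ℝ) else 0)) = 0 := by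
    rw [Finset.sum_congr rfl (fun j (_ : j ∈ Finset.range (2*N)) =>
      jmp_eq a b (e + (((j:ℤ) - (N:ℤ) : ℤ) : ℝ) * ξ))] at hwin
    exact hwin
  rw [Finset.sum_comm] at hwin2
  have hsingle : ∀ ℓ : Fin L, ∑ j ∈ Finset.range (2 * N),
      ((if Int.fract (e + (((j:ℤ) - (N:ℤ) : ℤ) : ℝ) * ξ - b ℓ) = 0 then (1:ℝ) else 0) -
       (if Int.fract (e + (((j:ℤ) - (N:ℤ) : ℤ) : ℝ) * ξ - a ℓ) = 0 then (1:ℝ) else 0)) =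
      (if (∃ k : ℤ, Int.fract (e + (k:ℝ) * ξ - b ℓ) = 0) then (1:ℝ) else 0) -
      (if (∃ k : ℤ, Int.fract (e + (k:ℝ) * ξ - a ℓ) = 0) then (1:ℝ) else 0) := by
    intro ℓ
    rw [Finset.sum_sub_distrib,
      single_count hξ e (b ℓ) N (hwb ℓ), single_count hξ e (a ℓ) N (hwa ℓ)]
  rw [Finset.sum_congr rfl (fun ℓ _ => hsingle ℓ), Finset.sum_sub_distrib,
    Finset.sum_boole, Finset.sum_boole] at hwin2
  have : ((Finset.univ.filter
      (fun ℓ : Fin L => ∃ k : ℤ, Int.fract (e + (k:ℝ) * ξ - b ℓ) = 0)).card : ℝ) =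
      ((Finset.univ.filter
      (fun ℓ : Fin L => ∃ k : ℤ, Int.fract (e + (k:ℝ) * ξ - a ℓ) = 0)).card : ℝ) := by
    linarith
  exact_mod_cast this.symm

end OrenAux

open OrenAux in
/-- Oren's theorem, necessity direction: if the sum of the local discrepancies of
the disjoint intervals `[a ℓ, b ℓ)` is uniformly bounded, then there is a
permutation `σ` and integers `k ℓ` with `b (σ ℓ) - a ℓ ≡ (k ℓ) ξ (mod ℤ)`. -/
theorem oren_necessity (ξ x : ℝ) (hξ : Irrational ξ) (L : ℕ) (a b : Fin L → ℝ)
    (ha : ∀ ℓ, 0 ≤ a ℓ) (hab : ∀ ℓ, a ℓ ≤ b ℓ) (hb : ∀ ℓ, b ℓ ≤ 1)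
    (hdisj : Pairwise (fun ℓ ℓ' => Disjoint (Set.Ico (a ℓ) (b ℓ)) (Set.Ico (a ℓ') (b ℓ'))))
    (hbd : ∃ C : ℝ, 0 < C ∧ ∀ N : ℕ, |∑ ℓ, localDisc ξ x (a ℓ) (b ℓ) N| < C) :
    ∃ σ : Equiv.Perm (Fin L), ∀ ℓ, ∃ k m : ℤ, b (σ ℓ) - a ℓ = k * ξ + m := by
  obtain ⟨C, hC, hbd⟩ := hbd
  classical
  let s : Setoid ℝ := ⟨fun u v => ∃ k m : ℤ, v - u = (k : ℝ) * ξ + m, by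
    constructor
    · intro u
      exact ⟨0, 0, by simp⟩
    · rintro u v ⟨k, m, hkm⟩
      exact ⟨-k, -m, by push_cast; linarith⟩
    · rintro u v w ⟨k, m, hkm⟩ ⟨k', m', hkm'⟩
      exact ⟨k + k', m + m', by push_cast; linarith⟩⟩
  let A : Fin L → Quotient s := fun ℓ => Quotient.mk s (a ℓ)
  let B : Fin L → Quotient s := fun ℓ => Quotient.mk s (b ℓ)
  have hbridge : ∀ c e : ℝ, (Quotient.mk s c = Quotient.mk s e) ↔
      (∃ k : ℤ, Int.fract (e + (k:ℝ) * ξ - c) = 0) := by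
    intro c e
    constructor
    · intro h
      obtain ⟨k, m, hkm⟩ := Quotient.exact h
      refine ⟨-k, ?_⟩
      have harg : e + ((-k : ℤ) : ℝ) * ξ - c = ((m : ℤ) : ℝ) := by push_cast; linarith
      rw [harg, Int.fract_intCast]
    · rintro ⟨k, hk⟩
      apply Quotient.sound
      have hfr : Int.fract (e + (k:ℝ) * ξ - c) =
          (e + (k:ℝ) * ξ - c) - (⌊e + (k:ℝ) * ξ - c⌋ : ℝ) := rfl
      rw [hfr] at hk
      exact ⟨-k, ⌊e + (k:ℝ) * ξ - c⌋, by push_cast; linarith⟩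
  have hfib : ∀ q : Quotient s, Fintype.card {ℓ // A ℓ = q} = Fintype.card {ℓ // B ℓ = q} := by
    intro q
    obtain ⟨e, rfl⟩ := Quotient.exists_rep q
    rw [Fintype.card_subtype, Fintype.card_subtype]
    have h1 : Finset.univ.filter (fun ℓ => A ℓ = Quotient.mk s e) =
        Finset.univ.filter (fun ℓ : Fin L => ∃ k : ℤ, Int.fract (e + (k:ℝ) * ξ - a ℓ) = 0) := by
      apply Finset.filter_congr
      intro ℓ _
      exact hbridge (a ℓ) e
    have h2 : Finset.univ.filter (fun ℓ => B ℓ = Quotient.mk s e) =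
        Finset.univ.filter (fun ℓ : Fin L => ∃ k : ℤ, Int.fract (e + (k:ℝ) * ξ - b ℓ) = 0) := by
      apply Finset.filter_congr
      intro ℓ _
      exact hbridge (b ℓ) e
    rw [h1, h2]
    exact count_balance hξ a b ha hab hb C hC hbd e
  let φ : ∀ q : Quotient s, {ℓ // A ℓ = q} ≃ {ℓ // B ℓ = q} :=
    fun q => Fintype.equivOfCardEq (hfib q)
  refine ⟨(Equiv.sigmaFiberEquiv A).symm.trans
    ((Equiv.sigmaCongrRight φ).trans (Equiv.sigmaFiberEquiv B)), ?_⟩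
  intro ℓ
  have hBA : B (((Equiv.sigmaFiberEquiv A).symm.trans
      ((Equiv.sigmaCongrRight φ).trans (Equiv.sigmaFiberEquiv B))) ℓ) = A ℓ :=
    (φ (A ℓ) ⟨ℓ, rfl⟩).2
  obtain ⟨k, m, hkm⟩ := Quotient.exact hBA
  exact ⟨-k, -m, by push_cast; linarith⟩
end

section
/- Let Y ⊂ ℝ be a discrete set and δ > 0. Then Y is bounded-displacement equivalent to a lattice of covolume δ⁻¹ (i.e., to δ⁻¹ℤ) if and only if there exists c > 0 such that for every finite interval I ⊂ ℝ, |#(I ∩ Y) − δ·Length(I)| < c. -/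
private lemma lat_inj {δ : ℝ} (hδ : 0 < δ) :
    Function.Injective (fun n : ℤ => δ⁻¹ * (n : ℝ)) := by
  intro m n h
  simp only at h
  have : (m : ℝ) = n := mul_left_cancel₀ (inv_ne_zero hδ.ne') h
  exact_mod_cast this

private lemma lat_eq {δ : ℝ} (hδ : 0 < δ) (a b : ℝ) :
    {x : ℝ | ∃ n : ℤ, x = δ⁻¹ * n} ∩ Set.Icc a b
      = (fun n : ℤ => δ⁻¹ * (n : ℝ)) '' ↑(Finset.Icc ⌈δ * a⌉ ⌊δ * b⌋) := by
  ext x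
  simp only [Set.mem_inter_iff, Set.mem_setOf_eq, Set.mem_Icc, Set.mem_image,
    Finset.coe_Icc, Set.mem_Icc]
  constructor
  · rintro ⟨⟨n, rfl⟩, ha, hb⟩
    refine ⟨n, ⟨Int.ceil_le.mpr ?_, Int.le_floor.mpr ?_⟩, rfl⟩
    · have h := mul_le_mul_of_nonneg_left ha hδ.le
      rwa [show δ * (δ⁻¹ * (n : ℝ)) = n by field_simp] at h
    · have h := mul_le_mul_of_nonneg_left hb hδ.le
      rwa [show δ * (δ⁻¹ * (n : ℝ)) = n by field_simp] at h
  · rintro ⟨n, ⟨hn1, hn2⟩, rfl⟩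
    have h1 : δ * a ≤ n := Int.ceil_le.mp hn1
    have h2 : (n : ℝ) ≤ δ * b := Int.le_floor.mp hn2
    refine ⟨⟨n, rfl⟩, ?_, ?_⟩
    · have h := mul_le_mul_of_nonneg_left h1 (inv_pos.mpr hδ).le
      rwa [show δ⁻¹ * (δ * a) = a by field_simp] at h
    · have h := mul_le_mul_of_nonneg_left h2 (inv_pos.mpr hδ).le
      rwa [show δ⁻¹ * (δ * b) = b by field_simp] at h

private lemma lat_fin {δ : ℝ} (hδ : 0 < δ) (a b : ℝ) :
    ({x : ℝ | ∃ n : ℤ, x = δ⁻¹ * n} ∩ Set.Icc a b).Finite := by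
  rw [lat_eq hδ]
  exact (Finset.Icc _ _).finite_toSet.image _

private lemma lat_ncard {δ : ℝ} (hδ : 0 < δ) (a b : ℝ) :
    ({x : ℝ | ∃ n : ℤ, x = δ⁻¹ * n} ∩ Set.Icc a b).ncard
      = (⌊δ * b⌋ + 1 - ⌈δ * a⌉).toNat := by
  rw [lat_eq hδ, Set.ncard_image_of_injective _ (lat_inj hδ), Set.ncard_coe_finset,
    Int.card_Icc]

private lemma lat_le {δ : ℝ} (hδ : 0 < δ) {a b : ℝ} (hab : a ≤ b) :
    (({x : ℝ | ∃ n : ℤ, x = δ⁻¹ * n} ∩ Set.Icc a b).ncard : ℝ) ≤ δ * (b - a) + 1 := by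
  rw [lat_ncard hδ]
  have hδab : 0 ≤ δ * (b - a) := mul_nonneg hδ.le (sub_nonneg.mpr hab)
  rcases le_or_gt (⌊δ * b⌋ + 1 - ⌈δ * a⌉) 0 with h | h
  · rw [Int.toNat_of_nonpos h]; simpa using by linarith
  · have hcast : ((⌊δ * b⌋ + 1 - ⌈δ * a⌉).toNat : ℝ) = ((⌊δ * b⌋ : ℝ) + 1 - ⌈δ * a⌉) := by
      rw [show ((⌊δ * b⌋ + 1 - ⌈δ * a⌉).toNat : ℝ) = (((⌊δ * b⌋ + 1 - ⌈δ * a⌉).toNat : ℤ) : ℝ) by push_cast; ring,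
        Int.toNat_of_nonneg h.le]
      push_cast; ring
    rw [hcast]
    have h1 := Int.floor_le (δ * b)
    have h2 := Int.le_ceil (δ * a)
    have : δ * (b - a) = δ * b - δ * a := by ring
    linarith

private lemma lat_ge {δ : ℝ} (hδ : 0 < δ) {a b : ℝ} (hab : a ≤ b) :
    δ * (b - a) - 1 ≤ (({x : ℝ | ∃ n : ℤ, x = δ⁻¹ * n} ∩ Set.Icc a b).ncard : ℝ) := by
  rw [lat_ncard hδ]
  have h0 : ((⌊δ * b⌋ + 1 - ⌈δ * a⌉ : ℤ) : ℝ) ≤ (((⌊δ * b⌋ + 1 - ⌈δ * a⌉).toNat : ℤ) : ℝ) := by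
    exact_mod_cast Int.self_le_toNat _
  have h1 := Int.sub_one_lt_floor (δ * b)
  have h2 := Int.ceil_lt_add_one (δ * a)
  have h3 : δ * (b - a) = δ * b - δ * a := by ring
  push_cast at h0 ⊢
  linarith

/-- Two subsets of ℝ are bounded-displacement (BD) equivalent if there is a
bijection between them moving every point a uniformly bounded distance. -/
def BDEquiv (Y₁ Y₂ : Set ℝ) : Prop :=
  ∃ φ : Y₁ ≃ Y₂, ∃ M : ℝ, ∀ y : Y₁, |(y : ℝ) - (φ y : ℝ)| ≤ M

/-- Laczkovich's theorem in dimension one: a discrete (locally finite) set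
`Y ⊆ ℝ` is BD-equivalent to the lattice `δ⁻¹ℤ` of covolume `δ⁻¹` if and only if
its discrepancy `|#(I ∩ Y) − δ·Length I|` is uniformly bounded over all finite
intervals `I`. -/
theorem laczkovich_dim_one (Y : Set ℝ) (δ : ℝ) (hδ : 0 < δ)
    (hY : ∀ s t : ℝ, (Y ∩ Set.Icc s t).Finite) :
    BDEquiv Y {x : ℝ | ∃ n : ℤ, x = δ⁻¹ * n} ↔
      ∃ c : ℝ, 0 < c ∧ ∀ s t : ℝ, s ≤ t →
        |(Nat.card ↥(Y ∩ Set.Icc s t) : ℝ) - δ * (t - s)| < c := by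
  constructor
  · intro h
    classical
    obtain ⟨e, M, hM⟩ := h
    set M' : ℝ := |M| + 1 with hM'def
    have hM'pos : 0 < M' := by positivity
    have hMM' : M ≤ M' := le_trans (le_abs_self M) (by linarith)
    set F : ℝ → ℝ := fun x => if h : x ∈ Y then (e ⟨x, h⟩ : ℝ) else 0 with hF
    set G : ℝ → ℝ := fun x =>
      if h : x ∈ {x : ℝ | ∃ n : ℤ, x = δ⁻¹ * n} then (e.symm ⟨x, h⟩ : ℝ) else 0 with hG
    have hFinj : Set.InjOn F Y := by
      intro x₁ h₁ x₂ h₂ h12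
      rw [hF] at h12
      simp only [dif_pos h₁, dif_pos h₂] at h12
      have := e.injective (Subtype.ext h12)
      exact congrArg Subtype.val this
    have hGinj : Set.InjOn G {x : ℝ | ∃ n : ℤ, x = δ⁻¹ * n} := by
      intro x₁ h₁ x₂ h₂ h12
      rw [hG] at h12
      simp only [dif_pos h₁, dif_pos h₂] at h12
      have := e.symm.injective (Subtype.ext h12)
      exact congrArg Subtype.val this
    have hFbd : ∀ x ∈ Y, |x - F x| ≤ M' := by
      intro x hx
      rw [hF]; simp only [dif_pos hx]
      exact le_trans (hM ⟨x, hx⟩) hMM'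
    have hGbd : ∀ x ∈ {x : ℝ | ∃ n : ℤ, x = δ⁻¹ * n}, |G x - x| ≤ M' := by
      intro x hx
      rw [hG]; simp only [dif_pos hx]
      have hb := hM (e.symm ⟨x, hx⟩)
      rw [Equiv.apply_symm_apply] at hb
      exact le_trans hb hMM'
    have hFmem : ∀ x ∈ Y, F x ∈ ({x : ℝ | ∃ n : ℤ, x = δ⁻¹ * n}) := by
      intro x hx; rw [hF]; simp only [dif_pos hx]; exact (e ⟨x, hx⟩).2
    have hGmem : ∀ x ∈ {x : ℝ | ∃ n : ℤ, x = δ⁻¹ * n}, G x ∈ Y := by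
      intro x hx; rw [hG]; simp only [dif_pos hx]; exact (e.symm ⟨x, hx⟩).2
    refine ⟨2 * δ * M' + 2, by positivity, ?_⟩
    intro s t hst
    rw [Nat.card_coe_set_eq, abs_lt]
    have hub : ((Y ∩ Set.Icc s t).ncard : ℝ) ≤ δ * (t - s) + 2 * δ * M' + 1 := by
      have hcard : (Y ∩ Set.Icc s t).ncard
          ≤ ({x : ℝ | ∃ n : ℤ, x = δ⁻¹ * n} ∩ Set.Icc (s - M') (t + M')).ncard := by
        refine Set.ncard_le_ncard_of_injOn F ?_ (hFinj.mono Set.inter_subset_left)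
          (lat_fin hδ _ _)
        rintro x ⟨hxY, hx1, hx2⟩
        have habs := abs_le.mp (hFbd x hxY)
        exact ⟨hFmem x hxY, by constructor <;> [linarith [habs.2]; linarith [habs.1]]⟩
      have h1 := lat_le hδ (a := s - M') (b := t + M') (by linarith)
      have h2 : ((Y ∩ Set.Icc s t).ncard : ℝ)
          ≤ (({x : ℝ | ∃ n : ℤ, x = δ⁻¹ * n} ∩ Set.Icc (s - M') (t + M')).ncard : ℝ) := by
        exact_mod_cast hcard
      nlinarith
    have hlb : δ * (t - s) - 2 * δ * M' - 1 ≤ ((Y ∩ Set.Icc s t).ncard : ℝ) := by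
      rcases le_or_gt (2 * M') (t - s) with h2M | h2M
      · have hcard : ({x : ℝ | ∃ n : ℤ, x = δ⁻¹ * n} ∩ Set.Icc (s + M') (t - M')).ncard
            ≤ (Y ∩ Set.Icc s t).ncard := by
          refine Set.ncard_le_ncard_of_injOn G ?_ (hGinj.mono Set.inter_subset_left) (hY s t)
          rintro x ⟨hxL, hx1, hx2⟩
          have habs := abs_le.mp (hGbd x hxL)
          exact ⟨hGmem x hxL, by constructor <;> [linarith [habs.1]; linarith [habs.2]]⟩
        have h1 := lat_ge hδ (a := s + M') (b := t - M') (by linarith)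
        have h2 : (({x : ℝ | ∃ n : ℤ, x = δ⁻¹ * n} ∩ Set.Icc (s + M') (t - M')).ncard : ℝ)
            ≤ ((Y ∩ Set.Icc s t).ncard : ℝ) := by exact_mod_cast hcard
        nlinarith
      · have h0 : (0 : ℝ) ≤ ((Y ∩ Set.Icc s t).ncard : ℝ) := Nat.cast_nonneg _
        nlinarith
    constructor <;> linarith
  · intro h
    classical
    obtain ⟨c, hc, hdisc⟩ := h
    simp only [Nat.card_coe_set_eq] at hdisc
    have hfin : ∀ a b : ℝ, (Y ∩ Set.Ioc a b).Finite := fun a b =>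
      (hY a b).subset (Set.inter_subset_inter_right _ Set.Ioc_subset_Icc_self)
    have hfin' : ∀ a b : ℝ, (Y ∩ Set.Ico a b).Finite := fun a b =>
      (hY a b).subset (Set.inter_subset_inter_right _ Set.Ico_subset_Icc_self)
    set N : ℝ → ℤ := fun y =>
      ((Y ∩ Set.Ioc 0 y).ncard : ℤ) - ((Y ∩ Set.Ioc y 0).ncard : ℤ) with hN
    -- additivity
    have hadd : ∀ a b : ℝ, a ≤ b → N b = N a + (Y ∩ Set.Ioc a b).ncard := by
      intro a b hab
      have hdisj : ∀ u v w : ℝ, Disjoint (Y ∩ Set.Ioc u v) (Y ∩ Set.Ioc v w) :=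
        fun u v w => (Set.Ioc_disjoint_Ioc_of_le le_rfl).mono Set.inter_subset_right Set.inter_subset_right
      rcases le_or_gt 0 a with h0a | h0a
      · have e1 : Set.Ioc a (0 : ℝ) = ∅ := Set.Ioc_eq_empty (by simpa using le_trans h0a (le_refl a))
        have e2 : Set.Ioc b (0 : ℝ) = ∅ := Set.Ioc_eq_empty (by simp; linarith)
        have e3 : Y ∩ Set.Ioc 0 b = (Y ∩ Set.Ioc 0 a) ∪ (Y ∩ Set.Ioc a b) := by
          rw [← Set.inter_union_distrib_left, Set.Ioc_union_Ioc_eq_Ioc h0a hab]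
        rw [hN]
        simp only [e1, e2, Set.inter_empty, Set.ncard_empty, e3,
          Set.ncard_union_eq (hdisj 0 a b) (hfin 0 a) (hfin a b)]
        push_cast; ring
      rcases le_or_gt b 0 with hb0 | hb0
      · have e1 : Set.Ioc (0 : ℝ) a = ∅ := Set.Ioc_eq_empty (by simp; linarith)
        have e2 : Set.Ioc (0 : ℝ) b = ∅ := Set.Ioc_eq_empty (by simp; linarith)
        have e3 : Y ∩ Set.Ioc a 0 = (Y ∩ Set.Ioc a b) ∪ (Y ∩ Set.Ioc b 0) := by
          rw [← Set.inter_union_distrib_left, Set.Ioc_union_Ioc_eq_Ioc hab hb0]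
        rw [hN]
        simp only [e1, e2, Set.inter_empty, Set.ncard_empty, e3,
          Set.ncard_union_eq (hdisj a b 0) (hfin a b) (hfin b 0)]
        push_cast; ring
      · have e1 : Set.Ioc (0 : ℝ) a = ∅ := Set.Ioc_eq_empty (by simp; linarith)
        have e2 : Set.Ioc b (0 : ℝ) = ∅ := Set.Ioc_eq_empty (by simp; linarith)
        have e3 : Y ∩ Set.Ioc a b = (Y ∩ Set.Ioc a 0) ∪ (Y ∩ Set.Ioc 0 b) := by
          rw [← Set.inter_union_distrib_left, Set.Ioc_union_Ioc_eq_Ioc h0a.le hb0.le]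
        rw [hN]
        simp only [e1, e2, Set.inter_empty, Set.ncard_empty, e3,
          Set.ncard_union_eq (hdisj a 0 b) (hfin a 0) (hfin 0 b)]
        push_cast; ring
    -- estimate
    have hest : ∀ y : ℝ, |(N y : ℝ) - δ * y| < c + 1 := by
      intro y
      rcases le_or_gt y 0 with hy | hy
      · have e1 : Set.Ioc (0 : ℝ) y = ∅ := Set.Ioc_eq_empty (by simp; linarith)
        have h1 := hdisc y 0 hy
        have sub1 : (Y ∩ Set.Ioc y 0).ncard ≤ (Y ∩ Set.Icc y 0).ncard :=
          Set.ncard_le_ncard (Set.inter_subset_inter_right _ Set.Ioc_subset_Icc_self) (hY y 0)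
        have sub2 : (Y ∩ Set.Icc y 0).ncard ≤ (Y ∩ Set.Ioc y 0).ncard + 1 := by
          have hsub : Y ∩ Set.Icc y 0 ⊆ insert y (Y ∩ Set.Ioc y 0) := by
            rintro x ⟨hxY, hx1, hx2⟩
            rcases eq_or_lt_of_le hx1 with rfl | hlt
            · exact Set.mem_insert _ _
            · exact Set.mem_insert_of_mem _ ⟨hxY, hlt, hx2⟩
          exact le_trans (Set.ncard_le_ncard hsub ((hfin y 0).insert y))
            (Set.ncard_insert_le _ _)
        rw [hN]
        simp only [e1, Set.inter_empty, Set.ncard_empty]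
        rw [abs_lt] at h1 ⊢
        have c1 : ((Y ∩ Set.Ioc y 0).ncard : ℝ) ≤ ((Y ∩ Set.Icc y 0).ncard : ℝ) := by
          exact_mod_cast sub1
        have c2 : ((Y ∩ Set.Icc y 0).ncard : ℝ) ≤ ((Y ∩ Set.Ioc y 0).ncard : ℝ) + 1 := by
          exact_mod_cast sub2
        push_cast
        constructor <;> nlinarith
      · have e1 : Set.Ioc y (0 : ℝ) = ∅ := Set.Ioc_eq_empty (by simp; linarith)
        have h1 := hdisc 0 y hy.le
        have sub1 : (Y ∩ Set.Ioc 0 y).ncard ≤ (Y ∩ Set.Icc 0 y).ncard :=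
          Set.ncard_le_ncard (Set.inter_subset_inter_right _ Set.Ioc_subset_Icc_self) (hY 0 y)
        have sub2 : (Y ∩ Set.Icc 0 y).ncard ≤ (Y ∩ Set.Ioc 0 y).ncard + 1 := by
          have hsub : Y ∩ Set.Icc 0 y ⊆ insert 0 (Y ∩ Set.Ioc 0 y) := by
            rintro x ⟨hxY, hx1, hx2⟩
            rcases eq_or_lt_of_le hx1 with hx | hlt
            · exact hx ▸ Set.mem_insert _ _
            · exact Set.mem_insert_of_mem _ ⟨hxY, hlt, hx2⟩
          exact le_trans (Set.ncard_le_ncard hsub ((hfin 0 y).insert 0))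
            (Set.ncard_insert_le _ _)
        rw [hN]
        simp only [e1, Set.inter_empty, Set.ncard_empty]
        rw [abs_lt] at h1 ⊢
        have c1 : ((Y ∩ Set.Ioc 0 y).ncard : ℝ) ≤ ((Y ∩ Set.Icc 0 y).ncard : ℝ) := by
          exact_mod_cast sub1
        have c2 : ((Y ∩ Set.Icc 0 y).ncard : ℝ) ≤ ((Y ∩ Set.Ioc 0 y).ncard : ℝ) + 1 := by
          exact_mod_cast sub2
        push_cast
        constructor <;> nlinarith

    -- nonemptiness window
    set T : ℝ := (c + 1) / δ with hT
    have hTpos : 0 < T := by positivity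
    have hδT : δ * T = c + 1 := by rw [hT]; field_simp
    have htwo : ∀ a : ℝ, 2 ≤ (Y ∩ Set.Icc a (a + T)).ncard := by
      intro a
      have h1 := hdisc a (a + T) (by linarith)
      rw [abs_lt] at h1
      have : (1 : ℝ) < ((Y ∩ Set.Icc a (a + T)).ncard : ℝ) := by
        have : δ * (a + T - a) = c + 1 := by rw [← hδT]; ring
        linarith
      exact_mod_cast Nat.one_lt_cast.mp (by exact_mod_cast this)
    have hsucc : ∀ a : ℝ, ∃ y' ∈ Y, a < y' ∧ Y ∩ Set.Ioc a y' = {y'} := by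
      intro a
      have hne : (Y ∩ Set.Ioc a (a + T)).Nonempty := by
        rw [← Set.ncard_pos (hfin a (a + T))]
        have hsub : Y ∩ Set.Icc a (a + T) ⊆ insert a (Y ∩ Set.Ioc a (a + T)) := by
          rintro x ⟨hxY, hx1, hx2⟩
          rcases eq_or_lt_of_le hx1 with rfl | hlt
          · exact Set.mem_insert _ _
          · exact Set.mem_insert_of_mem _ ⟨hxY, hlt, hx2⟩
        have := le_trans (Set.ncard_le_ncard hsub ((hfin a (a + T)).insert a))
          (Set.ncard_insert_le _ _)
        have h2 := htwo a
        omega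
      obtain ⟨y', hy'S, hy'min⟩ := Set.exists_min_image _ id (hfin a (a + T)) hne
      refine ⟨y', hy'S.1, hy'S.2.1, ?_⟩
      ext x
      simp only [Set.mem_inter_iff, Set.mem_Ioc, Set.mem_singleton_iff]
      constructor
      · rintro ⟨hxY, hax, hxy'⟩
        exact le_antisymm hxy' (hy'min x ⟨hxY, hax, le_trans hxy' hy'S.2.2⟩)
      · rintro rfl
        exact ⟨hy'S.1, hy'S.2.1, le_refl _⟩
    have hpred : ∀ y ∈ Y, ∃ y' ∈ Y, y' < y ∧ Y ∩ Set.Ioc y' y = {y} := by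
      intro y hyY
      have hne : (Y ∩ Set.Ico (y - T) y).Nonempty := by
        rw [← Set.ncard_pos (hfin' (y - T) y)]
        have hsub : Y ∩ Set.Icc (y - T) y ⊆ insert y (Y ∩ Set.Ico (y - T) y) := by
          rintro x ⟨hxY, hx1, hx2⟩
          rcases eq_or_lt_of_le hx2 with rfl | hlt
          · exact Set.mem_insert _ _
          · exact Set.mem_insert_of_mem _ ⟨hxY, hx1, hlt⟩
        have h3 : Y ∩ Set.Icc (y - T) y = Y ∩ Set.Icc (y - T) (y - T + T) := by
          norm_num
        have h2 := htwo (y - T)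
        rw [← h3] at h2
        have := le_trans (Set.ncard_le_ncard hsub ((hfin' (y - T) y).insert y))
          (Set.ncard_insert_le _ _)
        omega
      obtain ⟨y', hy'S, hy'max⟩ := Set.exists_max_image _ id (hfin' (y - T) y) hne
      refine ⟨y', hy'S.1, hy'S.2.2, ?_⟩
      ext x
      simp only [Set.mem_inter_iff, Set.mem_Ioc, Set.mem_singleton_iff]
      constructor
      · rintro ⟨hxY, hy'x, hxy⟩
        rcases eq_or_lt_of_le hxy with rfl | hlt
        · rfl
        · exact absurd (hy'max x ⟨hxY, le_trans hy'S.2.1 hy'x.le, hlt⟩) (not_le.mpr hy'x)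
      · rintro rfl
        exact ⟨hyY, hy'S.2.2, le_refl _⟩
    -- successor/predecessor increment N by one
    have hstep : ∀ a : ℝ, ∃ y' ∈ Y, N y' = N a + 1 := by
      intro a
      obtain ⟨y', hy'Y, hlt, heq⟩ := hsucc a
      refine ⟨y', hy'Y, ?_⟩
      rw [hadd a y' hlt.le, heq, Set.ncard_singleton]
      push_cast; ring
    have hstepd : ∀ y ∈ Y, ∃ y' ∈ Y, N y' = N y - 1 := by
      intro y hyY
      obtain ⟨y', hy'Y, hlt, heq⟩ := hpred y hyY
      refine ⟨y', hy'Y, ?_⟩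
      have h1 := hadd y' y hlt.le
      rw [heq, Set.ncard_singleton] at h1
      omega
    -- monotonicity and injectivity of N on Y
    have hmono : ∀ a b : ℝ, a < b → b ∈ Y → N a < N b := by
      intro a b hab hbY
      have h1 := hadd a b hab.le
      have h2 : 0 < (Y ∩ Set.Ioc a b).ncard := by
        rw [Set.ncard_pos (hfin a b)]
        exact ⟨b, hbY, hab, le_refl _⟩
      omega
    have hinj : ∀ y₁ ∈ Y, ∀ y₂ ∈ Y, N y₁ = N y₂ → y₁ = y₂ := by
      intro y₁ h₁ y₂ h₂ h12
      rcases lt_trichotomy y₁ y₂ with hlt | heq | hlt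
      · exact absurd h12 (hmono y₁ y₂ hlt h₂).ne
      · exact heq
      · exact absurd h12.symm (hmono y₂ y₁ hlt h₁).ne
    -- surjectivity of N on Y
    obtain ⟨y₀, hy₀Y, -, -⟩ := hsucc 0
    have hkey : ∀ n : ℤ, ∃ y ∈ Y, N y = N y₀ + n := by
      intro n
      induction n using Int.induction_on with
      | zero => exact ⟨y₀, hy₀Y, by ring⟩
      | succ n ih =>
        obtain ⟨y, hyY, hNy⟩ := ih
        obtain ⟨y', hy'Y, hNy'⟩ := hstep y
        exact ⟨y', hy'Y, by omega⟩
      | pred n ih =>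
        obtain ⟨y, hyY, hNy⟩ := ih
        obtain ⟨y', hy'Y, hNy'⟩ := hstepd y hyY
        exact ⟨y', hy'Y, by omega⟩
    have hsurj : ∀ n : ℤ, ∃ y ∈ Y, N y = n := by
      intro n
      obtain ⟨y, hyY, hNy⟩ := hkey (n - N y₀)
      exact ⟨y, hyY, by omega⟩
    -- build the equivalence
    set f : ↥Y → ↥{x : ℝ | ∃ n : ℤ, x = δ⁻¹ * n} :=
      fun y => ⟨δ⁻¹ * N y, ⟨N (y : ℝ), rfl⟩⟩ with hf
    have hfinj : Function.Injective f := by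
      intro a b hab
      have h1 : δ⁻¹ * (N (a : ℝ) : ℝ) = δ⁻¹ * (N (b : ℝ) : ℝ) := congrArg Subtype.val hab
      have h2 : (N (a : ℝ) : ℝ) = (N (b : ℝ) : ℝ) :=
        mul_left_cancel₀ (inv_ne_zero hδ.ne') h1
      have h3 : N (a : ℝ) = N (b : ℝ) := by exact_mod_cast h2
      exact Subtype.ext (hinj _ a.2 _ b.2 h3)
    have hfsurj : Function.Surjective f := by
      rintro ⟨x, n, hx⟩
      obtain ⟨y, hyY, hNy⟩ := hsurj n
      exact ⟨⟨y, hyY⟩, Subtype.ext (by simp only [hf, hNy, hx])⟩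
    refine ⟨Equiv.ofBijective f ⟨hfinj, hfsurj⟩, δ⁻¹ * (c + 1), ?_⟩
    intro y
    have h1 : (y : ℝ) - (Equiv.ofBijective f ⟨hfinj, hfsurj⟩ y : ℝ)
        = δ⁻¹ * (δ * (y : ℝ) - (N (y : ℝ) : ℝ)) := by
      show (y : ℝ) - δ⁻¹ * (N (y : ℝ) : ℝ) = _
      field_simp
    rw [h1, abs_mul, abs_of_pos (inv_pos.mpr hδ)]
    have h2 : |δ * (y : ℝ) - (N (y : ℝ) : ℝ)| ≤ c + 1 := by
      rw [abs_sub_comm]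
      exact (hest (y : ℝ)).le
    exact mul_le_mul_of_nonneg_left h2 (inv_pos.mpr hδ).le
end

section
/- Let Y ⊂ ℝ be discrete. If there exists δ > 0 and c > 0 such that |#(I ∩ Y) − δ·Length(I)| < c for all finite intervals I, then the bijection φ: Y → δ⁻¹ℤ given by sending the n-th smallest point of Y in [0,∞) to δ⁻¹n (and symmetrically for negative points) has bounded displacement: sup_{y∈Y} |y − φ(y)| < ∞. -/
/-- Explicit direction of Laczkovich's one-dimensional theorem: if a discrete set
`Y ⊆ ℝ`, unbounded in both directions, has discrepancy uniformly bounded by `c`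
with respect to the density `δ`, then the order-preserving enumeration
`e : ℤ ≃o Y` (normalized so that `e 0` is the smallest point of `Y` in `[0,∞)`)
satisfies `sup_n |e n − δ⁻¹ n| < ∞`; i.e. the bijection matching the `n`-th point
of `Y` with `δ⁻¹ n` has bounded displacement. -/
theorem laczkovich_explicit (Y : Set ℝ) (δ c : ℝ) (hδ : 0 < δ) (hc : 0 < c)
    (hfin : ∀ s t : ℝ, (Y ∩ Set.Icc s t).Finite)
    (hunbdd_above : ∀ R : ℝ, ∃ y ∈ Y, R < y)
    (hunbdd_below : ∀ R : ℝ, ∃ y ∈ Y, y < R)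
    (hdisc : ∀ s t : ℝ, s ≤ t →
      |(Nat.card ↥(Y ∩ Set.Icc s t) : ℝ) - δ * (t - s)| < c)
    (e : ℤ ≃o Y) (he0 : 0 ≤ (e 0 : ℝ)) (heneg : ((e (-1) : ℝ)) < 0) :
    ∃ M : ℝ, ∀ n : ℤ, |(e n : ℝ) - δ⁻¹ * n| ≤ M := by
  have hmono : ∀ {k l : ℤ}, k ≤ l → (e k : ℝ) ≤ (e l : ℝ) := by
    intro k l h
    exact_mod_cast e.monotone h
  have hinj : Function.Injective (fun k : ℤ => (e k : ℝ)) := by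
    intro a b h
    exact e.injective (Subtype.ext h)
  -- cardinality of Y ∩ [e m, e n]
  have hcard : ∀ m n : ℤ, m ≤ n →
      (Nat.card ↥(Y ∩ Set.Icc (e m : ℝ) (e n : ℝ)) : ℝ) = ((n : ℝ) - m + 1) := by
    intro m n hmn
    have hset : Y ∩ Set.Icc (e m : ℝ) (e n : ℝ) = (fun k : ℤ => (e k : ℝ)) '' Set.Icc m n := by
      ext y
      constructor
      · rintro ⟨hy, h1, h2⟩
        refine ⟨e.symm ⟨y, hy⟩, ⟨?_, ?_⟩, by simp⟩
        · have : e m ≤ e (e.symm ⟨y, hy⟩) := by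
            rw [e.apply_symm_apply]; exact Subtype.coe_le_coe.mp h1
          exact e.le_iff_le.mp this
        · have : e (e.symm ⟨y, hy⟩) ≤ e n := by
            rw [e.apply_symm_apply]; exact Subtype.coe_le_coe.mp h2
          exact e.le_iff_le.mp this
      · rintro ⟨k, ⟨hk1, hk2⟩, rfl⟩
        exact ⟨(e k).2, hmono hk1, hmono hk2⟩
    rw [hset, Nat.card_image_of_injective hinj, Nat.card_coe_set_eq,
      ← Finset.coe_Icc, Set.ncard_coe_finset, Int.card_Icc]
    have h1 : (0 : ℤ) ≤ n + 1 - m := by omega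
    have h2 : ((n + 1 - m).toNat : ℝ) = ((n + 1 - m : ℤ) : ℝ) := by
      exact_mod_cast Int.toNat_of_nonneg h1
    rw [h2]
    push_cast
    ring
  -- key estimate: |δ(e n − e 0) − n| ≤ c + 1
  have hkey : ∀ n : ℤ, |δ * ((e n : ℝ) - (e 0 : ℝ)) - n| ≤ c + 1 := by
    intro n
    rcases le_or_gt 0 n with hn | hn
    · have h := hdisc (e 0 : ℝ) (e n : ℝ) (hmono hn)
      rw [hcard 0 n hn] at h
      push_cast at h ⊢
      rw [abs_lt] at h
      rw [abs_le]
      constructor <;> linarith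
    · have hn' : n ≤ 0 := le_of_lt hn
      have h := hdisc (e n : ℝ) (e 0 : ℝ) (hmono hn')
      rw [hcard n 0 hn'] at h
      push_cast at h ⊢
      rw [abs_lt] at h
      rw [abs_le]
      constructor <;> linarith
  -- bound on e 0
  have he0bdd : |(e 0 : ℝ)| ≤ δ⁻¹ * (c + 1) := by
    have hset : Y ∩ Set.Icc (0 : ℝ) (e 0 : ℝ) = {(e 0 : ℝ)} := by
      ext y
      constructor
      · rintro ⟨hy, h1, h2⟩
        have hk : e (e.symm ⟨y, hy⟩) = ⟨y, hy⟩ := e.apply_symm_apply _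
        set k := e.symm ⟨y, hy⟩ with hkdef
        have hkle : k ≤ 0 := by
          have : e k ≤ e 0 := by rw [hk]; exact Subtype.coe_le_coe.mp h2
          exact e.le_iff_le.mp this
        have hkge : 0 ≤ k := by
          by_contra hneg
          push_neg at hneg
          have : k ≤ -1 := by omega
          have : (e k : ℝ) ≤ (e (-1) : ℝ) := hmono this
          rw [hk] at this
          linarith
        have : k = 0 := le_antisymm hkle hkge
        rw [this] at hk
        exact Set.mem_singleton_iff.mpr (congrArg Subtype.val hk).symm
      · rintro rfl
        exact ⟨(e 0).2, he0, le_refl _⟩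
    have h := hdisc 0 (e 0 : ℝ) he0
    rw [hset] at h
    simp only [Nat.card_unique, Nat.cast_one, sub_zero] at h
    rw [abs_lt] at h
    rw [abs_le]
    constructor
    · rw [neg_le, ← mul_le_mul_iff_right₀ hδ]
      calc δ * -(e 0 : ℝ) ≤ c - 1 := by nlinarith
        _ ≤ δ * (δ⁻¹ * (c + 1)) := by
            rw [← mul_assoc, mul_inv_cancel₀ (ne_of_gt hδ), one_mul]; linarith
    · rw [← mul_le_mul_iff_right₀ hδ]
      calc δ * (e 0 : ℝ) ≤ c + 1 := by nlinarith
        _ = δ * (δ⁻¹ * (c + 1)) := by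
            rw [← mul_assoc, mul_inv_cancel₀ (ne_of_gt hδ), one_mul]
  refine ⟨δ⁻¹ * (c + 1) + δ⁻¹ * (c + 1), fun n => ?_⟩
  have h1 := hkey n
  have h2 : |(e n : ℝ) - (e 0 : ℝ) - δ⁻¹ * n| ≤ δ⁻¹ * (c + 1) := by
    have : (e n : ℝ) - (e 0 : ℝ) - δ⁻¹ * n = δ⁻¹ * (δ * ((e n : ℝ) - (e 0 : ℝ)) - n) := by
      field_simp
    rw [this, abs_mul, abs_of_pos (inv_pos.mpr hδ)]
    exact mul_le_mul_of_nonneg_left h1 (le_of_lt (inv_pos.mpr hδ))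
  calc |(e n : ℝ) - δ⁻¹ * n| = |((e n : ℝ) - (e 0 : ℝ) - δ⁻¹ * n) + (e 0 : ℝ)| := by ring_nf
    _ ≤ |(e n : ℝ) - (e 0 : ℝ) - δ⁻¹ * n| + |(e 0 : ℝ)| := abs_add_le _ _
    _ ≤ δ⁻¹ * (c + 1) + δ⁻¹ * (c + 1) := add_le_add h2 he0bdd
end

section
/- For irrational ξ, the set Z_k = {t ∈ ℤ : frac(ξt) ∈ [0, frac(kξ))} (where frac denotes fractional part and k a positive integer) is BD-equivalent to the lattice frac(kξ)⁻¹ ℤ. -/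
open Finset

/-- Auxiliary counting function: `G t = ∑_{j=1}^{k} ⌊(t-j)ξ⌋ - t⌊kξ⌋`. -/
noncomputable def Gfun (ξ : ℝ) (k : ℕ) (t : ℤ) : ℤ :=
  (∑ j ∈ Finset.range k, ⌊((t : ℝ) - ((j : ℝ) + 1)) * ξ⌋) - t * ⌊(k : ℝ) * ξ⌋

lemma floor_sub_of_fract_lt {x α : ℝ} (h1 : α < 1) (h : Int.fract x < α) :
    ⌊x - α⌋ = ⌊x⌋ - 1 := by
  rw [Int.floor_eq_iff]
  have hfl := Int.floor_le x
  have := Int.fract_nonneg x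
  constructor
  · push_cast
    have : x - α > x - 1 := by linarith
    nlinarith [Int.sub_one_lt_floor x]
  · push_cast
    have : Int.fract x = x - ⌊x⌋ := rfl
    linarith [this ▸ h]

lemma floor_sub_of_le_fract {x α : ℝ} (h0 : 0 ≤ α) (h : α ≤ Int.fract x) :
    ⌊x - α⌋ = ⌊x⌋ := by
  rw [Int.floor_eq_iff]
  have : Int.fract x = x - ⌊x⌋ := rfl
  rw [this] at h
  constructor
  · linarith
  · have := Int.lt_floor_add_one x
    linarith

lemma Gfun_step (ξ : ℝ) (k : ℕ) (t : ℤ) :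
    Gfun ξ k (t + 1) = Gfun ξ k t +
      (if Int.fract ((t : ℝ) * ξ) < Int.fract ((k : ℝ) * ξ) then 1 else 0) := by
  set α := Int.fract ((k : ℝ) * ξ) with hα
  have hsum : (∑ j ∈ Finset.range k, ⌊(((t + 1 : ℤ) : ℝ) - ((j : ℝ) + 1)) * ξ⌋)
      - (∑ j ∈ Finset.range k, ⌊((t : ℝ) - ((j : ℝ) + 1)) * ξ⌋)
      = ⌊(t : ℝ) * ξ⌋ - ⌊((t : ℝ) - (k : ℝ)) * ξ⌋ := by
    have := Finset.sum_range_sub' (fun j : ℕ => ⌊((t : ℝ) - (j : ℝ)) * ξ⌋) k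
    rw [← Finset.sum_sub_distrib]
    simp only [Nat.cast_zero, sub_zero] at this
    rw [← this]
    apply Finset.sum_congr rfl
    intro j _
    push_cast
    ring_nf
  have hfloor : ⌊((t : ℝ) - (k : ℝ)) * ξ⌋ = ⌊(t : ℝ) * ξ - α⌋ - ⌊(k : ℝ) * ξ⌋ := by
    have h1 : ((t : ℝ) - (k : ℝ)) * ξ = ((t : ℝ) * ξ - α) - (⌊(k : ℝ) * ξ⌋ : ℝ) := by
      have : α = (k : ℝ) * ξ - ⌊(k : ℝ) * ξ⌋ := rfl
      rw [this]; ring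
    rw [h1, Int.floor_sub_intCast]
  have hα0 : 0 ≤ α := Int.fract_nonneg _
  have hα1 : α < 1 := Int.fract_lt_one _
  unfold Gfun
  have hmul : (t + 1) * ⌊(k : ℝ) * ξ⌋ = t * ⌊(k : ℝ) * ξ⌋ + ⌊(k : ℝ) * ξ⌋ := by ring
  by_cases hc : Int.fract ((t : ℝ) * ξ) < α
  · rw [if_pos hc]
    have := floor_sub_of_fract_lt hα1 hc
    omega
  · rw [if_neg hc]
    push_neg at hc
    have := floor_sub_of_le_fract hα0 hc
    omega

lemma Gfun_bound (ξ : ℝ) (k : ℕ) (t : ℤ) :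
    |(Gfun ξ k t : ℝ) - (t : ℝ) * Int.fract ((k : ℝ) * ξ)| ≤ k * (k * |ξ| + 1) := by
  set α := Int.fract ((k : ℝ) * ξ) with hα
  have key : (Gfun ξ k t : ℝ) - (t : ℝ) * α
      = -∑ j ∈ Finset.range k,
          (((j : ℝ) + 1) * ξ + Int.fract (((t : ℝ) - ((j : ℝ) + 1)) * ξ)) := by
    have hG : (Gfun ξ k t : ℝ)
        = (∑ j ∈ Finset.range k,
            (((t : ℝ) - ((j : ℝ) + 1)) * ξ - Int.fract (((t : ℝ) - ((j : ℝ) + 1)) * ξ)))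
          - (t : ℝ) * (⌊(k : ℝ) * ξ⌋ : ℝ) := by
      unfold Gfun
      push_cast
      congr 1
      apply Finset.sum_congr rfl
      intro j _
      rw [Int.self_sub_fract]
    rw [hG]
    have hαdef : α = (k : ℝ) * ξ - ⌊(k : ℝ) * ξ⌋ := rfl
    have hrw : ∀ j ∈ Finset.range k,
        ((t : ℝ) - ((j : ℝ) + 1)) * ξ - Int.fract (((t : ℝ) - ((j : ℝ) + 1)) * ξ)
        = (t : ℝ) * ξ - (((j : ℝ) + 1) * ξ + Int.fract (((t : ℝ) - ((j : ℝ) + 1)) * ξ)) := by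
      intro j _; ring
    rw [Finset.sum_congr rfl hrw, Finset.sum_sub_distrib, Finset.sum_const,
      Finset.card_range, nsmul_eq_mul, hαdef]
    ring
  rw [key, abs_neg]
  calc |∑ j ∈ Finset.range k,
          (((j : ℝ) + 1) * ξ + Int.fract (((t : ℝ) - ((j : ℝ) + 1)) * ξ))|
      ≤ ∑ j ∈ Finset.range k,
          |((j : ℝ) + 1) * ξ + Int.fract (((t : ℝ) - ((j : ℝ) + 1)) * ξ)| :=
        Finset.abs_sum_le_sum_abs _ _
    _ ≤ ∑ _j ∈ Finset.range k, ((k : ℝ) * |ξ| + 1) := by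
        apply Finset.sum_le_sum
        intro j hj
        have hj' : (j : ℝ) + 1 ≤ (k : ℝ) := by
          have := Finset.mem_range.mp hj
          exact_mod_cast this
        have h1 : |((j : ℝ) + 1) * ξ| ≤ (k : ℝ) * |ξ| := by
          rw [abs_mul]
          apply mul_le_mul_of_nonneg_right _ (abs_nonneg _)
          rw [abs_of_nonneg (by positivity)]
          exact hj'
        have h2 : |Int.fract (((t : ℝ) - ((j : ℝ) + 1)) * ξ)| ≤ 1 := by
          rw [abs_of_nonneg (Int.fract_nonneg _)]
          exact le_of_lt (Int.fract_lt_one _)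
        calc |((j : ℝ) + 1) * ξ + Int.fract (((t : ℝ) - ((j : ℝ) + 1)) * ξ)|
            ≤ |((j : ℝ) + 1) * ξ| + |Int.fract (((t : ℝ) - ((j : ℝ) + 1)) * ξ)| := abs_add_le _ _
          _ ≤ (k : ℝ) * |ξ| + 1 := add_le_add h1 h2
    _ = (k : ℝ) * ((k : ℝ) * |ξ| + 1) := by
        rw [Finset.sum_const, Finset.card_range, nsmul_eq_mul]

/-- For irrational `ξ` and a positive integer `k`, the set
`Z_k = {t ∈ ℤ : frac(ξt) ∈ [0, frac(kξ))}` is BD-equivalent to the lattice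
`frac(kξ)⁻¹ ℤ`. -/
theorem Zk_BD_lattice (ξ : ℝ) (hξ : Irrational ξ) (k : ℕ) (hk : 0 < k) :
    BDEquiv ((fun t : ℤ => (t : ℝ)) ''
        {t : ℤ | Int.fract (ξ * t) ∈ Set.Ico (0 : ℝ) (Int.fract ((k : ℝ) * ξ))})
      {x : ℝ | ∃ n : ℤ, x = (Int.fract ((k : ℝ) * ξ))⁻¹ * n} := by
  set α := Int.fract ((k : ℝ) * ξ) with hαdef
  set G := Gfun ξ k with hGdef
  set C := (k : ℝ) * ((k : ℝ) * |ξ| + 1) with hCdef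
  have hC0 : 0 ≤ C := by positivity
  have hkξ : Irrational ((k : ℝ) * ξ) := hξ.natCast_mul hk.ne'
  have hα0 : 0 < α := by
    rw [hαdef, Int.fract_pos]
    exact fun h => (hkξ.ne_int ⌊(k : ℝ) * ξ⌋) h
  have hα1 : α < 1 := Int.fract_lt_one _
  set Zset : Set ℤ := {t : ℤ | Int.fract (ξ * t) ∈ Set.Ico (0 : ℝ) α} with hZdef
  -- membership characterization
  have hmem : ∀ t : ℤ, t ∈ Zset ↔ Int.fract ((t : ℝ) * ξ) < α := by
    intro t
    simp only [hZdef, Set.mem_setOf_eq, Set.mem_Ico, mul_comm]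
    exact ⟨fun h => h.2, fun h => ⟨Int.fract_nonneg _, h⟩⟩
  -- step characterization
  have hstep : ∀ t : ℤ, G (t + 1) = G t + (if t ∈ Zset then 1 else 0) := by
    intro t
    rw [hGdef, Gfun_step ξ k t]
    congr 1
    by_cases h : t ∈ Zset
    · rw [if_pos h, if_pos ((hmem t).mp h)]
    · rw [if_neg h, if_neg (fun hc => h ((hmem t).mpr hc))]
  have hmono : Monotone G := by
    apply monotone_int_of_le_succ
    intro t
    rw [hstep t]
    split <;> omega
  have hbound : ∀ t : ℤ, |(G t : ℝ) - (t : ℝ) * α| ≤ C := fun t => Gfun_bound ξ k t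
  -- strict monotonicity across elements of Z
  have hlt : ∀ t t' : ℤ, t ∈ Zset → t < t' → G t < G t' := by
    intro t t' ht htt'
    have h1 : G (t + 1) = G t + 1 := by rw [hstep t, if_pos ht]
    have h2 : G (t + 1) ≤ G t' := hmono (by omega)
    omega
  -- injectivity on Z
  have hinj : ∀ t t' : ℤ, t ∈ Zset → t' ∈ Zset → G t = G t' → t = t' := by
    intro t t' ht ht' heq
    rcases lt_trichotomy t t' with h | h | h
    · exact absurd heq (ne_of_lt (hlt t t' ht h))
    · exact h
    · exact absurd heq.symm (ne_of_lt (hlt t' t ht' h))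
  -- surjectivity: every integer is attained on Z
  have hsurj : ∀ m : ℤ, ∃ t : ℤ, t ∈ Zset ∧ G t = m := by
    intro m
    have hbdd : ∃ b : ℤ, ∀ z : ℤ, G z ≤ m → z ≤ b := by
      refine ⟨⌈((m : ℝ) + C) / α⌉, fun z hz => ?_⟩
      have h1 : (z : ℝ) * α ≤ (G z : ℝ) + C := by
        have := hbound z
        rw [abs_le] at this
        linarith [this.2]
      have h2 : (G z : ℝ) ≤ (m : ℝ) := by exact_mod_cast hz
      have h3 : (z : ℝ) ≤ ((m : ℝ) + C) / α := by
        rw [le_div_iff₀ hα0]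
        linarith
      have h4 : (z : ℝ) ≤ (⌈((m : ℝ) + C) / α⌉ : ℝ) := h3.trans (Int.le_ceil _)
      exact_mod_cast h4
    have hinh : ∃ z : ℤ, G z ≤ m := by
      refine ⟨⌊((m : ℝ) - C) / α⌋, ?_⟩
      have h1 : (⌊((m : ℝ) - C) / α⌋ : ℝ) ≤ ((m : ℝ) - C) / α := Int.floor_le _
      have h2 : (⌊((m : ℝ) - C) / α⌋ : ℝ) * α ≤ (m : ℝ) - C := by
        rw [← le_div_iff₀ hα0]
        exact h1
      have h3 : (G ⌊((m : ℝ) - C) / α⌋ : ℝ) ≤ (m : ℝ) := by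
        have := hbound ⌊((m : ℝ) - C) / α⌋
        rw [abs_le] at this
        linarith [this.1]
      exact_mod_cast h3
    obtain ⟨t, htm, hmax⟩ := Int.exists_greatest_of_bdd hbdd hinh
    have hnt : ¬ (G (t + 1) ≤ m) := fun h => by
      have := hmax (t + 1) h
      omega
    have hs := hstep t
    by_cases htz : t ∈ Zset
    · rw [if_pos htz] at hs
      refine ⟨t, htz, ?_⟩
      omega
    · rw [if_neg htz] at hs
      omega
  -- build the equivalence
  have hcastinj : Function.Injective (fun t : ℤ => (t : ℝ)) :=
    fun a b h => Int.cast_injective h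
  let e₁ : Zset ≃ ((fun t : ℤ => (t : ℝ)) '' Zset) :=
    Equiv.Set.image (fun t : ℤ => (t : ℝ)) Zset hcastinj
  set L : Set ℝ := {x : ℝ | ∃ n : ℤ, x = α⁻¹ * n} with hLdef
  let f : Zset → L := fun t => ⟨α⁻¹ * (G t.1 : ℝ), ⟨G t.1, rfl⟩⟩
  have hfbij : Function.Bijective f := by
    constructor
    · intro a b hab
      have h1 : α⁻¹ * (G a.1 : ℝ) = α⁻¹ * (G b.1 : ℝ) := congrArg Subtype.val hab
      have h2 : (G a.1 : ℝ) = (G b.1 : ℝ) :=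
        mul_left_cancel₀ (inv_ne_zero hα0.ne') h1
      have h3 : G a.1 = G b.1 := by exact_mod_cast h2
      exact Subtype.ext (hinj a.1 b.1 a.2 b.2 h3)
    · rintro ⟨x, n, hx⟩
      obtain ⟨t, ht, hGt⟩ := hsurj n
      exact ⟨⟨t, ht⟩, Subtype.ext (by simp [f, hGt, hx])⟩
  let e₂ : Zset ≃ L := Equiv.ofBijective f hfbij
  refine ⟨e₁.symm.trans e₂, α⁻¹ * C, ?_⟩
  intro y
  obtain ⟨t, ht, hty⟩ := y.2
  have he₁ : e₁ ⟨t, ht⟩ = y := Subtype.ext hty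
  have hsymm : e₁.symm y = ⟨t, ht⟩ := by
    rw [← he₁, Equiv.symm_apply_apply]
  have hval : ((e₁.symm.trans e₂) y : ℝ) = α⁻¹ * (G t : ℝ) := by
    simp only [Equiv.trans_apply, hsymm]
    rfl
  rw [hval, ← hty]
  have h1 : (t : ℝ) - α⁻¹ * (G t : ℝ) = α⁻¹ * ((t : ℝ) * α - (G t : ℝ)) := by
    field_simp
  rw [h1, abs_mul, abs_of_nonneg (inv_nonneg.mpr hα0.le)]
  apply mul_le_mul_of_nonneg_left _ (inv_nonneg.mpr hα0.le)
  rw [← abs_neg]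
  simpa [neg_sub] using hbound t
end

section
/- Let ξ be irrational and let f: ℝ/ℤ → ℝ be given by f = χ_I − Length(I) where I is an interval of length frac(kξ) for some positive integer k. Then there exists a bounded function g: ℝ/ℤ → ℝ solving the cohomological equation g(x + ξ) − g(x) = f(x) for all x. -/
private lemma fract_shift (x a : ℝ) : Int.fract (x - a) = Int.fract (Int.fract x - a) := by
  have : x - a = (Int.fract x - a) + (⌊x⌋ : ℤ) := by
    have := Int.fract_add_floor x
    push_cast
    linarith [Int.fract_add_floor x]
  rw [this, Int.fract_add_intCast]

private lemma indicator_iff (a b x : ℝ) (ha : 0 ≤ a) (hab : a ≤ b) (hb : b ≤ 1)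
    (hβ1 : b - a < 1) : Int.fract (x - a) < b - a ↔ Int.fract x ∈ Set.Ico a b := by
  set v := Int.fract x with hv
  have hv0 : 0 ≤ v := Int.fract_nonneg x
  have hv1 : v < 1 := Int.fract_lt_one x
  rw [fract_shift x a, ← hv]
  rcases le_or_gt a v with hva | hva
  · have : Int.fract (v - a) = v - a := Int.fract_eq_self.2 ⟨by linarith, by linarith⟩
    rw [this]
    constructor
    · intro h; exact ⟨hva, by linarith⟩
    · intro h; linarith [h.2]
  · have : Int.fract (v - a) = v - a + 1 := by
      have h1 : Int.fract (v - a) = Int.fract ((v - a + 1) - (1:ℤ)) := by norm_num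
      rw [h1, Int.fract_sub_intCast, Int.fract_eq_self.2 ⟨by linarith, by linarith⟩]
    rw [this]
    constructor
    · intro h; exfalso; linarith
    · intro h; exfalso; exact absurd h.1 (not_le.2 hva)

/-- Transfer-function reformulation of the Hecke–Ostrowski theorem: for the
interval `I = [a,b) ⊆ [0,1)` of length `frac(kξ)` (k a positive integer), the
function `f = χ_I − Length I` (viewed as a ℤ-periodic function on ℝ, i.e. a
function on ℝ/ℤ) admits a bounded transfer function `g` on ℝ/ℤ solving the
cohomological equation `g(x + ξ) − g(x) = f(x)`. -/
theorem hecke_ostrowski_transfer_function (ξ a b : ℝ) (hξ : Irrational ξ)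
    (ha : 0 ≤ a) (hab : a ≤ b) (hb : b ≤ 1) (k : ℕ) (hk : 0 < k)
    (hlen : b - a = Int.fract ((k : ℝ) * ξ)) :
    ∃ g : ℝ → ℝ, (∃ M : ℝ, ∀ x : ℝ, |g x| ≤ M) ∧ (∀ x : ℝ, g (x + 1) = g x) ∧
      ∀ x : ℝ, g (x + ξ) - g x =
        (if Int.fract x ∈ Set.Ico a b then (1 : ℝ) else 0) - (b - a) := by
  have hβ1 : b - a < 1 := hlen ▸ Int.fract_lt_one _
  refine ⟨fun x => -(∑ j ∈ Finset.range k, Int.fract (x - (j + 1) * ξ - a)),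
    ⟨k, fun x => ?_⟩, fun x => ?_, fun x => ?_⟩
  · rw [abs_neg]
    calc |∑ j ∈ Finset.range k, Int.fract (x - (j + 1) * ξ - a)|
        ≤ ∑ j ∈ Finset.range k, |Int.fract (x - (j + 1) * ξ - a)| :=
          Finset.abs_sum_le_sum_abs _ _
      _ ≤ ∑ _j ∈ Finset.range k, (1 : ℝ) := Finset.sum_le_sum fun j _ => by
          rw [abs_of_nonneg (Int.fract_nonneg _)]; exact (Int.fract_lt_one _).le
      _ = k := by simp
  · simp only [neg_inj]
    refine Finset.sum_congr rfl fun j _ => ?_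
    have h : x + 1 - (j + 1) * ξ - a = (x - (j + 1) * ξ - a) + (1 : ℤ) := by push_cast; ring
    rw [h, Int.fract_add_intCast]
  · show -(∑ j ∈ Finset.range k, Int.fract (x + ξ - (j + 1) * ξ - a)) -
      -(∑ j ∈ Finset.range k, Int.fract (x - (j + 1) * ξ - a)) = _
    set F : ℕ → ℝ := fun j => Int.fract (x - j * ξ - a) with hF
    have h1 : ∑ j ∈ Finset.range k, Int.fract (x + ξ - (j + 1) * ξ - a)
        = ∑ j ∈ Finset.range k, F j := by
      refine Finset.sum_congr rfl fun j _ => ?_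
      simp only [hF]; congr 1; push_cast; ring
    have h2 : ∑ j ∈ Finset.range k, Int.fract (x - (j + 1) * ξ - a)
        = ∑ j ∈ Finset.range k, F (j + 1) := by
      refine Finset.sum_congr rfl fun j _ => ?_
      simp only [hF]; push_cast; ring_nf
    have htel : ∑ j ∈ Finset.range k, F (j + 1) - ∑ j ∈ Finset.range k, F j
        = F k - F 0 := by
      rw [← Finset.sum_sub_distrib]; exact Finset.sum_range_sub F k
    have key : F k - F 0 =
        (if Int.fract x ∈ Set.Ico a b then (1 : ℝ) else 0) - (b - a) := by
      have hFk : F k = Int.fract (Int.fract (x - a) - (b - a)) := by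
        simp only [hF]
        have h : x - (k : ℝ) * ξ - a
            = ((x - a) - (b - a)) - (⌊(k : ℝ) * ξ⌋ : ℤ) := by
          have := Int.fract_add_floor ((k : ℝ) * ξ)
          rw [hlen]; push_cast; linarith
        rw [h, Int.fract_sub_intCast, fract_shift (x - a) (b - a)]
      have hF0 : F 0 = Int.fract (x - a) := by simp [hF]
      set u := Int.fract (x - a) with hu
      have hu0 : 0 ≤ u := Int.fract_nonneg _
      have hu1 : u < 1 := Int.fract_lt_one _
      have hβ0 : 0 ≤ b - a := by linarith
      rw [hFk, hF0]
      rcases lt_or_ge u (b - a) with hlt | hge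
      · rw [if_pos ((indicator_iff a b x ha hab hb hβ1).1 hlt)]
        have : Int.fract (u - (b - a)) = u - (b - a) + 1 := by
          have h1 : Int.fract (u - (b - a)) = Int.fract ((u - (b - a) + 1) - (1:ℤ)) := by
            norm_num
          rw [h1, Int.fract_sub_intCast, Int.fract_eq_self.2 ⟨by linarith, by linarith⟩]
        rw [this]; ring
      · rw [if_neg (fun h => absurd ((indicator_iff a b x ha hab hb hβ1).2 h)
          (not_lt.2 hge))]
        rw [Int.fract_eq_self.2 ⟨by linarith, by linarith⟩]; ring
    rw [h1, h2, neg_sub_neg, htel, key]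
end

section
/- Let ξ be irrational, and suppose I, J ⊂ ℝ/ℤ are intervals such that J is a translate of I by mξ mod ℤ for some integer m. Then D(N; I) − D(N; J) is bounded uniformly in N, where D(N; K) = #{0 ≤ n ≤ N : x + nξ ∈ K mod ℤ} − N·Length(K). -/
open scoped Classical

private lemma coe_filter_card (s : Finset ℕ) (p : ℝ → Prop) [DecidablePred p] :
    (((do let a ← s; pure ((a:ℝ))) : Finset ℝ).filter p).card
      = (s.filter (fun n : ℕ => p n)).card := by
  have h : ((do let a ← s; pure ((a:ℝ))) : Finset ℝ)
      = Finset.image (fun n : ℕ => (n : ℝ)) s := by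
    simp [Bind.bind]
  rw [h, Finset.filter_image]
  exact Finset.card_image_of_injective _ (fun u v huv => by exact_mod_cast huv)

private lemma filter_card_le_aux (s t : Finset ℤ) (Q : ℤ → Prop) [DecidablePred Q] :
    (s.filter Q).card ≤ (t.filter Q).card + (s \ t).card := by
  calc (s.filter Q).card ≤ ((t.filter Q) ∪ (s \ t)).card := by
        apply Finset.card_le_card
        intro k hk
        simp only [Finset.mem_filter, Finset.mem_union, Finset.mem_sdiff] at *
        tauto
    _ ≤ (t.filter Q).card + (s \ t).card := Finset.card_union_le _ _

/-- Key cancellation lemma: if `J` is the translate of the interval `I` by `mξ`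
(mod ℤ), then the difference `D(N; I) − D(N; J)` of local discrepancies is
uniformly bounded in `N`.  Here `J` is the interval `I + mξ` in ℝ/ℤ, so the
count for `J` is `#{n ≤ N : frac(x + nξ − mξ) ∈ [a,b)}`, and `Length J =
Length I = b − a`. -/
theorem disc_translate_bounded (ξ x a b : ℝ) (hξ : Irrational ξ)
    (ha : 0 ≤ a) (hab : a ≤ b) (hb : b ≤ 1) (m : ℤ) :
    ∃ C : ℝ, ∀ N : ℕ,
      |localDisc ξ x a b N -
        ((((Finset.range (N + 1)).filter
            (fun n => Int.fract (x + n * ξ - m * ξ) ∈ Set.Ico a b)).card : ℝ)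
          - N * (b - a))| ≤ C := by
  refine ⟨(m.natAbs : ℝ), fun N => ?_⟩
  unfold localDisc
  rw [coe_filter_card (Finset.range (N + 1))
      (fun r : ℝ => Int.fract (x + r * ξ - (m : ℝ) * ξ) ∈ Set.Ico a b),
    coe_filter_card (Finset.range (N + 1))
      (fun r : ℝ => Int.fract (x + r * ξ) ∈ Set.Ico a b)]
  set Q : ℤ → Prop := fun k => Int.fract (x + (k : ℝ) * ξ) ∈ Set.Ico a b with hQ
  set S : Finset ℤ := (Finset.Icc (0:ℤ) N).filter Q with hS
  set T : Finset ℤ := (Finset.Icc (-m) ((N:ℤ) - m)).filter Q with hT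
  -- count for I equals |S|
  have hc1 : ((Finset.range (N + 1)).filter
      (fun n : ℕ => Int.fract (x + (n : ℝ) * ξ) ∈ Set.Ico a b)).card = S.card := by
    refine Finset.card_bij (fun (n : ℕ) _ => (n : ℤ)) ?_ ?_ ?_
    · intro n hn
      simp only [Finset.mem_filter, Finset.mem_range] at hn
      simp only [hS, hQ, Finset.mem_filter, Finset.mem_Icc]
      refine ⟨⟨Int.natCast_nonneg n, by exact_mod_cast Nat.lt_succ_iff.mp hn.1⟩, ?_⟩
      have h : (((n : ℤ) : ℝ)) = (n : ℝ) := by push_cast; ring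
      rw [h]; exact hn.2
    · intro n _ n' _ h
      have h' : ((n : ℕ) : ℤ) = ((n' : ℕ) : ℤ) := h
      exact_mod_cast h'
    · intro k hk
      simp only [hS, hQ, Finset.mem_filter, Finset.mem_Icc] at hk
      obtain ⟨⟨hk0, hkN⟩, hkQ⟩ := hk
      refine ⟨k.toNat, ?_, by show ((k.toNat : ℕ) : ℤ) = k; omega⟩
      simp only [Finset.mem_filter, Finset.mem_range]
      constructor
      · omega
      · have h : ((k.toNat : ℕ) : ℝ) = ((k : ℤ) : ℝ) := by
          exact_mod_cast congrArg (Int.cast : ℤ → ℝ) (Int.toNat_of_nonneg hk0)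
        rw [h]; exact hkQ
  -- count for J equals |T|
  have hc2 : ((Finset.range (N + 1)).filter
      (fun n : ℕ => Int.fract (x + (n : ℝ) * ξ - (m : ℝ) * ξ) ∈ Set.Ico a b)).card
        = T.card := by
    refine Finset.card_bij (fun (n : ℕ) _ => (n : ℤ) - m) ?_ ?_ ?_
    · intro n hn
      simp only [Finset.mem_filter, Finset.mem_range] at hn
      simp only [hT, hQ, Finset.mem_filter, Finset.mem_Icc]
      have hn' : (n : ℤ) ≤ N := by exact_mod_cast Nat.lt_succ_iff.mp hn.1
      have hn0 : (0:ℤ) ≤ (n : ℤ) := Int.natCast_nonneg n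
      refine ⟨⟨by omega, by omega⟩, ?_⟩
      have h : x + (((n : ℤ) - m : ℤ) : ℝ) * ξ = x + (n : ℝ) * ξ - (m : ℝ) * ξ := by
        push_cast; ring
      rw [h]; exact hn.2
    · intro n _ n' _ h
      have h2 : ((n : ℕ) : ℤ) - m = ((n' : ℕ) : ℤ) - m := h
      have h' : ((n : ℕ) : ℤ) = ((n' : ℕ) : ℤ) := by omega
      exact_mod_cast h'
    · intro k hk
      simp only [hT, hQ, Finset.mem_filter, Finset.mem_Icc] at hk
      obtain ⟨⟨hk0, hkN⟩, hkQ⟩ := hk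
      refine ⟨(k + m).toNat, ?_, by show (((k + m).toNat : ℕ) : ℤ) - m = k; omega⟩
      simp only [Finset.mem_filter, Finset.mem_range]
      constructor
      · omega
      · have h : x + (((k + m).toNat : ℕ) : ℝ) * ξ - (m : ℝ) * ξ = x + ((k : ℤ) : ℝ) * ξ := by
          have h2 : (((k + m).toNat : ℤ) : ℝ) = ((k + m : ℤ) : ℝ) :=
            congrArg (Int.cast : ℤ → ℝ) (Int.toNat_of_nonneg (by omega : (0:ℤ) ≤ k + m))
          push_cast at h2 ⊢
          rw [h2]; ring
        rw [h]; exact hkQ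
  -- the two index windows differ in at most |m| places, each way
  have hd1 : ((Finset.Icc (0:ℤ) N) \ (Finset.Icc (-m) ((N:ℤ) - m))).card ≤ m.natAbs := by
    have hsub : (Finset.Icc (0:ℤ) N) \ (Finset.Icc (-m) ((N:ℤ) - m)) ⊆
        Finset.Icc ((N:ℤ) - m + 1) N ∪ Finset.Icc (0:ℤ) (-m - 1) := by
      intro k hk
      simp only [Finset.mem_sdiff, Finset.mem_Icc, Finset.mem_union] at *
      omega
    calc _ ≤ (Finset.Icc ((N:ℤ) - m + 1) N ∪ Finset.Icc (0:ℤ) (-m - 1)).card :=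
            Finset.card_le_card hsub
      _ ≤ (Finset.Icc ((N:ℤ) - m + 1) N).card + (Finset.Icc (0:ℤ) (-m - 1)).card :=
            Finset.card_union_le _ _
      _ ≤ m.natAbs := by rw [Int.card_Icc, Int.card_Icc]; omega
  have hd2 : ((Finset.Icc (-m) ((N:ℤ) - m)) \ (Finset.Icc (0:ℤ) N)).card ≤ m.natAbs := by
    have hsub : (Finset.Icc (-m) ((N:ℤ) - m)) \ (Finset.Icc (0:ℤ) N) ⊆
        Finset.Icc (-m) (-1) ∪ Finset.Icc ((N:ℤ) + 1) ((N:ℤ) - m) := by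
      intro k hk
      simp only [Finset.mem_sdiff, Finset.mem_Icc, Finset.mem_union] at *
      omega
    calc _ ≤ (Finset.Icc (-m) (-1) ∪ Finset.Icc ((N:ℤ) + 1) ((N:ℤ) - m)).card :=
            Finset.card_le_card hsub
      _ ≤ (Finset.Icc (-m) (-1)).card + (Finset.Icc ((N:ℤ) + 1) ((N:ℤ) - m)).card :=
            Finset.card_union_le _ _
      _ ≤ m.natAbs := by rw [Int.card_Icc, Int.card_Icc]; omega
  have hb1 : S.card ≤ T.card + m.natAbs := by
    rw [hS, hT]
    exact le_trans (filter_card_le_aux _ _ Q) (Nat.add_le_add_left hd1 _)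
  have hb2 : T.card ≤ S.card + m.natAbs := by
    rw [hS, hT]
    exact le_trans (filter_card_le_aux _ _ Q) (Nat.add_le_add_left hd2 _)
  rw [hc1, hc2]
  have hb1' : (S.card : ℝ) ≤ (T.card : ℝ) + (m.natAbs : ℝ) := by exact_mod_cast hb1
  have hb2' : (T.card : ℝ) ≤ (S.card : ℝ) + (m.natAbs : ℝ) := by exact_mod_cast hb2
  rw [abs_sub_le_iff]
  constructor <;> linarith
end

section
/- Let ξ be irrational and let a < b < c with b − a ∈ ℤ + ℤξ. Then the discrepancy of {t ∈ ℤ : frac(ξt) ∈ [a,c) mod 1} is bounded if and only if the discrepancy of {t ∈ ℤ : frac(ξt) ∈ [b,c) mod 1} is bounded. -/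
open Finset

private lemma card_sdiff_Icc_shift (k L U : ℤ) :
    ((Finset.Icc (L - k) (U - k)) \ (Finset.Icc L U)).card ≤ k.natAbs := by
  have hsub : (Finset.Icc (L - k) (U - k)) \ (Finset.Icc L U)
      ⊆ Finset.Icc (L - k) (L - 1) ∪ Finset.Icc (U + 1) (U - k) := by
    intro z hz
    simp only [Finset.mem_sdiff, Finset.mem_Icc, Finset.mem_union] at hz ⊢
    omega
  calc ((Finset.Icc (L - k) (U - k)) \ (Finset.Icc L U)).card
      ≤ (Finset.Icc (L - k) (L - 1) ∪ Finset.Icc (U + 1) (U - k)).card :=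
        Finset.card_le_card hsub
    _ ≤ (Finset.Icc (L - k) (L - 1)).card + (Finset.Icc (U + 1) (U - k)).card :=
        Finset.card_union_le _ _
    _ ≤ k.natAbs := by rw [Int.card_Icc, Int.card_Icc]; omega

private lemma sum_shift_eq (g : ℤ → ℝ) (k L U : ℤ) :
    ∑ z ∈ Finset.Icc L U, g (z - k) = ∑ z ∈ Finset.Icc (L - k) (U - k), g z := by
  apply Finset.sum_nbij' (fun z => z - k) (fun z => z + k) <;>
    intros <;> simp_all [Finset.mem_Icc] <;> omega

private lemma sum_shift_bound (g : ℤ → ℝ) (hg0 : ∀ z, 0 ≤ g z) (hg1 : ∀ z, g z ≤ 1)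
    (k L U : ℤ) :
    |∑ z ∈ Finset.Icc L U, (g (z - k) - g z)| ≤ (k.natAbs : ℝ) := by
  rw [Finset.sum_sub_distrib, sum_shift_eq]
  set I₁ := Finset.Icc (L - k) (U - k) with hI₁
  set I₂ := Finset.Icc L U with hI₂
  have e1 : ∑ z ∈ I₁ ∩ I₂, g z + ∑ z ∈ I₁ \ I₂, g z = ∑ z ∈ I₁, g z :=
    Finset.sum_inter_add_sum_sdiff _ _ _
  have e2 : ∑ z ∈ I₂ ∩ I₁, g z + ∑ z ∈ I₂ \ I₁, g z = ∑ z ∈ I₂, g z :=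
    Finset.sum_inter_add_sum_sdiff _ _ _
  have hcomm : I₁ ∩ I₂ = I₂ ∩ I₁ := Finset.inter_comm _ _
  rw [hcomm] at e1
  have hcard1 : ((I₁ \ I₂).card : ℝ) ≤ (k.natAbs : ℝ) := by
    exact_mod_cast card_sdiff_Icc_shift k L U
  have hcard2 : ((I₂ \ I₁).card : ℝ) ≤ (k.natAbs : ℝ) := by
    have h := card_sdiff_Icc_shift (-k) (L - k) (U - k)
    rw [show L - k - (-k) = L by ring, show U - k - (-k) = U by ring, Int.natAbs_neg] at h
    exact_mod_cast h
  have h1 : ∑ z ∈ I₁ \ I₂, g z ≤ (k.natAbs : ℝ) := by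
    calc ∑ z ∈ I₁ \ I₂, g z ≤ ∑ _z ∈ I₁ \ I₂, (1:ℝ) :=
          Finset.sum_le_sum (fun z _ => hg1 z)
      _ = ((I₁ \ I₂).card : ℝ) := by simp
      _ ≤ (k.natAbs : ℝ) := hcard1
  have h2 : ∑ z ∈ I₂ \ I₁, g z ≤ (k.natAbs : ℝ) := by
    calc ∑ z ∈ I₂ \ I₁, g z ≤ ∑ _z ∈ I₂ \ I₁, (1:ℝ) :=
          Finset.sum_le_sum (fun z _ => hg1 z)
      _ = ((I₂ \ I₁).card : ℝ) := by simp
      _ ≤ (k.natAbs : ℝ) := hcard2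
  have p1 : 0 ≤ ∑ z ∈ I₁ \ I₂, g z := Finset.sum_nonneg fun z _ => hg0 z
  have p2 : 0 ≤ ∑ z ∈ I₂ \ I₁, g z := Finset.sum_nonneg fun z _ => hg0 z
  rw [abs_le]
  constructor <;> linarith

private lemma fract_indicator (y β : ℝ) (hβ0 : 0 < β) (hβ1 : β < 1) :
    (if Int.fract y < β then (1:ℝ) else 0) = β - Int.fract y + Int.fract (y - β) := by
  have hf0 := Int.fract_nonneg y
  have hf1 := Int.fract_lt_one y
  have hfl : y - Int.fract y = (⌊y⌋ : ℝ) := by rw [Int.self_sub_fract]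
  by_cases h : Int.fract y < β
  · rw [if_pos h]
    have hv : Int.fract (y - β) = Int.fract y - β + 1 := by
      rw [Int.fract_eq_iff]
      refine ⟨by linarith, by linarith, ⟨⌊y⌋ - 1, ?_⟩⟩
      push_cast
      linarith
    linarith
  · rw [if_neg h]
    have hv : Int.fract (y - β) = Int.fract y - β := by
      rw [Int.fract_eq_iff]
      refine ⟨by linarith, by linarith, ⟨⌊y⌋, ?_⟩⟩
      push_cast
      linarith
    linarith

private lemma mem_iff_fract (ξ x u v : ℝ) (hxu : x ≤ u) (huv : u < v) (hv : v ≤ x + 1) (z : ℤ) :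
    (∃ m : ℤ, u ≤ ξ * z - m ∧ ξ * z - m < v) ↔
      (u - x ≤ Int.fract (ξ * z - x) ∧ Int.fract (ξ * z - x) < v - x) := by
  constructor
  · rintro ⟨m, h1, h2⟩
    have hf : Int.fract (ξ * z - x) = ξ * z - x - m := by
      rw [Int.fract_eq_iff]
      exact ⟨by linarith, by linarith, ⟨m, by push_cast; ring⟩⟩
    rw [hf]
    constructor <;> linarith
  · rintro ⟨h1, h2⟩
    have hf : Int.fract (ξ * z - x) = ξ * z - x - ⌊ξ * z - x⌋ := rfl
    rw [hf] at h1 h2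
    exact ⟨⌊ξ * z - x⌋, by linarith, by linarith⟩

private lemma count_eq (Z : Set ℤ) [DecidablePred (· ∈ Z)] (s t : ℝ) :
    Nat.card {z : ℤ // z ∈ Z ∧ (z : ℝ) ∈ Set.Icc s t} =
      ((Finset.Icc ⌈s⌉ ⌊t⌋).filter (· ∈ Z)).card := by
  have hset : {z : ℤ | z ∈ Z ∧ (z : ℝ) ∈ Set.Icc s t}
      = ↑((Finset.Icc ⌈s⌉ ⌊t⌋).filter (· ∈ Z)) := by
    ext z
    simp only [Set.mem_setOf_eq, Set.mem_Icc, Finset.coe_filter, Finset.mem_Icc,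
      Int.ceil_le, Int.le_floor]
    tauto
  calc Nat.card {z : ℤ // z ∈ Z ∧ (z : ℝ) ∈ Set.Icc s t}
      = Nat.card {z : ℤ | z ∈ Z ∧ (z : ℝ) ∈ Set.Icc s t} := rfl
    _ = ((Finset.Icc ⌈s⌉ ⌊t⌋).filter (· ∈ Z)).card := by
        rw [hset, Nat.card_coe_set_eq, Set.ncard_coe_finset]

private lemma card_Icc_sub_len (s t : ℝ) (hst : s ≤ t) :
    |((Finset.Icc ⌈s⌉ ⌊t⌋).card : ℝ) - (t - s)| ≤ 1 := by
  have h1 : (⌊t⌋ : ℝ) ≤ t := Int.floor_le t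
  have h2 : t - 1 < ⌊t⌋ := Int.sub_one_lt_floor t
  have h3 : s ≤ ⌈s⌉ := Int.le_ceil s
  have h4 : (⌈s⌉ : ℝ) < s + 1 := Int.ceil_lt_add_one s
  rcases le_or_gt ⌈s⌉ ⌊t⌋ with h | h
  · have hc : (((Finset.Icc ⌈s⌉ ⌊t⌋).card : ℕ) : ℝ) = (⌊t⌋ : ℝ) + 1 - ⌈s⌉ := by
      rw [Int.card_Icc]
      have h0 : (0:ℤ) ≤ ⌊t⌋ + 1 - ⌈s⌉ := by omega
      have := Int.toNat_of_nonneg h0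
      have : (((⌊t⌋ + 1 - ⌈s⌉).toNat : ℤ) : ℝ) = ((⌊t⌋ + 1 - ⌈s⌉ : ℤ) : ℝ) := by
        exact_mod_cast congrArg (fun n : ℤ => (n : ℝ)) this
      push_cast at this ⊢
      linarith
    rw [hc, abs_le]
    constructor <;> linarith
  · have hcast : (⌊t⌋ : ℝ) + 1 ≤ (⌈s⌉ : ℝ) := by exact_mod_cast h
    rw [Finset.Icc_eq_empty (not_le.mpr h)]
    simp only [Finset.card_empty, Nat.cast_zero, zero_sub, abs_neg]
    rw [abs_of_nonneg (by linarith)]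
    linarith

private lemma strip_bound (ξ a β : ℝ) (k m : ℤ) (hβ : β = k * ξ + m)
    (hβ0 : 0 < β) (hβ1 : β < 1) (s t : ℝ) (hst : s ≤ t) :
    |(((Finset.Icc ⌈s⌉ ⌊t⌋).filter
        (fun z : ℤ => Int.fract (ξ * z - a) < β)).card : ℝ) - β * (t - s)| ≤ (k.natAbs : ℝ) + 1 := by
  classical
  set g : ℤ → ℝ := fun z => Int.fract (ξ * z - a) with hg
  have hsum : (((Finset.Icc ⌈s⌉ ⌊t⌋).filter (fun z : ℤ => Int.fract (ξ * z - a) < β)).card : ℝ)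
      = ∑ z ∈ Finset.Icc ⌈s⌉ ⌊t⌋, (if Int.fract (ξ * z - a) < β then (1:ℝ) else 0) :=
    (Finset.sum_boole _ _).symm
  have key : ∀ z : ℤ, (if Int.fract (ξ * z - a) < β then (1:ℝ) else 0)
      = β + (g (z - k) - g z) := by
    intro z
    have h1 := fract_indicator (ξ * z - a) β hβ0 hβ1
    have h2 : Int.fract (ξ * z - a - β) = g (z - k) := by
      rw [hβ, show ξ * z - a - (k * ξ + m) = (ξ * ((z - k : ℤ) : ℝ) - a) - m by push_cast; ring,
        Int.fract_sub_intCast]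
    rw [h1, h2, hg]
    ring
  rw [hsum, Finset.sum_congr rfl (fun z _ => key z), Finset.sum_add_distrib,
    Finset.sum_const, nsmul_eq_mul]
  have hT : |∑ z ∈ Finset.Icc ⌈s⌉ ⌊t⌋, (g (z - k) - g z)| ≤ (k.natAbs : ℝ) :=
    sum_shift_bound g (fun z => Int.fract_nonneg _) (fun z => (Int.fract_lt_one _).le) k _ _
  have hn := card_Icc_sub_len s t hst
  have hβn : |((Finset.Icc ⌈s⌉ ⌊t⌋).card : ℝ) * β - β * (t - s)| ≤ 1 := by
    rw [show ((Finset.Icc ⌈s⌉ ⌊t⌋).card : ℝ) * β - β * (t - s)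
        = β * (((Finset.Icc ⌈s⌉ ⌊t⌋).card : ℝ) - (t - s)) by ring, abs_mul,
      abs_of_pos hβ0]
    calc β * |((Finset.Icc ⌈s⌉ ⌊t⌋).card : ℝ) - (t - s)| ≤ 1 * 1 := by
          apply mul_le_mul hβ1.le hn (abs_nonneg _) (by norm_num)
      _ = 1 := by norm_num
  calc |(((Finset.Icc ⌈s⌉ ⌊t⌋).card : ℝ) * β + ∑ z ∈ Finset.Icc ⌈s⌉ ⌊t⌋, (g (z - k) - g z))
        - β * (t - s)|
      ≤ |((Finset.Icc ⌈s⌉ ⌊t⌋).card : ℝ) * β - β * (t - s)|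
        + |∑ z ∈ Finset.Icc ⌈s⌉ ⌊t⌋, (g (z - k) - g z)| := by
        rw [show (((Finset.Icc ⌈s⌉ ⌊t⌋).card : ℝ) * β + ∑ z ∈ Finset.Icc ⌈s⌉ ⌊t⌋, (g (z - k) - g z))
            - β * (t - s) = (((Finset.Icc ⌈s⌉ ⌊t⌋).card : ℝ) * β - β * (t - s))
            + ∑ z ∈ Finset.Icc ⌈s⌉ ⌊t⌋, (g (z - k) - g z) by ring]
        exact abs_add_le _ _
    _ ≤ 1 + (k.natAbs : ℝ) := add_le_add hβn hT
    _ = (k.natAbs : ℝ) + 1 := by ring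



/-- A set `Z ⊆ ℤ` has bounded discrepancy with respect to a density `δ` if
`|#(I ∩ Z) − δ·Length I|` is uniformly bounded over finite intervals `I ⊆ ℝ`. -/
def HasBoundedDisc (Z : Set ℤ) (δ : ℝ) : Prop :=
  ∃ C : ℝ, 0 < C ∧ ∀ s t : ℝ, s ≤ t →
    |(Nat.card {z : ℤ // z ∈ Z ∧ (z : ℝ) ∈ Set.Icc s t} : ℝ) - δ * (t - s)| < C

/-- Strip-boundary replacement: for irrational `ξ` and `a < b < c < a + 1` with
`b − a ∈ ℤ + ℤξ`, the set `{t ∈ ℤ : frac(ξt) ∈ [a,c) mod 1}` has bounded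
discrepancy (w.r.t. its density `c − a`) if and only if
`{t ∈ ℤ : frac(ξt) ∈ [b,c) mod 1}` has bounded discrepancy (w.r.t. `c − b`). -/
theorem boundary_replacement (ξ a b c : ℝ) (hξ : Irrational ξ)
    (hab : a < b) (hbc : b < c) (hca : c < a + 1)
    (hlen : ∃ k m : ℤ, b - a = k * ξ + m) :
    HasBoundedDisc {t : ℤ | ∃ m : ℤ, a ≤ ξ * t - m ∧ ξ * t - m < c} (c - a) ↔
      HasBoundedDisc {t : ℤ | ∃ m : ℤ, b ≤ ξ * t - m ∧ ξ * t - m < c} (c - b) := by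
  classical
  obtain ⟨k, m0, hkm⟩ := hlen
  have hba0 : (0:ℝ) < b - a := by linarith
  have hba1 : b - a < 1 := by linarith
  set ZA : Set ℤ := {t : ℤ | ∃ m : ℤ, a ≤ ξ * t - m ∧ ξ * t - m < c} with hZA
  set ZB : Set ℤ := {t : ℤ | ∃ m : ℤ, b ≤ ξ * t - m ∧ ξ * t - m < c} with hZB
  have hA : ∀ z : ℤ, z ∈ ZA ↔ Int.fract (ξ * z - a) < c - a := by
    intro z
    have h := mem_iff_fract ξ a a c le_rfl (hab.trans hbc) hca.le z
    simpa [hZA, Set.mem_setOf_eq, Int.fract_nonneg] using h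
  have hB : ∀ z : ℤ, z ∈ ZB ↔
      (b - a ≤ Int.fract (ξ * z - a) ∧ Int.fract (ξ * z - a) < c - a) := by
    intro z
    exact mem_iff_fract ξ a b c hab.le hbc hca.le z
  -- counts as filters
  set NA : ℝ → ℝ → ℕ := fun s t =>
    ((Finset.Icc ⌈s⌉ ⌊t⌋).filter (fun z : ℤ => Int.fract (ξ * z - a) < c - a)).card with hNA
  set NB : ℝ → ℝ → ℕ := fun s t =>
    ((Finset.Icc ⌈s⌉ ⌊t⌋).filter (fun z : ℤ =>
      b - a ≤ Int.fract (ξ * z - a) ∧ Int.fract (ξ * z - a) < c - a)).card with hNB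
  set NS : ℝ → ℝ → ℕ := fun s t =>
    ((Finset.Icc ⌈s⌉ ⌊t⌋).filter (fun z : ℤ => Int.fract (ξ * z - a) < b - a)).card with hNS
  have cA : ∀ s t : ℝ, Nat.card {z : ℤ // z ∈ ZA ∧ (z : ℝ) ∈ Set.Icc s t} = NA s t := by
    intro s t
    rw [count_eq ZA s t, hNA]
    congr 1
    exact Finset.filter_congr (fun z _ => by simpa using hA z)
  have cB : ∀ s t : ℝ, Nat.card {z : ℤ // z ∈ ZB ∧ (z : ℝ) ∈ Set.Icc s t} = NB s t := by
    intro s t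
    rw [count_eq ZB s t, hNB]
    congr 1
    exact Finset.filter_congr (fun z _ => by simpa using hB z)
  have hsplit : ∀ s t : ℝ, (NA s t : ℝ) = (NB s t : ℝ) + (NS s t : ℝ) := by
    intro s t
    rw [hNA, hNB, hNS]
    norm_cast
    rw [← Finset.card_union_of_disjoint, ← Finset.filter_or]
    · apply congrArg
      apply Finset.filter_congr
      intro z _
      have hf0 := Int.fract_nonneg (ξ * z - a)
      constructor
      · intro h
        by_cases h' : Int.fract (ξ * z - a) < b - a
        · exact Or.inr h'
        · exact Or.inl ⟨le_of_not_gt h', h⟩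
      · rintro (⟨h1, h2⟩ | h1)
        · exact h2
        · linarith
    · rw [Finset.disjoint_left]
      intro z h1 h2
      simp only [Finset.mem_filter] at h1 h2
      linarith [h1.2.1, h2.2]
  set K : ℝ := (k.natAbs : ℝ) + 1 with hK
  have hK0 : 0 < K := by positivity
  have hstrip : ∀ s t : ℝ, s ≤ t → |(NS s t : ℝ) - (b - a) * (t - s)| ≤ K :=
    fun s t hst => strip_bound ξ a (b - a) k m0 hkm hba0 hba1 s t hst
  constructor
  · rintro ⟨C, hC, hbound⟩
    refine ⟨C + K, by linarith, fun s t hst => ?_⟩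
    have h1 := hbound s t hst
    rw [cA s t] at h1
    rw [cB s t]
    have heq : (NB s t : ℝ) - (c - b) * (t - s)
        = ((NA s t : ℝ) - (c - a) * (t - s)) - ((NS s t : ℝ) - (b - a) * (t - s)) := by
      have := hsplit s t
      linarith
    rw [heq]
    calc |((NA s t : ℝ) - (c - a) * (t - s)) - ((NS s t : ℝ) - (b - a) * (t - s))|
        ≤ |(NA s t : ℝ) - (c - a) * (t - s)| + |(NS s t : ℝ) - (b - a) * (t - s)| :=
          abs_sub _ _
      _ < C + K := add_lt_add_of_lt_of_le h1 (hstrip s t hst)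
  · rintro ⟨C, hC, hbound⟩
    refine ⟨C + K, by linarith, fun s t hst => ?_⟩
    have h1 := hbound s t hst
    rw [cB s t] at h1
    rw [cA s t]
    have heq : (NA s t : ℝ) - (c - a) * (t - s)
        = ((NB s t : ℝ) - (c - b) * (t - s)) + ((NS s t : ℝ) - (b - a) * (t - s)) := by
      have := hsplit s t
      linarith
    rw [heq]
    calc |((NB s t : ℝ) - (c - b) * (t - s)) + ((NS s t : ℝ) - (b - a) * (t - s))|
        ≤ |(NB s t : ℝ) - (c - b) * (t - s)| + |(NS s t : ℝ) - (b - a) * (t - s)| :=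
          abs_add_le _ _
      _ < C + K := add_lt_add_of_lt_of_le h1 (hstrip s t hst)
end
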